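/- arXiv:1811.07736 — 5 statements merged into one kernel-verified Lean document; each statement's English description precedes it below -/
import Mathlib

section
/- The poly-Bernoulli numbers satisfy the duality B_n^{(-k)} = B_k^{(-n)} for all nonnegative integers n and k. -/
set_option maxHeartbeats 1000000

open Real
open Finset
open scoped Topology

/-- The polylogarithm `Li_k(z) = ∑_{m ≥ 1} z^m / m^k` for an integer index `k`
(for `k ≤ 0` this sum is the rational function `Li_{-k}`on `|z| < 1`). -/
noncomputable def Li (k : ℤ) (z : ℝ) : ℝ := ∑' m : ℕ, z ^ (m + 1) / ((m : ℝ) + 1) ^ k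


def fI (m n : ℕ) : ℤ := ∑ i ∈ range (m+1), (-1)^i * (m.choose i : ℤ) * (i : ℤ)^n

def cI (n m : ℕ) : ℤ := (-1)^n * fI m n

def gI (m n : ℕ) : ℤ := ∑ i ∈ range (m+1), (-1)^i * (m.choose i : ℤ) * ((i : ℤ)+1)^n

lemma choose_mul_succ (m j : ℕ) :
    ((m+1).choose (j+1) : ℤ) * ((j:ℤ)+1) = ((m:ℤ)+1) * (m.choose j : ℤ) := by
  have h := Nat.add_one_mul_choose_eq m j
  exact_mod_cast h.symm

lemma f_rec (m n : ℕ) : fI (m+1) (n+1) = -((m:ℤ)+1) * gI m n := by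
  rw [fI, Finset.sum_range_succ' _ (m+1)]
  simp only [Nat.cast_zero, ne_eq, Nat.add_eq_zero, one_ne_zero, and_false, not_false_eq_true,
    zero_pow, mul_zero, add_zero]
  rw [gI, Finset.mul_sum]
  apply Finset.sum_congr rfl
  intro k _
  have h := choose_mul_succ m k
  have : ((k+1 : ℕ) : ℤ) ^ (n+1) = ((k:ℤ)+1) * ((k:ℤ)+1)^n := by push_cast; ring
  rw [this]
  calc (-1)^(k+1) * ((m+1).choose (k+1) : ℤ) * (((k:ℤ)+1) * ((k:ℤ)+1)^n)
      = (-1)^k * (-1) * ((((m+1).choose (k+1) : ℤ)) * ((k:ℤ)+1)) * ((k:ℤ)+1)^n := by ring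
    _ = (-1)^k * (-1) * (((m:ℤ)+1) * (m.choose k : ℤ)) * ((k:ℤ)+1)^n := by rw [h]
    _ = -((m:ℤ)+1) * ((-1)^k * (m.choose k : ℤ) * ((k:ℤ)+1)^n) := by ring

lemma g_eq (m n : ℕ) : gI m n = fI m n - fI (m+1) n := by
  have hA : fI (m+1) n = ∑ i ∈ range (m+1), (-1)^(i+1) * ((m+1).choose (i+1) : ℤ) * ((i:ℤ)+1)^n
      + (0:ℤ)^n := by
    rw [fI, Finset.sum_range_succ' _ (m+1)]
    simp
  have hB : fI m n = ∑ i ∈ range m, (-1)^(i+1) * (m.choose (i+1) : ℤ) * ((i:ℤ)+1)^n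
      + (0:ℤ)^n := by
    rw [fI, Finset.sum_range_succ' _ m]
    simp
  have hB' : ∑ i ∈ range (m+1), (-1)^(i+1) * (m.choose (i+1) : ℤ) * ((i:ℤ)+1)^n
      = ∑ i ∈ range m, (-1)^(i+1) * (m.choose (i+1) : ℤ) * ((i:ℤ)+1)^n := by
    rw [Finset.sum_range_succ, Nat.choose_succ_self]
    simp
  have key : gI m n = (∑ i ∈ range (m+1), (-1)^i * ((m+1).choose (i+1) : ℤ) * ((i:ℤ)+1)^n)
      - ∑ i ∈ range (m+1), (-1)^i * (m.choose (i+1) : ℤ) * ((i:ℤ)+1)^n := by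
    rw [gI, ← Finset.sum_sub_distrib]
    apply Finset.sum_congr rfl
    intro i _
    have hp : ((m+1).choose (i+1) : ℤ) = (m.choose i : ℤ) + (m.choose (i+1) : ℤ) := by
      exact_mod_cast congrArg (fun x : ℕ => (x:ℤ)) (Nat.choose_succ_succ m i)
    rw [hp]; ring
  rw [key]
  have e1 : ∑ i ∈ range (m+1), (-1)^i * ((m+1).choose (i+1) : ℤ) * ((i:ℤ)+1)^n
      = -(fI (m+1) n - (0:ℤ)^n) := by
    rw [hA, add_sub_cancel_right, ← Finset.sum_neg_distrib]
    apply Finset.sum_congr rfl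
    intro i _; ring
  have e2 : ∑ i ∈ range (m+1), (-1)^i * (m.choose (i+1) : ℤ) * ((i:ℤ)+1)^n
      = -(fI m n - (0:ℤ)^n) := by
    rw [hB, add_sub_cancel_right, ← hB', ← Finset.sum_neg_distrib]
    apply Finset.sum_congr rfl
    intro i _; ring
  rw [e1, e2]; ring

lemma c_rec (n m : ℕ) : cI (n+1) (m+1) = ((m:ℤ)+1) * (cI n m - cI n (m+1)) := by
  rw [cI, f_rec, g_eq, cI, cI]; ring

lemma cI_zero_zero : cI 0 0 = 1 := by simp [cI, fI]

lemma cI_zero_succ (m : ℕ) : cI 0 (m+1) = 0 := by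
  have h : fI (m+1) 0 = ∑ i ∈ range (m+1+1), (-1)^i * ((m+1).choose i : ℤ) := by
    rw [fI]; apply Finset.sum_congr rfl; intro i _; simp
  rw [cI, h, Int.alternating_sum_range_choose_of_ne (Nat.succ_ne_zero m)]
  simp

lemma cI_succ_zero (n : ℕ) : cI (n+1) 0 = 0 := by simp [cI, fI]

/-- `sI n m = (-1)^(n+m) cI n m` is nonnegative (it is `m! S(n,m)`). -/
lemma cI_sign_nonneg : ∀ n m, 0 ≤ (-1:ℤ)^(n+m) * cI n m := by
  intro n
  induction n with
  | zero =>
    intro m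
    cases m with
    | zero => simp [cI_zero_zero]
    | succ m => simp [cI_zero_succ]
  | succ n ih =>
    intro m
    cases m with
    | zero => simp [cI_succ_zero]
    | succ m =>
      rw [c_rec]
      have h1 := ih m
      have h2 := ih (m+1)
      have key : (-1:ℤ)^(n+1+(m+1)) * (((m:ℤ)+1) * (cI n m - cI n (m+1)))
          = ((m:ℤ)+1) * ((-1:ℤ)^(n+m) * cI n m + (-1:ℤ)^(n+(m+1)) * cI n (m+1)) := by
        rw [show n+1+(m+1) = (n+m)+2 by ring, show n+(m+1) = (n+m)+1 by ring]
        ring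
      rw [key]
      positivity
  
lemma cI_eq_zero_of_lt : ∀ n m, n < m → cI n m = 0 := by
  intro n
  induction n with
  | zero =>
    intro m hm
    cases m with
    | zero => omega
    | succ m => exact cI_zero_succ m
  | succ n ih =>
    intro m hm
    cases m with
    | zero => omega
    | succ m =>
      rw [c_rec, ih m (by omega), ih (m+1) (by omega)]
      ring

/-- Key identity: `(m+1)^k = ∑_{j≤k} C(m+j,j) cI k j`. -/
lemma key_identity : ∀ k m : ℕ, ((m:ℤ)+1)^k = ∑ j ∈ range (k+1), ((m+j).choose j : ℤ) * cI k j := by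
  intro k
  induction k with
  | zero => intro m; simp [cI_zero_zero]
  | succ k ih =>
    intro m
    rw [Finset.sum_range_succ' _ (k+1)]
    simp only [Nat.add_zero, Nat.choose_zero_right, cI_succ_zero, Nat.cast_one]
    rw [mul_zero, add_zero]
    have step : ∀ j ∈ range (k+1), ((m+(j+1)).choose (j+1) : ℤ) * cI (k+1) (j+1)
        = ((m:ℤ) + (j:ℤ) + 1) * ((m+j).choose j : ℤ) * cI k j
          - ((j:ℤ)+1) * ((m+(j+1)).choose (j+1) : ℤ) * cI k (j+1) := by
      intro j _
      rw [c_rec]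
      have hc : ((m+(j+1)).choose (j+1) : ℤ) * ((j:ℤ)+1) = ((m:ℤ)+(j:ℤ)+1) * ((m+j).choose j : ℤ) := by
        have h := choose_mul_succ (m+j) j
        have e : m + (j+1) = (m+j) + 1 := by omega
        rw [e]
        push_cast at h ⊢
        linarith [h]
      calc ((m+(j+1)).choose (j+1) : ℤ) * (((j:ℤ)+1) * (cI k j - cI k (j+1)))
          = (((m+(j+1)).choose (j+1) : ℤ) * ((j:ℤ)+1)) * cI k j
            - ((j:ℤ)+1) * ((m+(j+1)).choose (j+1) : ℤ) * cI k (j+1) := by ring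
        _ = _ := by rw [hc]
    rw [Finset.sum_congr rfl step, Finset.sum_sub_distrib]
    have shift : ∑ j ∈ range (k+1), ((j:ℤ)+1) * ((m+(j+1)).choose (j+1) : ℤ) * cI k (j+1)
        = ∑ j ∈ range (k+1), (j:ℤ) * ((m+j).choose j : ℤ) * cI k j := by
      rw [Finset.sum_range_succ' (fun j => (j:ℤ) * ((m+j).choose j : ℤ) * cI k j) k]
      simp only [Nat.cast_zero, zero_mul, add_zero]
      rw [Finset.sum_range_succ]
      rw [cI_eq_zero_of_lt k (k+1) (by omega)]
      simp only [mul_zero, add_zero]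
      apply Finset.sum_congr rfl
      intro j _
      push_cast
      ring
    rw [shift, ← Finset.sum_sub_distrib]
    have : ∀ j ∈ range (k+1), ((m:ℤ) + (j:ℤ) + 1) * ((m+j).choose j : ℤ) * cI k j
        - (j:ℤ) * ((m+j).choose j : ℤ) * cI k j = ((m:ℤ)+1) * (((m+j).choose j : ℤ) * cI k j) := by
      intro j _; ring
    rw [Finset.sum_congr rfl this, ← Finset.mul_sum, ← ih m]
    ring

/-- The poly-Bernoulli number as a finite sum, `C n k = ∑_m cI n m (m+1)^k`. -/
def CB (n k : ℕ) : ℤ := ∑ m ∈ range (n+1), cI n m * ((m:ℤ)+1)^k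

lemma CB_symm (n k : ℕ) : CB n k = CB k n := by
  have expand : ∀ n k : ℕ, CB n k
      = ∑ m ∈ range (n+1), ∑ j ∈ range (k+1), ((m+j).choose j : ℤ) * cI n m * cI k j := by
    intro n k
    rw [CB]
    apply Finset.sum_congr rfl
    intro m _
    rw [key_identity k m, Finset.mul_sum]
    apply Finset.sum_congr rfl
    intro j _; ring
  rw [expand, expand, Finset.sum_comm]
  apply Finset.sum_congr rfl
  intro j _
  apply Finset.sum_congr rfl
  intro m _
  have : (j+m).choose m = (m+j).choose j := by
    rw [Nat.add_comm j m]
    have h := Nat.choose_symm (Nat.le_add_left j m)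
    simpa using h
  rw [this]; ring

lemma hasSum_exp_real (x : ℝ) : HasSum (fun n => x^n / (n.factorial : ℝ)) (Real.exp x) := by
  rw [Real.exp_eq_exp_ℝ]
  exact NormedSpace.expSeries_div_hasSum_exp x

/-- Power-series expansion of `(1 - e^{-u})^m` with coefficients `cI`. -/
lemma hasSum_c (u : ℝ) (m : ℕ) :
    HasSum (fun n => (cI n m : ℝ) * u^n / (n.factorial : ℝ)) ((1 - Real.exp (-u))^m) := by
  have hterm : ∀ i : ℕ,
      HasSum (fun n => (-1:ℝ)^i * (m.choose i : ℝ) * ((-(i:ℝ)*u)^n / (n.factorial : ℝ)))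
        ((-1:ℝ)^i * (m.choose i : ℝ) * Real.exp (-(i:ℝ)*u)) :=
    fun i => (hasSum_exp_real _).mul_left _
  have hsum : HasSum (fun n => ∑ i ∈ range (m+1),
        (-1:ℝ)^i * (m.choose i : ℝ) * ((-(i:ℝ)*u)^n / (n.factorial : ℝ)))
      (∑ i ∈ range (m+1), (-1:ℝ)^i * (m.choose i : ℝ) * Real.exp (-(i:ℝ)*u)) :=
    hasSum_sum (fun i _ => hterm i)
  have hval : ∑ i ∈ range (m+1), (-1:ℝ)^i * (m.choose i : ℝ) * Real.exp (-(i:ℝ)*u)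
      = (1 - Real.exp (-u))^m := by
    have h1 : (1 - Real.exp (-u))^m = ((-Real.exp (-u)) + 1)^m := by ring_nf
    rw [h1, add_pow]
    apply Finset.sum_congr rfl
    intro i _
    have h2 : (-Real.exp (-u)) ^ i = (-1:ℝ)^i * Real.exp (-(i:ℝ)*u) := by
      rw [neg_pow, ← Real.exp_nat_mul, show (i:ℝ) * -u = -(i:ℝ)*u from by ring]
    rw [h2]
    ring
  have hcoeff : (fun n => ∑ i ∈ range (m+1),
        (-1:ℝ)^i * (m.choose i : ℝ) * ((-(i:ℝ)*u)^n / (n.factorial : ℝ)))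
      = fun n => (cI n m : ℝ) * u^n / (n.factorial : ℝ) := by
    funext n
    have hc : (cI n m : ℝ) = (-1:ℝ)^n * ∑ i ∈ range (m+1),
        (-1:ℝ)^i * (m.choose i : ℝ) * (i:ℝ)^n := by
      rw [cI, fI]
      push_cast
      ring
    rw [hc, Finset.mul_sum, Finset.sum_mul, Finset.sum_div]
    apply Finset.sum_congr rfl
    intro i _
    have h3 : (-(i:ℝ)*u)^n = (-1:ℝ)^n * (i:ℝ)^n * u^n := by
      rw [show -(i:ℝ)*u = ((-1:ℝ) * (i:ℝ)) * u by ring, mul_pow, mul_pow]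
    rw [h3]
    ring
  rw [hcoeff, hval] at hsum
  exact hsum

/-- Power-series expansion of `(e^t - 1)^m` with nonnegative coefficients `sI = (-1)^(n+m) cI`. -/
lemma hasSum_s (t : ℝ) (m : ℕ) :
    HasSum (fun n => (((-1:ℤ)^(n+m) * cI n m : ℤ) : ℝ) * t^n / (n.factorial : ℝ))
      ((Real.exp t - 1)^m) := by
  have h := (hasSum_c (-t) m).mul_left ((-1:ℝ)^m)
  have hval : (-1:ℝ)^m * (1 - Real.exp (-(-t)))^m = (Real.exp t - 1)^m := by
    rw [neg_neg, ← neg_pow]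
    ring_nf
  have hcoeff : (fun n => (-1:ℝ)^m * ((cI n m : ℝ) * (-t)^n / (n.factorial : ℝ)))
      = fun n => (((-1:ℤ)^(n+m) * cI n m : ℤ) : ℝ) * t^n / (n.factorial : ℝ) := by
    funext n
    have h3 : (-t)^n = (-1:ℝ)^n * t^n := by
      rw [show -t = (-1:ℝ) * t from by ring, mul_pow]
    push_cast
    rw [h3, pow_add]
    ring
  rw [hval, hcoeff] at h
  exact h

lemma abs_cI (n m : ℕ) : |(cI n m : ℝ)| = (((-1:ℤ)^(n+m) * cI n m : ℤ) : ℝ) := by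
  have h : (0:ℝ) ≤ ((-1:ℝ))^(n+m) * (cI n m:ℝ) := by exact_mod_cast cI_sign_nonneg n m
  push_cast
  rcases Nat.even_or_odd (n+m) with he|ho
  · rw [he.neg_one_pow] at h ⊢
    rw [one_mul] at h ⊢
    exact abs_of_nonneg h
  · rw [ho.neg_one_pow] at h ⊢
    rw [neg_one_mul] at h ⊢
    rw [abs_of_nonpos (by linarith)]

lemma summable_col (k : ℕ) {r : ℝ} (h0 : 0 < r) (h1 : r < 1) :
    Summable (fun m : ℕ => ((m:ℝ)+1)^k * r^m) := by
  have h := summable_pow_mul_geometric_of_norm_lt_one (R := ℝ) k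
    (r := r) (by rwa [Real.norm_eq_abs, abs_of_pos h0])
  have h2 := (summable_nat_add_iff 1).2 h
  refine (h2.mul_left r⁻¹).congr fun m => ?_
  have hr : r ≠ 0 := ne_of_gt h0
  push_cast
  rw [pow_succ]
  field_simp

lemma hasSum_Li_div (k : ℕ) {z : ℝ} (h0 : 0 < z) (h1 : z < 1) :
    HasSum (fun m : ℕ => ((m:ℝ)+1)^k * z^m) (Li (-(k:ℤ)) z / z) := by
  have hs : Summable (fun m : ℕ => ((m:ℝ)+1)^k * z^m) := summable_col k h0 h1
  have hLi : Li (-(k:ℤ)) z = z * ∑' m : ℕ, ((m:ℝ)+1)^k * z^m := by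
    rw [Li, ← tsum_mul_left]
    apply tsum_congr
    intro m
    rw [zpow_neg, zpow_natCast, div_inv_eq_mul, pow_succ]
    ring
  rw [hLi, mul_div_cancel_left₀ _ (ne_of_gt h0)]
  exact hs.hasSum

lemma one_le_Li_div (k : ℕ) {z : ℝ} (h0 : 0 < z) (h1 : z < 1) :
    1 ≤ Li (-(k:ℤ)) z / z := by
  have h := hasSum_Li_div k h0 h1
  have h2 := le_hasSum h 0 (fun j _ => by positivity)
  simpa using h2

lemma exp_sub_one_pos {t : ℝ} (ht0 : 0 < t) : 0 < Real.exp t - 1 := by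
  have : (1:ℝ) < Real.exp t := by
    rw [← Real.exp_zero]
    exact Real.exp_lt_exp.2 ht0
  linarith

lemma exp_sub_one_lt_one {t : ℝ} (ht2 : t < Real.log 2) : Real.exp t - 1 < 1 := by
  have : Real.exp t < Real.exp (Real.log 2) := Real.exp_lt_exp.2 ht2
  rw [Real.exp_log (by norm_num : (0:ℝ) < 2)] at this
  linarith

lemma z_pos {t : ℝ} (ht0 : 0 < t) : 0 < 1 - Real.exp (-t) := by
  have : Real.exp (-t) < 1 := Real.exp_lt_one_iff.2 (by linarith)
  linarith

lemma z_lt_one {t : ℝ} : 1 - Real.exp (-t) < 1 := by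
  have := Real.exp_pos (-t); linarith

section bigstep
variable (k : ℕ) {t : ℝ}

/-- The double family `G (m,n) = (m+1)^k sI(n,m) t^n/n!` is summable (nonnegative terms). -/
lemma G_summable (ht0 : 0 < t) (ht2 : t < Real.log 2) :
    Summable (fun p : ℕ × ℕ =>
      ((p.1:ℝ)+1)^k * ((((-1:ℤ)^(p.2+p.1) * cI p.2 p.1 : ℤ):ℝ) * t^p.2 / (p.2.factorial:ℝ))) := by
  have hGnn : (0:(ℕ×ℕ)→ℝ) ≤ (fun p : ℕ × ℕ =>
      ((p.1:ℝ)+1)^k * ((((-1:ℤ)^(p.2+p.1) * cI p.2 p.1 : ℤ):ℝ) * t^p.2 / (p.2.factorial:ℝ))) := by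
    intro p
    have hs : (0:ℝ) ≤ (((-1:ℤ)^(p.2+p.1) * cI p.2 p.1 : ℤ):ℝ) := by
      exact_mod_cast cI_sign_nonneg p.2 p.1
    have h1 : (0:ℝ) ≤ ((p.1:ℝ)+1)^k := by positivity
    have h2 : (0:ℝ) ≤ t^p.2 := by positivity
    have h3 : (0:ℝ) < (p.2.factorial:ℝ) := by exact_mod_cast p.2.factorial_pos
    exact mul_nonneg h1 (div_nonneg (mul_nonneg hs h2) h3.le)
  rw [summable_prod_of_nonneg hGnn]
  constructor
  · intro m
    exact ((hasSum_s t m).mul_left (((m:ℝ)+1)^k)).summable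
  · have heq : (fun m : ℕ => ∑' n : ℕ,
        ((m:ℝ)+1)^k * ((((-1:ℤ)^(n+m) * cI n m : ℤ):ℝ) * t^n / (n.factorial:ℝ)))
        = fun m : ℕ => ((m:ℝ)+1)^k * (Real.exp t - 1)^m :=
      funext fun m => ((hasSum_s t m).mul_left _).tsum_eq
    rw [heq]
    exact summable_col k (exp_sub_one_pos ht0) (exp_sub_one_lt_one ht2)

lemma F_summable (ht0 : 0 < t) (ht2 : t < Real.log 2) :
    Summable (fun p : ℕ × ℕ =>
      ((p.1:ℝ)+1)^k * ((cI p.2 p.1 : ℝ) * t^p.2 / (p.2.factorial:ℝ))) := by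
  apply Summable.of_norm
  have : (fun p : ℕ × ℕ =>
      ‖((p.1:ℝ)+1)^k * ((cI p.2 p.1 : ℝ) * t^p.2 / (p.2.factorial:ℝ))‖)
      = fun p : ℕ × ℕ =>
      ((p.1:ℝ)+1)^k * ((((-1:ℤ)^(p.2+p.1) * cI p.2 p.1 : ℤ):ℝ) * t^p.2 / (p.2.factorial:ℝ)) := by
    funext p
    rw [Real.norm_eq_abs, abs_mul, abs_div, abs_mul, abs_cI p.2 p.1]
    rw [abs_of_nonneg (by positivity : (0:ℝ) ≤ ((p.1:ℝ)+1)^k),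
      abs_of_nonneg (by positivity : (0:ℝ) ≤ t^p.2),
      abs_of_nonneg (by positivity : (0:ℝ) ≤ (p.2.factorial:ℝ))]
  rw [this]
  exact G_summable k ht0 ht2

lemma stepA (ht0 : 0 < t) (ht2 : t < Real.log 2) :
    Li (-(k:ℤ)) (1 - Real.exp (-t)) / (1 - Real.exp (-t))
      = ∑' n : ℕ, ((CB n k : ℤ) : ℝ) * t^n / (n.factorial : ℝ) := by
  have hz0 : 0 < 1 - Real.exp (-t) := z_pos ht0
  have hz1 : 1 - Real.exp (-t) < 1 := z_lt_one
  have hdiv := (hasSum_Li_div k hz0 hz1).tsum_eq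
  rw [← hdiv]
  have h1 : ∑' m : ℕ, ((m:ℝ)+1)^k * (1 - Real.exp (-t))^m
      = ∑' (m : ℕ) (n : ℕ), ((m:ℝ)+1)^k * ((cI n m : ℝ) * t^n / (n.factorial:ℝ)) :=
    tsum_congr fun m => (((hasSum_c t m).mul_left _).tsum_eq).symm
  have h2 : ∑' (n : ℕ) (m : ℕ), ((m:ℝ)+1)^k * ((cI n m : ℝ) * t^n / (n.factorial:ℝ))
      = ∑' (m : ℕ) (n : ℕ), ((m:ℝ)+1)^k * ((cI n m : ℝ) * t^n / (n.factorial:ℝ)) :=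
    Summable.tsum_comm (F_summable k ht0 ht2)
  rw [h1, ← h2]
  apply tsum_congr
  intro n
  rw [tsum_eq_sum (s := range (n+1))
    (by
      intro m hm
      have hlt : n < m := by simpa using hm
      rw [cI_eq_zero_of_lt n m hlt]
      simp)]
  rw [CB]
  push_cast
  rw [Finset.sum_mul, Finset.sum_div]
  apply Finset.sum_congr rfl
  intro m _
  ring

lemma stepA_summable (ht0 : 0 < t) (ht2 : t < Real.log 2) :
    Summable (fun n : ℕ => |((CB n k : ℤ) : ℝ)| * t^n / (n.factorial : ℝ)) := by
  have hswap := (G_summable k ht0 ht2).prod_symm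
  have hmarg : Summable (fun n : ℕ => ∑' m : ℕ,
      ((m:ℝ)+1)^k * ((((-1:ℤ)^(n+m) * cI n m : ℤ):ℝ) * t^n / (n.factorial:ℝ))) := hswap.prod
  apply Summable.of_nonneg_of_le (fun n => by positivity) _ hmarg
  intro n
  have hfin : ∑' m : ℕ, ((m:ℝ)+1)^k * ((((-1:ℤ)^(n+m) * cI n m : ℤ):ℝ) * t^n / (n.factorial:ℝ))
      = ∑ m ∈ range (n+1), ((m:ℝ)+1)^k * (|(cI n m : ℝ)| * t^n / (n.factorial:ℝ)) := by
    rw [tsum_eq_sum (s := range (n+1))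
      (by
        intro m hm
        have hlt : n < m := by simpa using hm
        rw [cI_eq_zero_of_lt n m hlt]
        simp)]
    apply Finset.sum_congr rfl
    intro m _
    rw [abs_cI]
  rw [hfin]
  have hCB : |((CB n k : ℤ) : ℝ)| ≤ ∑ m ∈ range (n+1), ((m:ℝ)+1)^k * |(cI n m : ℝ)| := by
    have : ((CB n k : ℤ) : ℝ) = ∑ m ∈ range (n+1), (cI n m : ℝ) * ((m:ℝ)+1)^k := by
      rw [CB]; push_cast; rfl
    rw [this]
    refine le_trans (Finset.abs_sum_le_sum_abs _ _) ?_
    apply Finset.sum_le_sum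
    intro m _
    rw [abs_mul, abs_of_nonneg (by positivity : (0:ℝ) ≤ ((m:ℝ)+1)^k)]
    ring_nf
    exact le_refl _
  calc |((CB n k : ℤ) : ℝ)| * t^n / (n.factorial : ℝ)
      ≤ (∑ m ∈ range (n+1), ((m:ℝ)+1)^k * |(cI n m : ℝ)|) * t^n / (n.factorial : ℝ) := by
        gcongr
    _ = ∑ m ∈ range (n+1), ((m:ℝ)+1)^k * (|(cI n m : ℝ)| * t^n / (n.factorial:ℝ)) := by
        rw [Finset.sum_mul, Finset.sum_div]
        apply Finset.sum_congr rfl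
        intro m _
        ring

end bigstep

open FormalMultilinearSeries in
lemma hasFPS (a : ℕ → ℝ) {r : ℝ} (hr : 0 < r) (h : Summable fun n => |a n| * r^n) :
    HasFPowerSeriesOnBall (fun x : ℝ => ∑' n : ℕ, a n * x^n)
      (FormalMultilinearSeries.ofScalars ℝ a) 0 (ENNReal.ofReal r) := by
  have hsummy : ∀ y : ℝ, |y| < r → Summable (fun n => a n * y^n) := by
    intro y hy
    apply Summable.of_norm
    apply Summable.of_nonneg_of_le (fun n => norm_nonneg _) _ h
    intro n
    rw [Real.norm_eq_abs, abs_mul, abs_pow]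
    exact mul_le_mul_of_nonneg_left (pow_le_pow_left₀ (abs_nonneg y) hy.le n) (abs_nonneg _)
  constructor
  · -- radius bound
    have hb : ENNReal.ofReal r = (r.toNNReal : ENNReal) := rfl
    rw [hb]
    apply FormalMultilinearSeries.le_radius_of_summable_norm
    have hcoe : ((r.toNNReal : ℝ)) = r := Real.coe_toNNReal r hr.le
    rw [hcoe]
    refine h.congr fun n => ?_
    rw [FormalMultilinearSeries.ofScalars_norm, Real.norm_eq_abs]
  · exact ENNReal.ofReal_pos.2 hr
  · intro y hy
    rw [EMetric.mem_ball, edist_zero_right, enorm_eq_nnnorm, ENNReal.ofReal, ENNReal.coe_lt_coe] at hy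
    have hy' : |y| < r := by
      have := (NNReal.coe_lt_coe).2 hy
      rwa [coe_nnnorm, Real.norm_eq_abs, Real.coe_toNNReal r hr.le] at this
    have hfun : (fun n => FormalMultilinearSeries.ofScalars ℝ a n fun _ => y)
        = fun n => a n * y^n := by
      funext n
      rw [FormalMultilinearSeries.ofScalars_apply_eq, smul_eq_mul]
    rw [zero_add, hfun]
    exact (hsummy y hy').hasSum


/-- Poly-Bernoulli duality `B_n^{(-k)} = B_k^{(-n)}`, stated for any family
`B n k` of numbers satisfying the defining generating-series property
`Li_k(1-e^{-t})/(1-e^{-t}) = ∑_{n ≥ 0} B_n^{(k)} t^n/n!` near `t = 0`. -/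
theorem stmt2 (B : ℕ → ℤ → ℝ)
    (hB : ∀ k : ℤ, ∃ ε > (0:ℝ), ∀ t : ℝ, 0 < t → t < ε →
      Li k (1 - Real.exp (-t)) / (1 - Real.exp (-t)) =
        ∑' n : ℕ, B n k * t ^ n / (n.factorial : ℝ))
    (n k : ℕ) : B n (-(k : ℤ)) = B k (-(n : ℤ)) := by
  suffices H : ∀ n k : ℕ, B n (-(k:ℤ)) = ((CB n k : ℤ) : ℝ) by
    rw [H n k, H k n, CB_symm n k]
  clear n k
  intro n k
  obtain ⟨ε, hε, hBk⟩ := hB (-(k:ℤ))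
  have hlog2 : 0 < Real.log 2 := Real.log_pos (by norm_num)
  set t₀ : ℝ := min ε (Real.log 2) / 2 with ht₀def
  have hmin : 0 < min ε (Real.log 2) := lt_min hε hlog2
  have ht₀pos : 0 < t₀ := by positivity
  have ht₀lt : t₀ < min ε (Real.log 2) := by
    rw [ht₀def]; exact half_lt_self hmin
  have ht₀ε : t₀ < ε := lt_of_lt_of_le ht₀lt (min_le_left _ _)
  have ht₀log : t₀ < Real.log 2 := lt_of_lt_of_le ht₀lt (min_le_right _ _)
  -- summability of the B-series at t₀
  have hval := hBk t₀ ht₀pos ht₀ε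
  have hge1 : 1 ≤ Li (-(k:ℤ)) (1 - Real.exp (-t₀)) / (1 - Real.exp (-t₀)) :=
    one_le_Li_div k (z_pos ht₀pos) z_lt_one
  have hsummB : Summable (fun j : ℕ => B j (-(k:ℤ)) * t₀^j / (j.factorial:ℝ)) := by
    by_contra hcon
    rw [tsum_eq_zero_of_not_summable hcon] at hval
    rw [hval] at hge1
    linarith
  -- a uniform bound on the terms
  have htend : Filter.Tendsto (fun j : ℕ => |B j (-(k:ℤ)) * t₀^j / (j.factorial:ℝ)|)
      Filter.atTop (𝓝 0) := by
    have := hsummB.tendsto_atTop_zero.abs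
    simpa using this
  obtain ⟨M, hM⟩ := htend.bddAbove_range
  have hM' : ∀ j : ℕ, |B j (-(k:ℤ)) * t₀^j / (j.factorial:ℝ)| ≤ M :=
    fun j => hM (Set.mem_range_self j)
  set ρ : ℝ := t₀ / 2 with hρdef
  have hρpos : 0 < ρ := by positivity
  have hρt₀ : ρ < t₀ := by rw [hρdef]; exact half_lt_self ht₀pos
  set a : ℕ → ℝ := fun j => B j (-(k:ℤ)) / (j.factorial:ℝ) with hadef
  set b : ℕ → ℝ := fun j => ((CB j k : ℤ):ℝ) / (j.factorial:ℝ) with hbdef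
  have hsa : Summable fun j => |a j| * ρ^j := by
    have hgeo : Summable fun j : ℕ => M * (1/2)^j :=
      (summable_geometric_of_lt_one (by norm_num) (by norm_num)).mul_left M
    apply Summable.of_nonneg_of_le (fun j => by positivity) _ hgeo
    intro j
    have hfj : (0:ℝ) < (j.factorial:ℝ) := by exact_mod_cast j.factorial_pos
    have h2 : ρ^j = t₀^j * (1/2)^j := by
      rw [← mul_pow]; congr 1; rw [hρdef]; ring
    have h3 : |a j| * ρ^j = |B j (-(k:ℤ)) * t₀^j / (j.factorial:ℝ)| * (1/2)^j := by
      rw [hadef, h2]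
      simp only [abs_div, abs_mul, abs_pow, abs_of_nonneg ht₀pos.le, abs_of_nonneg hfj.le]
      ring
    rw [h3]
    exact mul_le_mul_of_nonneg_right (hM' j) (by positivity)
  have hsb : Summable fun j => |b j| * ρ^j := by
    have := stepA_summable k hρpos (lt_trans hρt₀ ht₀log)
    refine this.congr fun j => ?_
    have hfj : (0:ℝ) < (j.factorial:ℝ) := by exact_mod_cast j.factorial_pos
    rw [hbdef, abs_div, abs_of_nonneg hfj.le]
    ring
  have hps_a := hasFPS a hρpos hsa
  have hps_b := hasFPS b hρpos hsb
  -- the two sums agree on (0, ρ)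
  have heqon : ∀ x : ℝ, 0 < x → x < ρ →
      (∑' j : ℕ, a j * x^j) = (∑' j : ℕ, b j * x^j) := by
    intro x hx0 hx1
    have h1 : (∑' j : ℕ, a j * x^j) = ∑' j : ℕ, B j (-(k:ℤ)) * x^j / (j.factorial:ℝ) :=
      tsum_congr fun j => by rw [hadef]; ring
    have h2 : (∑' j : ℕ, b j * x^j) = ∑' j : ℕ, ((CB j k : ℤ):ℝ) * x^j / (j.factorial:ℝ) :=
      tsum_congr fun j => by rw [hbdef]; ring
    rw [h1, h2, ← hBk x hx0 (by linarith), stepA k hx0 (by linarith)]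
  -- hence they agree near 0, so the power series coincide
  have hfreq : ∃ᶠ x in 𝓝[≠] (0:ℝ), (fun x : ℝ => ∑' j : ℕ, a j * x^j) x
      = (fun x : ℝ => ∑' j : ℕ, b j * x^j) x := by
    have hev : ∀ᶠ x in 𝓝[>] (0:ℝ), (fun x : ℝ => ∑' j : ℕ, a j * x^j) x
        = (fun x : ℝ => ∑' j : ℕ, b j * x^j) x := by
      filter_upwards [Ioo_mem_nhdsGT_of_mem (by constructor <;> [exact le_refl 0; exact hρpos] :
        (0:ℝ) ∈ Set.Ico (0:ℝ) ρ)] with x hx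
      exact heqon x hx.1 hx.2
    refine hev.frequently.filter_mono (nhdsWithin_mono 0 ?_)
    intro x hx
    simp only [Set.mem_compl_iff, Set.mem_singleton_iff]
    exact ne_of_gt hx
  have hev : (fun x : ℝ => ∑' j : ℕ, a j * x^j) =ᶠ[𝓝 (0:ℝ)]
      (fun x : ℝ => ∑' j : ℕ, b j * x^j) :=
    (AnalyticAt.frequently_eq_iff_eventually_eq
      hps_a.hasFPowerSeriesAt.analyticAt hps_b.hasFPowerSeriesAt.analyticAt).1 hfreq
  have hpq : FormalMultilinearSeries.ofScalars ℝ a = FormalMultilinearSeries.ofScalars ℝ b :=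
    hps_a.hasFPowerSeriesAt.eq_formalMultilinearSeries_of_eventually hps_b.hasFPowerSeriesAt hev
  have hab : a = b := (FormalMultilinearSeries.ofScalars_series_eq_iff ℝ a b).1 hpq
  have habn := congrFun hab n
  rw [hadef, hbdef] at habn
  simp only at habn
  have hfn : (n.factorial:ℝ) ≠ 0 := by
    exact_mod_cast n.factorial_ne_zero
  field_simp at habn
  exact habn
end

section
/- The numbers C_n^{(k)} satisfy the duality C_n^{(-k-1)} = C_k^{(-n-1)} for all nonnegative integers n and k. -/
open Real

noncomputable def Dfin (p : ℕ) (g : ℕ → ℝ) : ℝ :=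
  ∑ i ∈ Finset.range (p+1), (-1:ℝ)^(p+i) * (p.choose i) * g i

noncomputable def Ec (n j : ℕ) : ℝ :=
  ∑ i ∈ Finset.range (j+1), (-1:ℝ)^(j+i) * (j.choose i) * ((i:ℝ)+1)^n

lemma Dfin_zero (g : ℕ → ℝ) : Dfin 0 g = g 0 := by simp [Dfin]

lemma neg_one_pow_eq {a b : ℕ} (h : a % 2 = b % 2) : (-1:ℝ)^a = (-1:ℝ)^b := by
  rw [← Nat.div_add_mod a 2, ← Nat.div_add_mod b 2, h, pow_add, pow_add, pow_mul, pow_mul]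
  norm_num

lemma Dfin_succ (p : ℕ) (g : ℕ → ℝ) :
    Dfin (p+1) g = Dfin p (fun i => g (i+1) - g i) := by
  simp only [Dfin, mul_sub, Finset.sum_sub_distrib]
  rw [Finset.sum_range_succ' (fun i => (-1:ℝ)^(p+1+i) * ((p+1).choose i) * g i)]
  simp only [Nat.choose_succ_succ, Nat.cast_add, Nat.choose_zero_right, Nat.cast_one]
  have e1 : ∀ x ∈ Finset.range (p+1),
      (-1:ℝ)^(p+1+(x+1)) * ((p.choose x : ℝ) + p.choose (x+1)) * g (x+1)
      = (-1:ℝ)^(p+x) * (p.choose x) * g (x+1) + (-1:ℝ)^(p+x) * (p.choose (x+1)) * g (x+1) := by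
    intro x _
    rw [neg_one_pow_eq (a := p+1+(x+1)) (b := p+x) (by omega)]
    ring
  rw [Finset.sum_congr rfl e1, Finset.sum_add_distrib]
  have e2 : ∑ x ∈ Finset.range (p+1), (-1:ℝ)^(p+x) * (p.choose x) * g x
      = (-1:ℝ)^p * g 0 + ∑ x ∈ Finset.range p, (-1:ℝ)^(p+(x+1)) * (p.choose (x+1)) * g (x+1) := by
    rw [Finset.sum_range_succ' (fun i => (-1:ℝ)^(p+i) * (p.choose i) * g i)]
    simp [add_comm]
  rw [e2]
  have e3 : ∑ x ∈ Finset.range (p+1), (-1:ℝ)^(p+x) * (p.choose (x+1)) * g (x+1)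
      = ∑ x ∈ Finset.range p, (-1:ℝ)^(p+x) * (p.choose (x+1)) * g (x+1) := by
    rw [Finset.sum_range_succ]
    simp
  rw [e3]
  have e4 : ∀ x ∈ Finset.range p, (-1:ℝ)^(p+x) * (p.choose (x+1)) * g (x+1)
      = -((-1:ℝ)^(p+(x+1)) * (p.choose (x+1)) * g (x+1)) := by
    intro x _
    rw [neg_one_pow_eq (a := p+(x+1)) (b := (p+x)+1) (by omega), pow_succ]
    ring
  rw [Finset.sum_congr rfl e4, Finset.sum_neg_distrib]
  have e5 : (-1:ℝ)^(p+1+0) = -(-1:ℝ)^p := by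
    rw [neg_one_pow_eq (a := p+1+0) (b := p+1) (by omega), pow_succ]; ring
  rw [e5]
  ring

lemma newton_aux : ∀ (x : ℕ) (g : ℕ → ℝ) (P : ℕ), x < P →
    g x = ∑ p ∈ Finset.range P, (x.choose p : ℝ) * Dfin p g := by
  intro x
  induction x with
  | zero =>
    intro g P hP
    obtain ⟨Q, rfl⟩ : ∃ Q, P = Q + 1 := ⟨P - 1, by omega⟩
    rw [Finset.sum_range_succ' (fun p => ((0:ℕ).choose p : ℝ) * Dfin p g)]
    simp [Dfin_zero, Nat.choose_eq_zero_of_lt]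
  | succ x ih =>
    intro g P hP
    obtain ⟨Q, rfl⟩ : ∃ Q, P = Q + 1 := ⟨P - 1, by omega⟩
    rw [Finset.sum_range_succ' (fun p => (((x+1).choose p : ℝ)) * Dfin p g)]
    simp only [Nat.choose_succ_succ, Nat.cast_add, Nat.choose_zero_right, Nat.cast_one]
    have : ∀ p ∈ Finset.range Q, ((x.choose p : ℝ) + x.choose (p+1)) * Dfin (p+1) g
        = (x.choose p : ℝ) * Dfin p (fun i => g (i+1) - g i) + (x.choose (p+1)) * Dfin (p+1) g := by
      intro p _
      rw [Dfin_succ]; ring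
    rw [Finset.sum_congr rfl this, Finset.sum_add_distrib]
    have h1 : g x = ∑ p ∈ Finset.range (Q+1), (x.choose p : ℝ) * Dfin p g := ih g (Q+1) (by omega)
    have h2 := ih (fun i => g (i+1) - g i) Q (by omega)
    rw [← h2]
    have h3 : ∑ p ∈ Finset.range Q, (x.choose (p+1) : ℝ) * Dfin (p+1) g + 1 * Dfin 0 g
        = ∑ p ∈ Finset.range (Q+1), (x.choose p : ℝ) * Dfin p g := by
      rw [Finset.sum_range_succ' (fun p => (x.choose p : ℝ) * Dfin p g)]
      simp
    linarith [h1, h3]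

lemma Akey (n p : ℕ) :
    Dfin (p+1) (fun i => (i:ℝ)^(n+1)) = ((p:ℝ)+1) * Ec n p := by
  unfold Dfin Ec
  rw [Finset.sum_range_succ' (fun i => (-1:ℝ)^(p+1+i) * (((p+1).choose i : ℕ):ℝ) * (i:ℝ)^(n+1))]
  have e0 : (-1:ℝ)^(p+1+0) * (((p+1).choose 0 : ℕ):ℝ) * ((0:ℕ):ℝ)^(n+1) = 0 := by
    simp
  rw [e0, add_zero, Finset.mul_sum]
  refine Finset.sum_congr rfl ?_
  intro i _
  have hc : (((p+1).choose (i+1) : ℕ):ℝ) * ((i:ℝ)+1) = ((p:ℝ)+1) * (p.choose i : ℕ) := by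
    have := Nat.add_one_mul_choose_eq p i
    have : ((p+1) * p.choose i : ℕ) = ((p+1).choose (i+1) * (i+1) : ℕ) := by
      simpa [Nat.succ_eq_add_one] using this
    have := congrArg (fun m : ℕ => (m:ℝ)) this
    push_cast at this
    linarith
  have hsign : (-1:ℝ)^(p+1+(i+1)) = (-1:ℝ)^(p+i) := neg_one_pow_eq (by omega)
  have hx : (((i+1:ℕ)):ℝ)^(n+1) = ((i:ℝ)+1) * ((i:ℝ)+1)^n := by
    push_cast; ring
  rw [hsign, hx]
  calc (-1:ℝ)^(p+i) * (((p+1).choose (i+1) : ℕ):ℝ) * (((i:ℝ)+1) * ((i:ℝ)+1)^n)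
      = (-1:ℝ)^(p+i) * ((((p+1).choose (i+1) : ℕ):ℝ) * ((i:ℝ)+1)) * ((i:ℝ)+1)^n := by ring
    _ = (-1:ℝ)^(p+i) * (((p:ℝ)+1) * (p.choose i : ℕ)) * ((i:ℝ)+1)^n := by rw [hc]
    _ = ((p:ℝ)+1) * ((-1)^(p+i) * (p.choose i : ℕ) * ((i:ℝ)+1)^n) := by ring

lemma Ec_expand (n j : ℕ) :
    Ec n j = ∑ r ∈ Finset.range (n+1), (n.choose r : ℝ) * Dfin j (fun i => (i:ℝ)^r) := by
  unfold Ec Dfin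
  have e : ∀ i : ℕ, ((i:ℝ)+1)^n = ∑ r ∈ Finset.range (n+1), (i:ℝ)^r * (n.choose r : ℝ) := by
    intro i
    have := add_pow (i:ℝ) 1 n
    simpa using this
  simp only [e, Finset.mul_sum]
  rw [Finset.sum_comm]
  refine Finset.sum_congr rfl ?_
  intro r _
  exact Finset.sum_congr rfl (fun i _ => by ring)

lemma alt_sum_zero (p : ℕ) (hp : 0 < p) :
    ∑ i ∈ Finset.range (p+1), (-1:ℝ)^(p+i) * (p.choose i : ℝ) = 0 := by
  have h := Int.alternating_sum_range_choose (n := p)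
  rw [if_neg (by omega)] at h
  have h2 : ((∑ i ∈ Finset.range (p+1), (-1:ℤ)^i * (p.choose i : ℤ) : ℤ) : ℝ) = 0 := by
    rw [h]; norm_num
  push_cast at h2
  calc ∑ i ∈ Finset.range (p+1), (-1:ℝ)^(p+i) * (p.choose i : ℝ)
      = (-1:ℝ)^p * ∑ i ∈ Finset.range (p+1), (-1:ℝ)^i * (p.choose i : ℝ) := by
        rw [Finset.mul_sum]; refine Finset.sum_congr rfl ?_; intro i _; rw [pow_add]; ring
    _ = 0 := by rw [h2, mul_zero]

lemma Dfin_pow_vanish : ∀ p m : ℕ, m < p → Dfin p (fun i => (i:ℝ)^m) = 0 := by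
  intro p
  induction p using Nat.strong_induction_on with
  | _ p IH =>
  intro m hm
  obtain ⟨q, rfl⟩ : ∃ q, p = q + 1 := ⟨p - 1, by omega⟩
  match m with
  | 0 =>
    have : Dfin (q+1) (fun i => (i:ℝ)^0) = ∑ i ∈ Finset.range (q+2), (-1:ℝ)^(q+1+i) * ((q+1).choose i : ℝ) := by
      unfold Dfin
      refine Finset.sum_congr rfl ?_
      intro i _; simp
    rw [this]
    exact alt_sum_zero (q+1) (by omega)
  | (m'+1) =>
    rw [Akey, Ec_expand]
    have : ∀ r ∈ Finset.range (m'+1), (m'.choose r : ℝ) * Dfin q (fun i => (i:ℝ)^r) = 0 := by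
      intro r hr
      rw [IH q (by omega) r (by simp at hr; omega), mul_zero]
    rw [Finset.sum_congr rfl this]
    simp

lemma Ec_vanish {n j : ℕ} (h : n < j) : Ec n j = 0 := by
  have h1 : ((j:ℝ)+1) * Ec n j = 0 := by
    rw [← Akey]
    exact Dfin_pow_vanish (j+1) (n+1) (by omega)
  have : ((j:ℝ)+1) ≠ 0 := by positivity
  exact (mul_eq_zero.mp h1).resolve_left this

lemma newton_pow (k x : ℕ) :
    (x:ℝ)^(k+1) = ∑ p ∈ Finset.range (k+2), (x.choose p : ℝ) * Dfin p (fun i => (i:ℝ)^(k+1)) := by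
  have h := newton_aux x (fun i => (i:ℝ)^(k+1)) (max (x+1) (k+2)) (by omega)
  rw [h]
  symm
  apply Finset.sum_subset
  · intro p hp
    simp only [Finset.mem_range] at *
    omega
  · intro p hp hnp
    simp only [Finset.mem_range] at *
    rw [Dfin_pow_vanish p (k+1) (by omega), mul_zero]

noncomputable def Dnum (n k : ℕ) : ℝ :=
  ∑ j ∈ Finset.range (min n k + 1), ((j:ℝ)+1) * Ec n j * Ec k j

lemma Dnum_symm (n k : ℕ) : Dnum n k = Dnum k n := by
  unfold Dnum
  rw [min_comm]
  exact Finset.sum_congr rfl (fun j _ => by ring)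

lemma Dnum_eq (n k : ℕ) :
    Dnum n k = ∑ j ∈ Finset.range (k + 1), ((j:ℝ)+1) * Ec k j * Ec n j := by
  unfold Dnum
  rw [show ∑ j ∈ Finset.range (min n k + 1), ((j:ℝ)+1) * Ec n j * Ec k j
      = ∑ j ∈ Finset.range (min n k + 1), ((j:ℝ)+1) * Ec k j * Ec n j from
    Finset.sum_congr rfl (fun j _ => by ring)]
  apply Finset.sum_subset
  · intro p hp
    simp only [Finset.mem_range] at *
    omega
  · intro p hp hnp
    simp only [Finset.mem_range] at *
    have hn : n < p := by omega
    rw [Ec_vanish hn, mul_zero]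

open Real in
lemma hasSum_Ec (j : ℕ) (t : ℝ) :
    HasSum (fun n => Ec n j * t^n / (n.factorial : ℝ)) ((Real.exp t - 1)^j * Real.exp t) := by
  have hexp : ∀ x : ℝ, HasSum (fun n => x^n / (n.factorial : ℝ)) (Real.exp x) := by
    intro x
    rw [Real.exp_eq_exp_ℝ]
    exact NormedSpace.expSeries_div_hasSum_exp x
  have h1 : HasSum
      (fun n => ∑ i ∈ Finset.range (j+1),
        ((-1:ℝ)^(j+i) * (j.choose i : ℝ)) * ((((i:ℝ)+1) * t)^n / (n.factorial : ℝ)))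
      (∑ i ∈ Finset.range (j+1),
        ((-1:ℝ)^(j+i) * (j.choose i : ℝ)) * Real.exp (((i:ℝ)+1) * t)) := by
    apply hasSum_sum
    intro i _
    exact (hexp (((i:ℝ)+1) * t)).mul_left _
  have e1 : (fun n => ∑ i ∈ Finset.range (j+1),
        ((-1:ℝ)^(j+i) * (j.choose i : ℝ)) * ((((i:ℝ)+1) * t)^n / (n.factorial : ℝ)))
      = fun n => Ec n j * t^n / (n.factorial : ℝ) := by
    funext n
    unfold Ec
    rw [Finset.sum_mul, Finset.sum_div]
    refine Finset.sum_congr rfl (fun i _ => ?_)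
    rw [mul_pow]
    ring
  have e2 : ∑ i ∈ Finset.range (j+1),
        ((-1:ℝ)^(j+i) * (j.choose i : ℝ)) * Real.exp (((i:ℝ)+1) * t)
      = (Real.exp t - 1)^j * Real.exp t := by
    have hb := add_pow (Real.exp t) (-1:ℝ) j
    have : (Real.exp t - 1)^j = ∑ i ∈ Finset.range (j+1),
        (Real.exp t)^i * (-1:ℝ)^(j-i) * (j.choose i : ℝ) := by
      rw [← hb]; ring_nf
    rw [this, Finset.sum_mul]
    refine Finset.sum_congr rfl (fun i hi => ?_)
    simp only [Finset.mem_range] at hi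
    have hsign : (-1:ℝ)^(j-i) = (-1:ℝ)^(j+i) := neg_one_pow_eq (by omega)
    have hexpmul : Real.exp (((i:ℝ)+1) * t) = (Real.exp t)^i * Real.exp t := by
      rw [← Real.exp_nat_mul, ← Real.exp_add]
      ring_nf
    rw [hsign, hexpmul]
    ring
  rw [← e1, ← e2]
  exact h1

lemma hasSum_choose_shift (j : ℕ) {z : ℝ} (hz : |z| < 1) :
    HasSum (fun m : ℕ => ((m+1).choose (j+1) : ℝ) * z^(m+1)) (z^(j+1)/(1-z)^(j+2)) := by
  have hz' : ‖z‖ < 1 := by rwa [Real.norm_eq_abs]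
  set f : ℕ → ℝ := fun m => (m.choose (j+1) : ℝ) * z^m with hf
  have h0 := hasSum_choose_mul_geometric_of_norm_lt_one (𝕜 := ℝ) (j+1) hz'
  have h1 : HasSum (fun n : ℕ => f (n + (j+1))) (z^(j+1) * (1 / (1 - z)^(j+2))) := by
    have h2 := h0.mul_left (z^(j+1))
    refine h2.congr_fun (fun n => ?_)
    simp only [hf, pow_add]
    ring
  have h3 : HasSum f (z^(j+1) * (1 / (1 - z)^(j+2)) + ∑ i ∈ Finset.range (j+1), f i) :=
    (hasSum_nat_add_iff (j+1)).mp h1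
  have h4 : ∑ i ∈ Finset.range (j+1), f i = 0 := by
    apply Finset.sum_eq_zero
    intro i hi
    simp only [Finset.mem_range] at hi
    simp [hf, Nat.choose_eq_zero_of_lt (by omega : i < j+1)]
  rw [h4, add_zero] at h3
  have h5 : HasSum (fun m => f (m + 1)) (z^(j+1) * (1 / (1 - z)^(j+2)) - f 0) := by
    refine (hasSum_nat_add_iff 1).mpr ?_
    have : z^(j+1) * (1 / (1 - z)^(j+2)) - f 0 + ∑ i ∈ Finset.range 1, f i
        = z^(j+1) * (1 / (1 - z)^(j+2)) := by
      simp
    rw [this]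
    exact h3
  have hf0 : f 0 = 0 := by simp [hf]
  rw [hf0, sub_zero] at h5
  have : z^(j+1) * (1 / (1 - z)^(j+2)) = z^(j+1)/(1-z)^(j+2) := by ring
  rw [← this]
  exact h5

lemma hasSum_Li_core (k : ℕ) {z : ℝ} (hz : |z| < 1) :
    HasSum (fun m : ℕ => z^(m+1) * ((m:ℝ)+1)^(k+1))
      (∑ j ∈ Finset.range (k+1), ((j:ℝ)+1) * Ec k j * (z^(j+1)/(1-z)^(j+2))) := by
  have h1 : HasSum (fun m : ℕ => ∑ j ∈ Finset.range (k+1),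
      (((j:ℝ)+1) * Ec k j) * (((m+1).choose (j+1) : ℝ) * z^(m+1)))
      (∑ j ∈ Finset.range (k+1), (((j:ℝ)+1) * Ec k j) * (z^(j+1)/(1-z)^(j+2))) := by
    apply hasSum_sum
    intro j _
    exact (hasSum_choose_shift j hz).mul_left _
  have e : ∀ m : ℕ, ∑ j ∈ Finset.range (k+1),
      (((j:ℝ)+1) * Ec k j) * (((m+1).choose (j+1) : ℝ) * z^(m+1))
      = z^(m+1) * ((m:ℝ)+1)^(k+1) := by
    intro m
    have hnp := newton_pow k (m+1)
    rw [Finset.sum_range_succ' (fun p => (((m+1).choose p : ℕ):ℝ) * Dfin p (fun i => (i:ℝ)^(k+1)))] at hnp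
    simp only [Dfin_zero] at hnp
    have h0 : ((0:ℕ):ℝ)^(k+1) = 0 := by simp
    rw [h0, mul_zero, add_zero] at hnp
    have hcast : (((m+1:ℕ)):ℝ) = (m:ℝ)+1 := by push_cast; ring
    rw [hcast] at hnp
    rw [hnp, Finset.mul_sum]
    refine Finset.sum_congr rfl (fun j _ => ?_)
    rw [Akey]
    ring
  exact h1.congr_fun (fun m => (e m).symm)

lemma Li_term (k : ℕ) (z : ℝ) (m : ℕ) :
    z ^ (m + 1) / ((m : ℝ) + 1) ^ (-(k:ℤ)-1) = z^(m+1) * ((m:ℝ)+1)^(k+1) := by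
  have hm : ((m:ℝ)+1) ≠ 0 := by positivity
  have : (-(k:ℤ)-1) = -((k+1 : ℕ) : ℤ) := by push_cast; ring
  rw [this, zpow_neg, zpow_natCast, div_inv_eq_mul]

lemma Li_eval (k : ℕ) {z : ℝ} (hz0 : 0 < z) (hz1 : z < 1) :
    Li (-(k:ℤ)-1) z
      = ∑ j ∈ Finset.range (k+1), ((j:ℝ)+1) * Ec k j * (z^(j+1)/(1-z)^(j+2)) := by
  unfold Li
  have habs : |z| < 1 := by rw [abs_of_pos hz0]; exact hz1
  have h := hasSum_Li_core k habs
  rw [show (fun m : ℕ => z ^ (m + 1) / ((m : ℝ) + 1) ^ (-(k:ℤ)-1))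
      = fun m : ℕ => z^(m+1) * ((m:ℝ)+1)^(k+1) from funext (Li_term k z)]
  exact h.tsum_eq

lemma Li_pos (k : ℕ) {z : ℝ} (hz0 : 0 < z) (hz1 : z < 1) :
    0 < Li (-(k:ℤ)-1) z := by
  unfold Li
  have habs : |z| < 1 := by rw [abs_of_pos hz0]; exact hz1
  have h := hasSum_Li_core k habs
  rw [show (fun m : ℕ => z ^ (m + 1) / ((m : ℝ) + 1) ^ (-(k:ℤ)-1))
      = fun m : ℕ => z^(m+1) * ((m:ℝ)+1)^(k+1) from funext (Li_term k z)]
  apply Summable.tsum_pos h.summable (fun m => by positivity) 0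
  norm_num
  positivity

lemma f_eval (k : ℕ) {t : ℝ} (ht : 0 < t) :
    Li (-(k:ℤ)-1) (1 - Real.exp (-t)) / (Real.exp t - 1)
      = ∑ j ∈ Finset.range (k+1), ((j:ℝ)+1) * Ec k j * ((Real.exp t - 1)^j * Real.exp t) := by
  set z : ℝ := 1 - Real.exp (-t) with hzdef
  have he1 : Real.exp (-t) < 1 := Real.exp_lt_one_iff.mpr (by linarith)
  have hz0 : 0 < z := by simp only [hzdef]; linarith
  have hz1 : z < 1 := by
    have := Real.exp_pos (-t)
    simp only [hzdef]; linarith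
  have het : (1:ℝ) < Real.exp t := by
    rw [show (1:ℝ) = Real.exp 0 by simp]
    exact Real.exp_lt_exp.mpr ht
  have hetne : Real.exp t - 1 ≠ 0 := by linarith
  have hexpne : Real.exp t ≠ 0 := (Real.exp_pos t).ne'
  have hinv : Real.exp (-t) = (Real.exp t)⁻¹ := by
    rw [Real.exp_neg]
  rw [Li_eval k hz0 hz1, Finset.sum_div]
  refine Finset.sum_congr rfl (fun j hj => ?_)
  have h1mz : 1 - z = (Real.exp t)⁻¹ := by rw [hzdef, hinv]; ring
  have hzval : z = (Real.exp t - 1) / Real.exp t := by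
    rw [hzdef, hinv]
    field_simp
  rw [h1mz, hzval]
  rw [div_pow, inv_pow]
  field_simp
  ring

lemma hasSum_Dnum (k : ℕ) (t : ℝ) :
    HasSum (fun n => Dnum n k * t^n / (n.factorial : ℝ))
      (∑ j ∈ Finset.range (k+1), ((j:ℝ)+1) * Ec k j * ((Real.exp t - 1)^j * Real.exp t)) := by
  have h1 : HasSum (fun n => ∑ j ∈ Finset.range (k+1),
      (((j:ℝ)+1) * Ec k j) * (Ec n j * t^n / (n.factorial : ℝ)))
      (∑ j ∈ Finset.range (k+1), (((j:ℝ)+1) * Ec k j) * ((Real.exp t - 1)^j * Real.exp t)) := by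
    apply hasSum_sum
    intro j _
    exact (hasSum_Ec j t).mul_left _
  refine h1.congr_fun (fun n => ?_)
  rw [Dnum_eq, Finset.sum_mul, Finset.sum_div]
  exact Finset.sum_congr rfl (fun j _ => by ring)

lemma f_pos (k : ℕ) {t : ℝ} (ht : 0 < t) :
    0 < Li (-(k:ℤ)-1) (1 - Real.exp (-t)) / (Real.exp t - 1) := by
  have he1 : Real.exp (-t) < 1 := Real.exp_lt_one_iff.mpr (by linarith)
  have hz0 : 0 < 1 - Real.exp (-t) := by linarith
  have hz1 : 1 - Real.exp (-t) < 1 := by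
    have := Real.exp_pos (-t); linarith
  have het : (1:ℝ) < Real.exp t := by
    rw [show (1:ℝ) = Real.exp 0 by simp]
    exact Real.exp_lt_exp.mpr ht
  exact div_pos (Li_pos k hz0 hz1) (by linarith)

set_option maxHeartbeats 1000000 in
lemma coeff_unique {c : ℕ → ℝ} {ε : ℝ} (hε : 0 < ε)
    (h : ∀ t : ℝ, 0 < t → t < ε →
      Summable (fun n => c n * t^n) ∧ ∑' n, c n * t^n = 0) :
    ∀ N, c N = 0 := by
  obtain ⟨t1, ht1, ht1ε⟩ : ∃ t1 : ℝ, 0 < t1 ∧ t1 < ε := ⟨ε/2, by positivity, by linarith⟩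
  have hs : Summable (fun n => c n * t1^n) := (h t1 ht1 ht1ε).1
  have habs : Summable (fun n => |c n| * t1^n) := by
    have := summable_norm_iff.mpr hs
    refine this.congr (fun n => ?_)
    rw [Real.norm_eq_abs, abs_mul, abs_of_pos (pow_pos ht1 n)]
  obtain ⟨M, hM0, hMb'⟩ : ∃ M : ℝ, 0 ≤ M ∧ ∀ m, |c m| ≤ M / t1^m := by
    refine ⟨∑' n, |c n| * t1^n, tsum_nonneg (fun n => by positivity), fun m => ?_⟩
    rw [le_div_iff₀ (pow_pos ht1 m)]
    exact Summable.le_tsum habs m (fun j _ => by positivity)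
  intro N
  induction N using Nat.strong_induction_on with
  | _ N IH =>
  have key : ∀ t : ℝ, 0 < t → t < min ε (t1/2) → |c N| ≤ 2 * M / t1^(N+1) * t := by
    intro t ht htm
    have htε : t < ε := lt_of_lt_of_le htm (min_le_left _ _)
    have hth : t < t1/2 := lt_of_lt_of_le htm (min_le_right _ _)
    obtain ⟨hsum, hzero⟩ := h t ht htε
    obtain ⟨r, hrdef⟩ : ∃ r : ℝ, r = t / t1 := ⟨t/t1, rfl⟩
    have hr0 : 0 < r := by rw [hrdef]; positivity
    have hr2 : r < 1/2 := by
      rw [hrdef, div_lt_iff₀ ht1]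
      linarith
    have hr1 : r < 1 := by linarith
    have h1 : ∑ i ∈ Finset.range N, c i * t^i + ∑' n, c (n+N) * t^(n+N) = 0 := by
      rw [Summable.sum_add_tsum_nat_add N hsum]
      exact hzero
    have h2 : ∑ i ∈ Finset.range N, c i * t^i = 0 :=
      Finset.sum_eq_zero (fun i hi => by
        rw [IH i (Finset.mem_range.mp hi), zero_mul])
    have h3 : ∑' n, c (n+N) * t^(n+N) = 0 := by linarith
    have hsumN : Summable (fun n => c (n+N) * t^(n+N)) :=
      ((summable_nat_add_iff N).mpr hsum)
    have h4 : c N * t^N + ∑' n, c (n+1+N) * t^(n+1+N) = 0 := by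
      have h5 := Summable.sum_add_tsum_nat_add (f := fun n => c (n+N) * t^(n+N)) 1 hsumN
      rw [h3] at h5
      simpa using h5
    have hgeo : HasSum (fun n : ℕ => M * r^(N+1) * r^n) (M * r^(N+1) * (1-r)⁻¹) :=
      (hasSum_geometric_of_lt_one (le_of_lt hr0) hr1).mul_left _
    have ht1ne : (t1 : ℝ) ≠ 0 := ne_of_gt ht1
    have hrm : ∀ m : ℕ, M / t1^m * t^m = M * r^m := by
      intro m
      rw [hrdef, div_pow, div_mul_eq_mul_div, mul_div_assoc]
    have hbound : ‖∑' n, c (n+1+N) * t^(n+1+N)‖ ≤ M * r^(N+1) * (1-r)⁻¹ := by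
      apply tsum_of_norm_bounded hgeo
      intro n
      rw [Real.norm_eq_abs, abs_mul, abs_of_pos (pow_pos ht (n+1+N))]
      calc |c (n+1+N)| * t^(n+1+N) ≤ (M / t1^(n+1+N)) * t^(n+1+N) :=
            mul_le_mul_of_nonneg_right (hMb' _) (le_of_lt (pow_pos ht _))
        _ = M * r^(n+1+N) := hrm _
        _ = M * r^(N+1) * r^n := by
            rw [show n+1+N = (N+1)+n by omega, pow_add, mul_assoc]
    have htN : (0:ℝ) < t^N := pow_pos ht N
    have hcNtN : |c N| * t^N = ‖∑' n, c (n+1+N) * t^(n+1+N)‖ := by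
      have hneg : c N * t^N = -∑' n, c (n+1+N) * t^(n+1+N) := by linarith
      calc |c N| * t^N = |c N * t^N| := by rw [abs_mul, abs_of_pos htN]
        _ = |∑' n, c (n+1+N) * t^(n+1+N)| := by rw [hneg, abs_neg]
        _ = ‖∑' n, c (n+1+N) * t^(n+1+N)‖ := (Real.norm_eq_abs _).symm
    have hfinal : |c N| * t^N ≤ M * r^(N+1) * 2 := by
      rw [hcNtN]
      refine le_trans hbound ?_
      have h1r : (1-r)⁻¹ ≤ 2 := by
        rw [inv_le_comm₀ (by linarith) (by norm_num)]
        linarith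
      have hMr : 0 ≤ M * r^(N+1) := by positivity
      nlinarith
    refine le_of_mul_le_mul_right ?_ htN
    have hexp : 2 * M / t1^(N+1) * t * t^N = M * r^(N+1) * 2 := by
      rw [hrdef, div_pow]
      field_simp
      ring
    rw [hexp]
    exact hfinal
  by_contra hne
  have habs0 : 0 < |c N| := abs_pos.mpr hne
  obtain ⟨K, hKdef⟩ : ∃ K : ℝ, K = 2 * M / t1^(N+1) := ⟨_, rfl⟩
  have hK0 : 0 ≤ K := by rw [hKdef]; positivity
  obtain ⟨δ, hδdef⟩ : ∃ δ : ℝ, δ = min ε (t1/2) := ⟨_, rfl⟩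
  have hδ0 : 0 < δ := by rw [hδdef]; exact lt_min hε (by linarith)
  obtain ⟨t, htdef⟩ : ∃ t : ℝ, t = min (δ/2) (|c N| / (2*K+1)) := ⟨_, rfl⟩
  have ht0 : 0 < t := by rw [htdef]; exact lt_min (by linarith) (by positivity)
  have htδ : t < δ := by
    have : t ≤ δ/2 := by rw [htdef]; exact min_le_left _ _
    linarith
  have hkey := key t ht0 (hδdef ▸ htδ)
  rw [← hKdef] at hkey
  have hle : t ≤ |c N| / (2*K+1) := by rw [htdef]; exact min_le_right _ _
  have hchain : |c N| ≤ K * (|c N| / (2*K+1)) :=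
    le_trans hkey (mul_le_mul_of_nonneg_left hle hK0)
  have h2K : K * (|c N| / (2*K+1)) < |c N| := by
    rw [mul_div_assoc']
    rw [div_lt_iff₀ (by linarith)]
    nlinarith
  linarith

lemma C_eq_Dnum (C : ℕ → ℤ → ℝ)
    (hC : ∀ k : ℤ, ∃ ε > (0:ℝ), ∀ t : ℝ, 0 < t → t < ε →
      Li k (1 - Real.exp (-t)) / (Real.exp t - 1) =
        ∑' n : ℕ, C n k * t ^ n / (n.factorial : ℝ))
    (n k : ℕ) : C n (-(k : ℤ) - 1) = Dnum n k := by
  obtain ⟨ε, hε, hCk⟩ := hC (-(k : ℤ) - 1)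
  have main : ∀ m, (C m (-(k:ℤ)-1) - Dnum m k) / (m.factorial : ℝ) = 0 := by
    apply coeff_unique hε
    intro t ht htε
    have hD := hasSum_Dnum k t
    have hfe : Li (-(k:ℤ)-1) (1 - Real.exp (-t)) / (Real.exp t - 1)
        = ∑ j ∈ Finset.range (k+1), ((j:ℝ)+1) * Ec k j * ((Real.exp t - 1)^j * Real.exp t) := by
      exact f_eval k ht
    have hGpos : 0 < ∑ j ∈ Finset.range (k+1), ((j:ℝ)+1) * Ec k j * ((Real.exp t - 1)^j * Real.exp t) := by
      rw [← hfe]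
      exact f_pos k ht
    have hCt : ∑' m, C m (-(k:ℤ)-1) * t^m / (m.factorial : ℝ)
        = ∑ j ∈ Finset.range (k+1), ((j:ℝ)+1) * Ec k j * ((Real.exp t - 1)^j * Real.exp t) := by
      rw [← hfe]
      exact (hCk t ht htε).symm
    have hCsum : Summable (fun m => C m (-(k:ℤ)-1) * t^m / (m.factorial : ℝ)) := by
      by_contra hns
      rw [tsum_eq_zero_of_not_summable hns] at hCt
      linarith
    constructor
    · have := hCsum.sub hD.summable
      refine this.congr (fun m => ?_)
      ring
    · have heq : (fun m => (C m (-(k:ℤ)-1) - Dnum m k) / (m.factorial : ℝ) * t^m)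
          = fun m => C m (-(k:ℤ)-1) * t^m / (m.factorial : ℝ)
            - Dnum m k * t^m / (m.factorial : ℝ) := by
        funext m
        ring
      rw [heq, Summable.tsum_sub hCsum hD.summable, hCt, hD.tsum_eq, sub_self]
  have hm := main n
  have hfac : ((n.factorial : ℝ)) ≠ 0 := by
    exact_mod_cast n.factorial_ne_zero
  have := div_eq_zero_iff.mp hm
  rcases this with h | h
  · linarith [sub_eq_zero.mp (by linarith : C n (-(k:ℤ)-1) - Dnum n k = 0)]
  · exact absurd h hfac

/-- Duality `C_n^{(-k-1)} = C_k^{(-n-1)}`, stated for any family `C n k` of numbers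
satisfying the defining generating-series property
`Li_k(1-e^{-t})/(e^t - 1) = ∑_{n ≥ 0} C_n^{(k)} t^n/n!` near `t = 0`. -/
theorem stmt3 (C : ℕ → ℤ → ℝ)
    (hC : ∀ k : ℤ, ∃ ε > (0:ℝ), ∀ t : ℝ, 0 < t → t < ε →
      Li k (1 - Real.exp (-t)) / (Real.exp t - 1) =
        ∑' n : ℕ, C n k * t ^ n / (n.factorial : ℝ))
    (n k : ℕ) : C n (-(k : ℤ) - 1) = C k (-(n : ℤ) - 1) := by
  rw [C_eq_Dnum C hC n k, C_eq_Dnum C hC k n, Dnum_symm]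
end

section
/- For nonpositive indices, the multiple polylogarithm is a rational function: for all k_1,…,k_r ≥ 0 there exists a polynomial P(x) with integer coefficients such that Li_{-k_1,…,-k_r}(z) = P(z)/(1-z)^{k_1+⋯+k_r+r}, where deg P = r if all k_i = 0 and deg P = k_1+⋯+k_r+r−1 otherwise, and x^r divides P(x); moreover P(x) = x^r when k_1 = ⋯ = k_r = 0. -/
open Real Finset

/-- The multiple polylogarithm
`Li_{k_1,…,k_r}(z) = ∑_{1 ≤ m_1 < ⋯ < m_r} z^{m_r}/(m_1^{k_1} ⋯ m_r^{k_r})`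
with integer indices, parametrized by the increments `n i`, so that
`m_j = ∑_{i ≤ j} (n_i + 1)`. -/
noncomputable def MLi {r : ℕ} (k : Fin r → ℤ) (z : ℝ) : ℝ :=
  ∑' n : Fin r → ℕ,
    z ^ (∑ i, (n i + 1)) /
      ∏ j, ((∑ i ∈ Finset.Iic j, (n i + 1) : ℕ) : ℝ) ^ (k j)

open Polynomial

/-- Eulerian-type numerator polynomials for `∑ n^d z^n`. -/
noncomputable def EP : ℕ → Polynomial ℤ
  | 0 => 1
  | (d+1) => X * ∑ j ∈ (range (d+1)).attach,
      ((d+1).choose j.1 : ℤ) • (EP j.1 * (1 - X) ^ (d - j.1))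
  decreasing_by exact Nat.lt_succ_of_le (Nat.lt_succ_iff.mp (mem_range.mp j.2))

lemma natDegree_one_sub_X : (1 - X : Polynomial ℤ).natDegree = 1 := by
  have : (1 - X : Polynomial ℤ) = -(X - C 1) := by ring_nf; rw [Polynomial.C_1]; ring
  rw [this, natDegree_neg, natDegree_X_sub_C]

lemma leadingCoeff_one_sub_X : (1 - X : Polynomial ℤ).leadingCoeff = -1 := by
  rw [leadingCoeff, natDegree_one_sub_X]
  simp [coeff_one]

lemma EP_deg_lead (d : ℕ) : (EP d).natDegree = d ∧ (EP d).leadingCoeff = 1 := by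
  induction d using Nat.strong_induction_on with
  | _ d IH =>
    match d with
    | 0 => simp [EP]
    | (d+1) =>
      rw [EP]
      set S : Polynomial ℤ := ∑ j ∈ (range (d+1)).attach,
        ((d+1).choose j.1 : ℤ) • (EP j.1 * (1 - X) ^ (d - j.1)) with hS
      have hterm : ∀ j : {x // x ∈ range (d+1)},
          (((d+1).choose j.1 : ℤ) • (EP j.1 * (1 - X) ^ (d - j.1))).natDegree ≤ d ∧
          (((d+1).choose j.1 : ℤ) • (EP j.1 * (1 - X) ^ (d - j.1))).coeff d
            = ((d+1).choose j.1 : ℤ) * (-1) ^ (d - j.1) := by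
        intro j
        have hj : j.1 < d + 1 := mem_range.mp j.2
        have hEP := IH j.1 (Nat.lt_succ_of_le (Nat.lt_succ_iff.mp hj))
        have hEPne : EP j.1 ≠ 0 := by
          intro h; rw [h] at hEP; simp [leadingCoeff_zero] at hEP
        have hpne : ((1 - X : Polynomial ℤ)) ^ (d - j.1) ≠ 0 := by
          apply pow_ne_zero; intro h
          have := natDegree_one_sub_X; rw [h] at this; simp at this
        have hdegmul : (EP j.1 * (1 - X) ^ (d - j.1)).natDegree = d := by
          rw [natDegree_mul hEPne hpne, hEP.1, natDegree_pow, natDegree_one_sub_X,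
            mul_one]
          omega
        have hc : (EP j.1 * (1 - X) ^ (d - j.1)).coeff d = (-1) ^ (d - j.1) := by
          have hc0 : (EP j.1 * (1 - X) ^ (d - j.1)).coeff
              ((EP j.1 * (1 - X) ^ (d - j.1)).natDegree)
              = (EP j.1 * (1 - X) ^ (d - j.1)).leadingCoeff := coeff_natDegree
          rw [hdegmul] at hc0
          rw [hc0, leadingCoeff_mul, hEP.2, leadingCoeff_pow,
            leadingCoeff_one_sub_X, one_mul]
        constructor
        · exact le_trans (natDegree_smul_le _ _) hdegmul.le
        · rw [coeff_smul, hc]; simp [zsmul_eq_mul]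
      have hSdeg : S.natDegree ≤ d := natDegree_sum_le_of_forall_le _ _ fun j _ => (hterm j).1
      have hScoeff : S.coeff d = 1 := by
        rw [hS, finset_sum_coeff]
        have : ∀ j ∈ (range (d+1)).attach,
            (((d+1).choose j.1 : ℤ) • (EP j.1 * (1 - X) ^ (d - j.1))).coeff d
              = ((d+1).choose j.1 : ℤ) * (-1) ^ (d - j.1) := fun j _ => (hterm j).2
        rw [Finset.sum_congr rfl this, Finset.sum_attach (range (d+1))
          (fun j => ((d+1).choose j : ℤ) * (-1) ^ (d - j))]
        -- ∑_{j∈range(d+1)} C(d+1,j) * (-1)^(d-j) = 1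
        have key : ∀ j ∈ range (d+1), ((d+1).choose j : ℤ) * (-1) ^ (d - j)
            = (-1)^d * ((-1) ^ j * ((d+1).choose j : ℤ)) := by
          intro j hj
          have hj' : j ≤ d := Nat.lt_succ_iff.mp (mem_range.mp hj)
          have : ((-1 : ℤ)) ^ (d - j) * (-1) ^ j = (-1) ^ d := by
            rw [← pow_add]; congr 1; omega
          calc ((d+1).choose j : ℤ) * (-1) ^ (d - j)
              = ((d+1).choose j : ℤ) * ((-1) ^ (d-j) * ((-1)^j * (-1)^j)) := by
                rw [← pow_add, ← two_mul, pow_mul]; norm_num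
            _ = (-1)^d * ((-1) ^ j * ((d+1).choose j : ℤ)) := by
                rw [← mul_assoc ((-1:ℤ)^(d-j)), this]; ring
        rw [Finset.sum_congr rfl key, ← Finset.mul_sum]
        have := Int.alternating_sum_range_choose (n := d + 1)
        rw [if_neg (Nat.succ_ne_zero d)] at this
        rw [Finset.sum_range_succ] at this
        have h2 : ∑ i ∈ range (d+1), (-1 : ℤ) ^ i * ((d+1).choose i : ℤ)
            = -((-1)^(d+1)) := by
          simp only [Nat.choose_self, Nat.cast_one, mul_one] at this ⊢
          linarith
        have h3 : (-(-1:ℤ) ^ (d+1)) = (-1)^d := by rw [pow_succ]; ring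
        rw [h2, h3, ← pow_add, ← two_mul, pow_mul]; norm_num
      have hSne : S ≠ 0 := by intro h; rw [h] at hScoeff; simp at hScoeff
      have hSdeg' : S.natDegree = d := le_antisymm hSdeg (le_natDegree_of_ne_zero (by rw [hScoeff]; norm_num))
      constructor
      · rw [natDegree_mul X_ne_zero hSne, natDegree_X, hSdeg']; omega
      · rw [leadingCoeff_mul, leadingCoeff_X, one_mul, leadingCoeff, hSdeg', hScoeff]

noncomputable def Gs (d : ℕ) (z : ℝ) : ℝ := ∑' n : ℕ, z ^ n * (n : ℝ) ^ d

lemma summable_Gs {z : ℝ} (hz : |z| < 1) (d : ℕ) :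
    Summable fun n : ℕ => z ^ n * (n : ℝ) ^ d := by
  have := summable_pow_mul_geometric_of_norm_lt_one (R := ℝ) d (by rwa [Real.norm_eq_abs])
  exact this.congr fun n => by ring

lemma summable_Gs_succ {z : ℝ} (hz : |z| < 1) (d : ℕ) :
    Summable fun n : ℕ => z ^ (n+1) * (n : ℝ) ^ d :=
  ((summable_Gs hz d).mul_left z).congr fun n => by ring

lemma one_sub_ne_zero {z : ℝ} (hz : |z| < 1) : 1 - z ≠ 0 := by
  have := abs_lt.mp hz; intro h; linarith

lemma Gs_eval (d : ℕ) : ∀ z : ℝ, |z| < 1 →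
    Gs d z = (aeval z) (EP d) / (1 - z) ^ (d + 1) := by
  induction d using Nat.strong_induction_on with
  | _ d IH =>
    match d with
    | 0 =>
      intro z hz
      have : Gs 0 z = ∑' n : ℕ, z ^ n := by
        unfold Gs; exact tsum_congr fun n => by ring
      rw [this, tsum_geometric_of_norm_lt_one (by rwa [Real.norm_eq_abs])]
      have hEP0 : EP 0 = 1 := by rw [EP]
      rw [hEP0, map_one, pow_one, inv_eq_one_div]
    | (e+1) =>
      intro z hz
      set d := e + 1 with hd
      have hsum := summable_Gs hz d
      have h1 : (1 - z) * Gs d z = ∑' n : ℕ, (z ^ n * (n:ℝ)^d - z ^ (n+1) * (n:ℝ)^d) := by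
        have hzmul : z * Gs d z = ∑' n : ℕ, z ^ (n+1) * (n:ℝ)^d := by
          unfold Gs
          rw [← tsum_mul_left]
          exact tsum_congr fun n => by ring
        rw [Summable.tsum_sub hsum (summable_Gs_succ hz d), ← hzmul]
        unfold Gs; ring
      have hsum' : Summable fun n : ℕ => z ^ (n+1) * ((n:ℝ)+1)^d :=
        ((summable_nat_add_iff 1).mpr hsum).congr fun n => by push_cast; ring
      have hf0 : ∑' n : ℕ, z ^ n * (n:ℝ)^d = ∑' n : ℕ, z ^ (n+1) * ((n:ℝ)+1)^d := by
        rw [Summable.tsum_eq_zero_add hsum]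
        rw [show z ^ 0 * ((0:ℕ):ℝ)^d = 0 by
          simp [zero_pow (show d ≠ 0 by omega)]]
        rw [zero_add]
        exact tsum_congr fun n => by push_cast; ring
      have h2 : ∑' n : ℕ, (z ^ n * (n:ℝ)^d - z ^ (n+1) * (n:ℝ)^d)
          = ∑' n : ℕ, z ^ (n+1) * (((n:ℝ)+1)^d - (n:ℝ)^d) := by
        rw [Summable.tsum_sub hsum (summable_Gs_succ hz d), hf0,
          ← Summable.tsum_sub hsum' (summable_Gs_succ hz d)]
        exact tsum_congr fun n => by ring
      have h3 : ∀ n : ℕ, ((n:ℝ)+1)^d - (n:ℝ)^d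
          = ∑ j ∈ range d, (n:ℝ)^j * (d.choose j : ℝ) := by
        intro n
        have := add_pow (R := ℝ) (n:ℝ) 1 d
        simp only [one_pow, mul_one] at this
        rw [this, Finset.sum_range_succ]
        simp
      have h4 : ∑' n : ℕ, z ^ (n+1) * (((n:ℝ)+1)^d - (n:ℝ)^d)
          = ∑ j ∈ range d, (d.choose j : ℝ) * (z * Gs j z) := by
        have : ∀ n : ℕ, z ^ (n+1) * (((n:ℝ)+1)^d - (n:ℝ)^d)
            = ∑ j ∈ range d, (d.choose j : ℝ) * (z * (z ^ n * (n:ℝ)^j)) := by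
          intro n; rw [h3, Finset.mul_sum]
          exact Finset.sum_congr rfl fun j _ => by ring
        rw [tsum_congr this, Summable.tsum_finsetSum]
        · refine Finset.sum_congr rfl fun j _ => ?_
          rw [tsum_mul_left, tsum_mul_left]; rfl
        · intro j _
          exact ((summable_Gs hz j).mul_left z).mul_left _
      have h5 : (1 - z) * Gs d z = ∑ j ∈ range d, (d.choose j : ℝ) * (z * Gs j z) := by
        rw [h1, h2, h4]
      have hne : (1 - z) ≠ 0 := one_sub_ne_zero hz
      have hGj : ∀ j ∈ range d, (d.choose j : ℝ) * (z * Gs j z)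
          = (d.choose j : ℝ) * z * (aeval z (EP j)) / (1 - z) ^ (j+1) := by
        intro j hj
        rw [IH j (by have := mem_range.mp hj; omega) z hz]; ring
      rw [Finset.sum_congr rfl hGj] at h5
      -- target formula
      have hEPd : (EP d : Polynomial ℤ) = X * ∑ j ∈ (range d).attach,
          ((d).choose j.1 : ℤ) • (EP j.1 * (1 - X) ^ (e - j.1)) := by
        rw [hd]; rw [EP]
      rw [eq_div_iff (pow_ne_zero _ hne)]
      have expand : (aeval z) (EP d)
          = z * ∑ j ∈ range d, (d.choose j : ℝ) * ((aeval z) (EP j) * (1 - z) ^ (e - j)) := by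
        rw [hEPd]
        simp only [map_mul, aeval_X, map_sum, map_smul, map_pow, map_sub, map_one,
          zsmul_eq_mul, Int.cast_natCast, Polynomial.aeval_natCast]
        congr 1
        rw [Finset.sum_attach (range d) (fun j => (d.choose j : ℝ) * ((aeval z) (EP j) * (1 - z) ^ (e - j)))]
      have hstep : Gs d z * (1 - z) ^ (d + 1) = ((1 - z) * Gs d z) * (1 - z) ^ d := by
        rw [pow_succ]; ring
      rw [hstep, h5, Finset.sum_mul, expand, Finset.mul_sum]
      refine Finset.sum_congr rfl fun j hj => ?_
      have hj' : j + 1 + (e - j) = d := by have := mem_range.mp hj; omega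
      have hsplit : (1 - z) ^ d = (1 - z) ^ (j+1) * (1 - z) ^ (e - j) := by
        rw [← pow_add, hj']
      rw [hsplit]
      have hx : (1 - z) ^ (j+1) ≠ 0 := pow_ne_zero _ hne
      field_simp

noncomputable def Lp (d : ℕ) (z : ℝ) : ℝ := ∑' n : ℕ, z ^ (n+1) * ((n:ℝ)+1) ^ d

lemma summable_Lp {z : ℝ} (hz : |z| < 1) (d : ℕ) :
    Summable fun n : ℕ => z ^ (n+1) * ((n:ℝ)+1) ^ d :=
  ((summable_nat_add_iff 1).mpr (summable_Gs hz d)).congr fun n => by push_cast; ring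

noncomputable def QL (d : ℕ) : Polynomial ℤ := if d = 0 then X else EP d

lemma X_dvd_EP {d : ℕ} (hd : d ≠ 0) : X ∣ EP d := by
  match d with
  | (e+1) => rw [EP]; exact Dvd.intro _ rfl

lemma QL_natDegree (d : ℕ) : (QL d).natDegree = max d 1 := by
  unfold QL; split
  · subst ‹d = 0›; simp [natDegree_X]
  · rw [(EP_deg_lead d).1]; omega

lemma QL_leadingCoeff (d : ℕ) : (QL d).leadingCoeff = 1 := by
  unfold QL; split
  · exact leadingCoeff_X
  · exact (EP_deg_lead d).2

lemma QL_ne_zero (d : ℕ) : QL d ≠ 0 := by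
  intro h
  have := QL_leadingCoeff d
  rw [h, leadingCoeff_zero] at this
  norm_num at this

lemma X_dvd_QL (d : ℕ) : X ∣ QL d := by
  unfold QL; split
  · exact dvd_rfl
  · exact X_dvd_EP ‹¬ d = 0›

lemma Lp_eval (d : ℕ) {z : ℝ} (hz : |z| < 1) :
    Lp d z = (aeval z) (QL d) / (1 - z) ^ (d + 1) := by
  have hsplit : Gs d z = ((0:ℝ))^d + Lp d z := by
    unfold Gs Lp
    rw [Summable.tsum_eq_zero_add (summable_Gs hz d)]
    congr 1
    · simp
    · exact tsum_congr fun n => by push_cast; ring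
  rcases Nat.eq_zero_or_pos d with hd | hd
  · subst hd
    have h0 : Lp 0 z = Gs 0 z - 1 := by rw [hsplit]; ring
    rw [h0, Gs_eval 0 z hz]
    have hEP0 : EP 0 = 1 := by rw [EP]
    have hQL0 : QL 0 = X := by unfold QL; simp
    rw [hEP0, hQL0, map_one, aeval_X]
    rw [eq_div_iff (pow_ne_zero _ (one_sub_ne_zero hz)), sub_mul, one_mul,
      div_mul_cancel₀ _ (pow_ne_zero _ (one_sub_ne_zero hz))]
    rw [zero_add, pow_one]
    ring
  · have h0 : Lp d z = Gs d z := by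
      rw [hsplit, zero_pow (by omega : d ≠ 0), zero_add]
    rw [h0, Gs_eval d z hz]
    unfold QL
    rw [if_neg (by omega)]

/-- term of the multiple polylogarithm written multiplicatively -/
noncomputable def T {r : ℕ} (k : Fin r → ℕ) (z : ℝ) (n : Fin r → ℕ) : ℝ :=
  z ^ (∑ i, (n i + 1)) * ∏ j, ((∑ i ∈ Iic j, (n i + 1) : ℕ) : ℝ) ^ (k j)

lemma Iic_last {n : ℕ} : (Iic (Fin.last n) : Finset (Fin (n+1))) = univ := by
  ext i; simp [Fin.le_last]

lemma T_fin_one (k : Fin 1 → ℕ) (z : ℝ) (n : Fin 1 → ℕ) :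
    T k z n = z ^ (n 0 + 1) * ((n 0 + 1 : ℕ) : ℝ) ^ (k 0) := by
  unfold T
  have h : (Iic (0 : Fin 1)) = univ := by
    ext i
    simp only [mem_Iic, mem_univ, iff_true, Fin.le_def]
    omega
  rw [Fin.sum_univ_one, Fin.prod_univ_one, h, Fin.sum_univ_one]

lemma Iic_castSucc_map {n : ℕ} (j : Fin n) :
    (Iic j.castSucc : Finset (Fin (n+1))) = (Iic j).map Fin.castSuccEmb := by
  ext i
  simp only [Finset.mem_Iic, Finset.mem_map]
  constructor
  · intro hi
    have hlt : i < Fin.last n := lt_of_le_of_lt hi (Fin.castSucc_lt_last j)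
    refine ⟨i.castPred hlt.ne, ?_, ?_⟩
    · rwa [← Fin.castSucc_le_castSucc_iff, Fin.castSucc_castPred]
    · simp [Fin.castSuccEmb, Fin.castSucc_castPred]
      rfl
  · rintro ⟨i', hi', rfl⟩
    exact Fin.castSucc_le_castSucc_iff.mpr hi'

lemma snoc_Iic_sum {r : ℕ} (p : Fin (r+1) → ℕ) (a : ℕ) (j : Fin (r+1)) :
    ∑ i ∈ Iic j.castSucc, ((Fin.snoc p a : Fin (r+2) → ℕ) i + 1)
      = ∑ i ∈ Iic j, (p i + 1) := by
  rw [Iic_castSucc_map, Finset.sum_map]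
  refine Finset.sum_congr rfl fun i _ => ?_
  have : (Fin.castSuccEmb i : Fin (r+2)) = i.castSucc := rfl
  rw [this, Fin.snoc_castSucc]

lemma snoc_total_sum {r : ℕ} (p : Fin (r+1) → ℕ) (a : ℕ) :
    ∑ i : Fin (r+2), ((Fin.snoc p a : Fin (r+2) → ℕ) i + 1)
      = (∑ i : Fin (r+1), (p i + 1)) + (a + 1) := by
  rw [Fin.sum_univ_castSucc]
  congr 1
  · exact Finset.sum_congr rfl fun i _ => by rw [Fin.snoc_castSucc]
  · rw [Fin.snoc_last]

lemma T_snoc {r : ℕ} (k : Fin (r+2) → ℕ) (z : ℝ) (p : Fin (r+1) → ℕ) (a : ℕ) :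
    T k z (Fin.snoc p a)
      = T (fun i => k i.castSucc) z p *
        (z ^ (a+1) *
          (((∑ i : Fin (r+1), (p i + 1) : ℕ) : ℝ) + ((a:ℝ)+1)) ^ (k (Fin.last (r+1)))) := by
  unfold T
  rw [snoc_total_sum, Fin.prod_univ_castSucc]
  have h1 : ∀ j : Fin (r+1),
      ((∑ i ∈ Iic j.castSucc, ((Fin.snoc p a : Fin (r+2) → ℕ) i + 1) : ℕ) : ℝ) ^ (k j.castSucc)
        = ((∑ i ∈ Iic j, (p i + 1) : ℕ) : ℝ) ^ (k j.castSucc) := by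
    intro j; rw [snoc_Iic_sum]
  rw [Finset.prod_congr rfl fun j _ => h1 j]
  have h2 : (Iic (Fin.last (r+1)) : Finset (Fin (r+2))) = univ := Iic_last
  have h3 : ∑ i ∈ (Iic (Fin.last (r+1)) : Finset (Fin (r+2))),
      ((Fin.snoc p a : Fin (r+2) → ℕ) i + 1) = (∑ i : Fin (r+1), (p i + 1)) + (a + 1) := by
    rw [h2]; exact snoc_total_sum p a
  rw [h3, pow_add]
  push_cast
  ring

lemma T_bump {r : ℕ} (k : Fin (r+1) → ℕ) (z : ℝ) (j : ℕ) (p : Fin (r+1) → ℕ) :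
    T (fun i => k i + if i = Fin.last r then j else 0) z p
      = T k z p * ((∑ i : Fin (r+1), (p i + 1) : ℕ) : ℝ) ^ j := by
  unfold T
  have h1 : ∀ i : Fin (r+1),
      ((∑ l ∈ Iic i, (p l + 1) : ℕ) : ℝ) ^ (k i + if i = Fin.last r then j else 0)
        = ((∑ l ∈ Iic i, (p l + 1) : ℕ) : ℝ) ^ (k i) *
          (if i = Fin.last r then (((∑ l ∈ Iic i, (p l + 1) : ℕ) : ℝ)) ^ j else 1) := by
    intro i
    rw [pow_add]
    congr 1
    split <;> simp
  rw [Finset.prod_congr rfl fun i _ => h1 i, Finset.prod_mul_distrib,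
    Finset.prod_ite_eq' univ (Fin.last r)
      (fun i => (((∑ l ∈ Iic i, (p l + 1) : ℕ) : ℝ)) ^ j)]
  rw [if_pos (mem_univ _), Iic_last]
  ring

lemma T_nonneg {r : ℕ} (k : Fin r → ℕ) {z : ℝ} (hz : 0 ≤ z) (n : Fin r → ℕ) :
    0 ≤ T k z n :=
  mul_nonneg (pow_nonneg hz _)
    (Finset.prod_nonneg fun j _ => pow_nonneg (Nat.cast_nonneg _) _)

lemma abs_T {r : ℕ} (k : Fin r → ℕ) (z : ℝ) (n : Fin r → ℕ) :
    |T k z n| = T k |z| n := by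
  unfold T
  rw [abs_mul, abs_pow]
  congr 1
  rw [abs_of_nonneg (Finset.prod_nonneg fun j _ => pow_nonneg (Nat.cast_nonneg _) _)]

lemma aux (r : ℕ) : ∀ k : Fin (r+1) → ℕ, ∃ P : Polynomial ℤ,
    P.natDegree = (if ∀ i, k i = 0 then r+1 else ∑ i, k i + (r+1) - 1) ∧
    0 < P.leadingCoeff ∧ Polynomial.X ^ (r+1) ∣ P ∧
    ((∀ i, k i = 0) → P = Polynomial.X ^ (r+1)) ∧
    ∀ z : ℝ, |z| < 1 → Summable (T k z) ∧
      ∑' n, T k z n = (aeval z) P / (1 - z) ^ (∑ i, k i + (r+1)) := by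
  induction r with
  | zero =>
    intro k
    have hall : (∀ i : Fin 1, k i = 0) ↔ k 0 = 0 := Fin.forall_fin_one
    have hsum1 : ∑ i, k i = k 0 := Fin.sum_univ_one k
    refine ⟨QL (k 0), ?_, ?_, ?_, ?_, ?_⟩
    · rw [QL_natDegree, hsum1]
      by_cases h : k 0 = 0
      · rw [if_pos (fun i => by rw [Fin.eq_zero i, h]), h]
        norm_num
      · rw [if_neg (fun hh => h (hall.mp hh))]
        omega
    · rw [QL_leadingCoeff]; norm_num
    · rw [pow_one]; exact X_dvd_QL _
    · intro h
      rw [hall] at h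
      rw [h, pow_one]
      unfold QL; simp
    · intro z hz
      set e : ℕ ≃ (Fin 1 → ℕ) := (Equiv.funUnique (Fin 1) ℕ).symm with he
      have hcomp : ∀ m : ℕ, T k z (e m) = z ^ (m+1) * ((m:ℝ)+1) ^ (k 0) := by
        intro m
        have : e m = fun _ : Fin 1 => m := rfl
        rw [this, T_fin_one]
        push_cast
        ring
      have hsum : Summable (T k z ∘ e) :=
        (summable_Lp hz (k 0)).congr fun m => (hcomp m).symm
      constructor
      · exact e.summable_iff.mp hsum
      · rw [← e.tsum_eq (T k z), tsum_congr hcomp]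
        have : ∑' m : ℕ, z ^ (m+1) * ((m:ℝ)+1) ^ (k 0) = Lp (k 0) z := rfl
        rw [this, Lp_eval (k 0) hz]
        norm_num [hsum1]
  | succ r IH =>
    intro k
    choose PP hPdeg hPlead hPdvd hPzero hPval using IH
    set kl := k (Fin.last (r+1)) with hkl
    set kc : Fin (r+1) → ℕ := fun i => k i.castSucc with hkc
    set bump : ℕ → (Fin (r+1) → ℕ) :=
      fun j i => kc i + if i = Fin.last r then j else 0 with hbump
    set S := ∑ i, kc i with hSsum
    have hKsum : ∑ i, k i = S + kl := by rw [Fin.sum_univ_castSucc]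
    have hbumpsum : ∀ j, ∑ i, bump j i = S + j := by
      intro j
      rw [Finset.sum_add_distrib,
        Finset.sum_ite_eq' univ (Fin.last r) (fun _ => j), if_pos (mem_univ _)]
    have hallzero : (∀ i : Fin (r+2), k i = 0) ↔ ((∀ i, kc i = 0) ∧ kl = 0) := by
      constructor
      · exact fun h => ⟨fun i => h _, h _⟩
      · rintro ⟨h1, h2⟩ i
        exact Fin.lastCases h2 h1 i
    have hbumpzero : ∀ j, (∀ i, bump j i = 0) ↔ ((∀ i, kc i = 0) ∧ j = 0) := by
      intro j
      constructor
      · intro h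
        have hlast := h (Fin.last r)
        simp only [hbump, if_pos rfl] at hlast
        refine ⟨fun i => ?_, Nat.eq_zero_of_add_eq_zero_left hlast⟩
        have hi := h i
        simp only [hbump] at hi
        exact Nat.eq_zero_of_add_eq_zero_right hi
      · rintro ⟨h1, rfl⟩ i
        simp [hbump, h1 i]
    set P : Polynomial ℤ :=
      ∑ j ∈ range (kl+1), (kl.choose j : ℤ) • (QL (kl - j) * PP (bump j)) with hP
    have hPPne : ∀ j, PP (bump j) ≠ 0 := by
      intro j h
      have := hPlead (bump j)
      rw [h, leadingCoeff_zero] at this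
      exact lt_irrefl 0 this
    have hAne : ∀ j, QL (kl - j) * PP (bump j) ≠ 0 :=
      fun j => mul_ne_zero (QL_ne_zero _) (hPPne j)
    have hAdeg : ∀ j, (QL (kl - j) * PP (bump j)).natDegree
        = max (kl - j) 1 + (PP (bump j)).natDegree := by
      intro j
      rw [natDegree_mul (QL_ne_zero _) (hPPne j), QL_natDegree]
    have hAlead : ∀ j, 0 < (QL (kl - j) * PP (bump j)).leadingCoeff := by
      intro j
      rw [leadingCoeff_mul, QL_leadingCoeff, one_mul]
      exact hPlead _
    have hTbump : ∀ (j : ℕ) (zz : ℝ) (p : Fin (r+1) → ℕ),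
        T (bump j) zz p = T kc zz p * ((∑ i : Fin (r+1), (p i + 1) : ℕ) : ℝ) ^ j :=
      fun j zz p => T_bump kc zz j p
    have hzpart : ∀ z : ℝ, |z| < 1 → Summable (T k z) ∧
        ∑' n, T k z n = (aeval z) P / (1 - z) ^ (∑ i, k i + (r+2)) := by
      intro z hz
      set e : (Fin (r+1) → ℕ) × ℕ ≃ (Fin (r+2) → ℕ) :=
        (Equiv.prodComm _ _).trans (Fin.snocEquiv fun _ => ℕ) with he
      have hecomp : ∀ (w : ℝ) (q : (Fin (r+1) → ℕ) × ℕ),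
          T k w (e q) = T k w (Fin.snoc q.1 q.2) := fun w q => rfl
      have hw : |(|z|)| < 1 := by rwa [abs_abs]
      have hw0 : (0:ℝ) ≤ |z| := abs_nonneg z
      have hM1 : ∀ p : Fin (r+1) → ℕ, 1 ≤ ∑ i : Fin (r+1), (p i + 1) := by
        intro p
        calc 1 ≤ p 0 + 1 := by omega
        _ ≤ ∑ i : Fin (r+1), (p i + 1) :=
            Finset.single_le_sum (f := fun i => p i + 1)
              (fun i _ => Nat.zero_le _) (mem_univ 0)
      have hbound : ∀ q : (Fin (r+1) → ℕ) × ℕ, T k |z| (Fin.snoc q.1 q.2)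
          ≤ (2:ℝ)^kl * (T (bump kl) |z| q.1 * (|z| ^ (q.2+1) * ((q.2:ℝ)+1) ^ kl)) := by
        rintro ⟨p, a⟩
        rw [T_snoc, ← hkl, hTbump kl |z| p]
        have hMR : (1:ℝ) ≤ ((∑ i : Fin (r+1), (p i + 1) : ℕ) : ℝ) := by
          exact_mod_cast hM1 p
        have h1 : (((∑ i : Fin (r+1), (p i + 1) : ℕ) : ℝ) + ((a:ℝ)+1))
            ≤ 2 * ((∑ i : Fin (r+1), (p i + 1) : ℕ) : ℝ) * ((a:ℝ)+1) := by
          nlinarith [Nat.cast_nonneg (α := ℝ) a]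
        have hMa : (((∑ i : Fin (r+1), (p i + 1) : ℕ) : ℝ) + ((a:ℝ)+1)) ^ kl
            ≤ (2:ℝ)^kl * (((∑ i : Fin (r+1), (p i + 1) : ℕ) : ℝ))^kl * ((a:ℝ)+1)^kl := by
          calc (((∑ i : Fin (r+1), (p i + 1) : ℕ) : ℝ) + ((a:ℝ)+1)) ^ kl
              ≤ (2 * ((∑ i : Fin (r+1), (p i + 1) : ℕ) : ℝ) * ((a:ℝ)+1)) ^ kl :=
                pow_le_pow_left₀ (by positivity) h1 kl
            _ = (2:ℝ)^kl * (((∑ i : Fin (r+1), (p i + 1) : ℕ) : ℝ))^kl * ((a:ℝ)+1)^kl := by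
                rw [mul_pow, mul_pow]
        have hT0 : 0 ≤ T kc |z| p := T_nonneg _ hw0 _
        have hw1 : 0 ≤ |z| ^ (a+1) := pow_nonneg hw0 _
        calc T kc |z| p * (|z| ^ (a+1) *
              (((∑ i : Fin (r+1), (p i + 1) : ℕ) : ℝ) + ((a:ℝ)+1)) ^ kl)
            ≤ T kc |z| p * (|z| ^ (a+1) *
              ((2:ℝ)^kl * (((∑ i : Fin (r+1), (p i + 1) : ℕ) : ℝ))^kl * ((a:ℝ)+1)^kl)) := by
              exact mul_le_mul_of_nonneg_left
                (mul_le_mul_of_nonneg_left hMa hw1) hT0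
          _ = (2:ℝ)^kl * (T kc |z| p * (((∑ i : Fin (r+1), (p i + 1) : ℕ) : ℝ))^kl *
              (|z| ^ (a+1) * ((a:ℝ)+1)^kl)) := by ring
      have hsum_bumpkl : Summable (T (bump kl) |z|) := (hPval (bump kl) |z| hw).1
      have hsum_g : Summable (fun a : ℕ => |z| ^ (a+1) * ((a:ℝ)+1) ^ kl) := summable_Lp hw kl
      have hsum_prod : Summable (fun q : (Fin (r+1) → ℕ) × ℕ =>
          (2:ℝ)^kl * (T (bump kl) |z| q.1 * (|z| ^ (q.2+1) * ((q.2:ℝ)+1) ^ kl))) :=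
        (Summable.mul_of_nonneg hsum_bumpkl hsum_g
          (fun p => T_nonneg _ hw0 p) (fun a => by positivity)).mul_left _
      have hsum_abs_e : Summable (fun q : (Fin (r+1) → ℕ) × ℕ =>
          T k |z| (Fin.snoc q.1 q.2)) :=
        Summable.of_nonneg_of_le (fun q => T_nonneg _ hw0 _) hbound hsum_prod
      have hsum_absT : Summable (T k |z|) :=
        e.summable_iff.mp (hsum_abs_e.congr fun q => (hecomp |z| q).symm)
      have hsumT : Summable (T k z) :=
        Summable.of_abs (hsum_absT.congr fun n => (abs_T k z n).symm)
      refine ⟨hsumT, ?_⟩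
      have hsumTe : Summable ((T k z) ∘ e) := e.summable_iff.mpr hsumT
      have hfib : ∀ p : Fin (r+1) → ℕ, Summable (fun a : ℕ => T k z (Fin.snoc p a)) ∧
          ∑' a : ℕ, T k z (Fin.snoc p a)
            = ∑ j ∈ range (kl+1), (kl.choose j : ℝ) * Lp (kl - j) z * T (bump j) z p := by
        intro p
        have hexp : ∀ a : ℕ, T k z (Fin.snoc p a)
            = ∑ j ∈ range (kl+1), (kl.choose j : ℝ) *
                (z ^ (a+1) * ((a:ℝ)+1) ^ (kl - j)) *
                (T kc z p * ((∑ i : Fin (r+1), (p i + 1) : ℕ) : ℝ) ^ j) := by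
          intro a
          rw [T_snoc, ← hkl]
          rw [add_pow (R := ℝ) ((∑ i : Fin (r+1), (p i + 1) : ℕ) : ℝ) ((a:ℝ)+1) kl]
          rw [Finset.mul_sum, Finset.mul_sum]
          exact Finset.sum_congr rfl fun j hj => by ring
        have hsummand : ∀ j ∈ range (kl+1), Summable (fun a : ℕ =>
            (kl.choose j : ℝ) * (z ^ (a+1) * ((a:ℝ)+1) ^ (kl - j)) *
            (T kc z p * ((∑ i : Fin (r+1), (p i + 1) : ℕ) : ℝ) ^ j)) := by
          intro j hj
          exact ((summable_Lp hz (kl - j)).mul_left _).mul_right _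
        constructor
        · exact (summable_sum hsummand).congr fun a => (hexp a).symm
        · rw [tsum_congr hexp, Summable.tsum_finsetSum hsummand]
          refine Finset.sum_congr rfl fun j hj => ?_
          rw [tsum_mul_right, tsum_mul_left, hTbump j z p]
          unfold Lp
          ring
      have h1 : ∑' n : Fin (r+2) → ℕ, T k z n
          = ∑' (p : Fin (r+1) → ℕ) (a : ℕ), T k z (Fin.snoc p a) := by
        rw [← e.tsum_eq (T k z), tsum_congr (hecomp z)]
        exact Summable.tsum_prod' (hsumTe.congr fun q => (hecomp z q)) (fun p => (hfib p).1)
      rw [h1, tsum_congr (fun p => (hfib p).2)]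
      rw [Summable.tsum_finsetSum (fun j hj => ((hPval (bump j) z hz).1.mul_left _))]
      have hterm : ∀ j ∈ range (kl+1),
          ∑' p : Fin (r+1) → ℕ, (kl.choose j : ℝ) * Lp (kl - j) z * T (bump j) z p
            = (aeval z) ((kl.choose j : ℤ) • (QL (kl - j) * PP (bump j)))
                / (1 - z) ^ (∑ i, k i + (r+2)) := by
        intro j hj
        have hj' : j ≤ kl := Nat.lt_succ_iff.mp (mem_range.mp hj)
        rw [tsum_mul_left, (hPval (bump j) z hz).2, hbumpsum j, Lp_eval (kl - j) hz]
        rw [zsmul_eq_mul, map_mul, map_intCast, Int.cast_natCast, map_mul]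
        have hEe : (kl - j + 1) + (S + j + (r+1)) = ∑ i, k i + (r+2) := by
          rw [hKsum]; omega
        rw [← hEe, pow_add]
        have hx1 : (1 - z) ^ (kl - j + 1) ≠ 0 := pow_ne_zero _ (one_sub_ne_zero hz)
        have hx2 : (1 - z) ^ (S + j + (r+1)) ≠ 0 := pow_ne_zero _ (one_sub_ne_zero hz)
        generalize 1 - z = w at *
        ring
      rw [Finset.sum_congr rfl hterm, ← Finset.sum_div]
      congr 1
      rw [hP, map_sum]
    by_cases hall : ∀ i : Fin (r+2), k i = 0
    · have hkl0 : kl = 0 := (hallzero.mp hall).2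
      have hkc0 : ∀ i, kc i = 0 := (hallzero.mp hall).1
      have hbump0 : ∀ i, bump 0 i = 0 := fun i => by simp [hbump, hkc0 i]
      have hPX : P = X^(r+2) := by
        rw [hP, hkl0, Finset.sum_range_one, hPzero (bump 0) hbump0]
        have hQ : QL (0 - 0) = X := by unfold QL; simp
        rw [hQ]
        simp only [Nat.choose_self, Nat.cast_one, one_smul]
        rw [← pow_succ']
      refine ⟨P, ?_, ?_, ?_, ?_, hzpart⟩
      · rw [if_pos hall, hPX, natDegree_X_pow]
      · rw [hPX, leadingCoeff_X_pow]; norm_num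
      · rw [hPX]
      · intro _; exact hPX
    · have hDval : (if ∀ i : Fin (r+2), k i = 0 then r+1+1
          else ∑ i, k i + (r+1+1) - 1) = S + kl + (r+1) := by
        rw [if_neg hall, hKsum]; omega
      have hdegle : ∀ j ∈ range (kl+1),
          (QL (kl - j) * PP (bump j)).natDegree ≤ S + kl + (r+1) := by
        intro j hj
        have hj' : j ≤ kl := Nat.lt_succ_iff.mp (mem_range.mp hj)
        rw [hAdeg j, hPdeg (bump j), hbumpsum j]
        by_cases hbz : ∀ i, bump j i = 0
        · rw [if_pos hbz]
          obtain ⟨hkc0, hj0⟩ := (hbumpzero j).mp hbz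
          have hS0 : S = 0 := Finset.sum_eq_zero fun i _ => hkc0 i
          have hklpos : kl ≠ 0 := fun h => hall (hallzero.mpr ⟨hkc0, h⟩)
          subst hj0
          rw [Nat.sub_zero, hS0, max_eq_left (by omega)]
          omega
        · rw [if_neg hbz]
          rcases max_cases (kl - j) 1 with ⟨h1, h2⟩ | ⟨h1, h2⟩ <;> rw [h1] <;> omega
      have hdegkl : (QL (kl - kl) * PP (bump kl)).natDegree = S + kl + (r+1) := by
        rw [hAdeg kl, hPdeg (bump kl), hbumpsum kl]
        have hbz : ¬ ∀ i, bump kl i = 0 := by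
          intro h
          obtain ⟨hkc0, hkl0⟩ := (hbumpzero kl).mp h
          exact hall (hallzero.mpr ⟨hkc0, hkl0⟩)
        rw [if_neg hbz, Nat.sub_self, max_eq_right (by omega)]
        omega
      have hcoeffge : ∀ j ∈ range (kl+1),
          0 ≤ (QL (kl - j) * PP (bump j)).coeff (S + kl + (r+1)) := by
        intro j hj
        rcases lt_or_eq_of_le (hdegle j hj) with h | h
        · rw [coeff_eq_zero_of_natDegree_lt h]
        · have := coeff_natDegree (p := QL (kl - j) * PP (bump j))
          rw [h] at this
          rw [this]
          exact (hAlead j).le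
      have hcoeffkl : 0 < (QL (kl - kl) * PP (bump kl)).coeff (S + kl + (r+1)) := by
        have := coeff_natDegree (p := QL (kl - kl) * PP (bump kl))
        rw [hdegkl] at this
        rw [this]
        exact hAlead kl
      have hcoeffP : P.coeff (S + kl + (r+1))
          = ∑ j ∈ range (kl+1), (kl.choose j : ℤ) *
              (QL (kl - j) * PP (bump j)).coeff (S + kl + (r+1)) := by
        rw [hP, finset_sum_coeff]
        exact Finset.sum_congr rfl fun j _ => by rw [coeff_smul, smul_eq_mul]
      have hcoeffpos : 0 < P.coeff (S + kl + (r+1)) := by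
        rw [hcoeffP]
        apply Finset.sum_pos'
        · intro j hj
          exact mul_nonneg (Int.natCast_nonneg _) (hcoeffge j hj)
        · refine ⟨kl, Finset.self_mem_range_succ kl, ?_⟩
          exact mul_pos (by exact_mod_cast Nat.choose_pos le_rfl) hcoeffkl
      have hdegP_le : P.natDegree ≤ S + kl + (r+1) := by
        rw [hP]
        exact natDegree_sum_le_of_forall_le _ _ fun j hj =>
          (natDegree_smul_le _ _).trans (hdegle j hj)
      have hdegP : P.natDegree = S + kl + (r+1) :=
        le_antisymm hdegP_le (le_natDegree_of_ne_zero hcoeffpos.ne')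
      refine ⟨P, ?_, ?_, ?_, ?_, hzpart⟩
      · rw [hDval, hdegP]
      · rw [leadingCoeff, hdegP]
        exact hcoeffpos
      · rw [hP]
        apply Finset.dvd_sum
        intro j hj
        rw [zsmul_eq_mul]
        have hxx : (X : Polynomial ℤ)^(r+1+1) = X * X^(r+1) := pow_succ' X (r+1)
        rw [hxx]
        exact Dvd.dvd.mul_left (mul_dvd_mul (X_dvd_QL (kl - j)) (hPdvd (bump j))) _
      · intro h; exact absurd h hall

theorem stmt5 (r : ℕ) (hr : 0 < r) (k : Fin r → ℕ) :
    ∃ P : Polynomial ℤ,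
      (∀ z : ℝ, |z| < 1 →
        MLi (fun i => -(k i : ℤ)) z =
          (Polynomial.aeval z) P / (1 - z) ^ (∑ i, k i + r)) ∧
      P.natDegree = (if ∀ i, k i = 0 then r else ∑ i, k i + r - 1) ∧
      (Polynomial.X ^ r ∣ P) ∧
      ((∀ i, k i = 0) → P = Polynomial.X ^ r) := by
  obtain ⟨r', rfl⟩ := Nat.exists_eq_succ_of_ne_zero hr.ne'
  obtain ⟨P, hdeg, hlead, hdvd, hzero, hval⟩ := aux r' k
  refine ⟨P, ?_, hdeg, hdvd, hzero⟩
  intro z hz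
  have hMT : MLi (fun i => -(k i : ℤ)) z = ∑' n, T k z n := by
    unfold MLi T
    refine tsum_congr fun n => ?_
    have h1 : ∀ j : Fin (r'+1), ((∑ i ∈ Iic j, (n i + 1) : ℕ) : ℝ) ^ (-(k j : ℤ))
        = (((∑ i ∈ Iic j, (n i + 1) : ℕ) : ℝ) ^ (k j))⁻¹ := by
      intro j; rw [zpow_neg, zpow_natCast]
    rw [Finset.prod_congr rfl fun j _ => h1 j, Finset.prod_inv_distrib, div_inv_eq_mul]
  rw [hMT]
  exact (hval z hz).2
end

section
/- Integral representation of multiple zeta-star values: for positive integers k_1,…,k_r with k_r ≥ 2, ζ*(k_1,…,k_r) = (1/∏_{j=1}^r Γ(k_j)) ∫_0^∞⋯∫_0^∞ x_1^{k_1−1}⋯x_r^{k_r−1} · (1/(e^{x_1+⋯+x_r}−1)) · ∏_{j=2}^{r} e^{x_j+⋯+x_r}/(e^{x_j+⋯+x_r}−1) dx_1⋯dx_r. -/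
open Real Finset MeasureTheory


section helpers

variable {M : Type*} [AddCommMonoid M]

lemma sum_Iic_zero' {r : ℕ} (f : Fin (r + 1) → M) :
    ∑ i ∈ Finset.Iic (0 : Fin (r + 1)), f i = f 0 := by
  have : Finset.Iic (0 : Fin (r + 1)) = {0} := by
    ext i; simp [Fin.le_zero_iff]
  rw [this, Finset.sum_singleton]

lemma sum_Iic_succ' {r : ℕ} (f : Fin (r + 2) → M) (j : Fin (r + 1)) :
    ∑ i ∈ Finset.Iic j.succ, f i = f 0 + ∑ i ∈ Finset.Iic j, f i.succ := by
  have e1 : (Finset.Iic j.succ) = Finset.univ.filter (· ≤ j.succ) := by ext i; simp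
  have e2 : (Finset.Iic j) = Finset.univ.filter (· ≤ j) := by ext i; simp
  rw [e1, e2, Finset.sum_filter, Finset.sum_filter, Fin.sum_univ_succ]
  simp [Fin.succ_le_succ_iff, Fin.zero_le]

lemma sum_Iic_comm' {r : ℕ} (F : Fin r → Fin r → M) :
    ∑ j, ∑ i ∈ Finset.Iic j, F i j = ∑ i, ∑ j ∈ Finset.Ici i, F i j := by
  have e1 : ∀ j : Fin r, Finset.Iic j = Finset.univ.filter (· ≤ j) := fun j => by ext i; simp
  have e2 : ∀ i : Fin r, Finset.Ici i = Finset.univ.filter (i ≤ ·) := fun i => by ext j; simp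
  simp_rw [e1, e2, Finset.sum_filter]
  exact Finset.sum_comm

end helpers

lemma tsum_prod_pi : ∀ (r : ℕ) (a : Fin r → ℕ → ℝ), (∀ j n, 0 ≤ a j n) → (∀ j, Summable (a j)) →
    Summable (fun n : Fin r → ℕ => ∏ j, a j (n j)) ∧
      (∑' n : Fin r → ℕ, ∏ j, a j (n j)) = ∏ j, ∑' m, a j m := by
  intro r
  induction r with
  | zero =>
    intro a _ _
    refine ⟨.of_finite, ?_⟩
    rw [tsum_eq_single (fun i => i.elim0) (fun b hb => absurd (Subsingleton.elim b _) hb)]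
    simp
  | succ r ih =>
    intro a ha hs
    have h2 := ih (fun j => a j.succ) (fun j n => ha _ _) (fun j => hs _)
    set e : (ℕ × (Fin r → ℕ)) ≃ (Fin (r + 1) → ℕ) := Fin.consEquiv (fun _ => ℕ) with he
    have hprod : ∀ p : ℕ × (Fin r → ℕ),
        (∏ j, a j (e p j)) = a 0 p.1 * ∏ j : Fin r, a j.succ (p.2 j) := by
      intro p
      have hep : e p = Fin.cons (α := fun _ => ℕ) p.1 p.2 := rfl
      simp only [hep, Fin.prod_univ_succ, Fin.cons_zero, Fin.cons_succ]
    have hsum2 : Summable (fun p : ℕ × (Fin r → ℕ) =>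
        a 0 p.1 * ∏ j : Fin r, a j.succ (p.2 j)) :=
      Summable.mul_of_nonneg (f := a 0)
        (g := fun n : Fin r → ℕ => ∏ j : Fin r, a j.succ (n j))
        (hs 0) h2.1 (fun n => ha 0 n) (fun n => Finset.prod_nonneg fun j _ => ha _ _)
    have hsum : Summable (fun n : Fin (r + 1) → ℕ => ∏ j, a j (n j)) := by
      rw [← e.summable_iff]
      refine hsum2.congr fun p => ?_
      simp only [Function.comp]
      rw [hprod]
    refine ⟨hsum, ?_⟩
    rw [← e.tsum_eq]
    calc (∑' p : ℕ × (Fin r → ℕ), ∏ j, a j (e p j))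
        = ∑' p : ℕ × (Fin r → ℕ), a 0 p.1 * ∏ j : Fin r, a j.succ (p.2 j) :=
          tsum_congr hprod
      _ = ∑' (m : ℕ), ∑' (p : Fin r → ℕ), a 0 m * ∏ j : Fin r, a j.succ (p j) :=
          Summable.tsum_prod' hsum2 (fun b => (h2.1.mul_left (a 0 b)))
      _ = ∑' (m : ℕ), a 0 m * ∑' (p : Fin r → ℕ), ∏ j : Fin r, a j.succ (p j) := by
          simp_rw [tsum_mul_left]
      _ = (∑' m, a 0 m) * ∑' (p : Fin r → ℕ), ∏ j : Fin r, a j.succ (p j) :=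
          tsum_mul_right
      _ = ∏ j, ∑' m, a j m := by
          rw [h2.2, Fin.prod_univ_succ]


lemma oneDim (c : ℕ) (hc : 1 ≤ c) (k : ℕ) (hk : 2 ≤ k) :
    Summable (fun a : ℕ => (1 : ℝ) / ((a + c : ℕ) : ℝ) ^ k) ∧
      (∑' a : ℕ, (1 : ℝ) / ((a + c : ℕ) : ℝ) ^ k) ≤ 2 / c := by
  have h1 : ∀ a : ℕ, (1 : ℝ) ≤ ((a + c : ℕ) : ℝ) := by
    intro a
    have : 1 ≤ a + c := by omega
    exact_mod_cast this
  have hS : Summable (fun a : ℕ => (1 : ℝ) / ((a + c : ℕ) : ℝ) ^ k) := by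
    have := (summable_nat_add_iff (f := fun n : ℕ => (1 : ℝ) / (n : ℝ) ^ k) c).mpr
      (summable_one_div_nat_pow.mpr (by omega))
    exact this.congr fun a => by push_cast; ring
  refine ⟨hS, ?_⟩
  set u : ℕ → ℝ := fun a => (1 : ℝ) / ((a + c : ℕ) : ℝ) with hu
  have hb : ∀ a : ℕ, (1 : ℝ) / ((a + c : ℕ) : ℝ) ^ k ≤ 2 * (u a - u (a + 1)) := by
    intro a
    have h1t := h1 a
    have h0t : (0 : ℝ) < ((a + c : ℕ) : ℝ) := by linarith
    have hsucc : ((a + 1 + c : ℕ) : ℝ) = ((a + c : ℕ) : ℝ) + 1 := by push_cast; ring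
    have e1 : u a - u (a + 1) = 1 / (((a + c : ℕ) : ℝ) * (((a + c : ℕ) : ℝ) + 1)) := by
      rw [hu]; simp only [hsucc]; rw [div_sub_div _ _ (by positivity) (by positivity)]
      field_simp
      ring
    rw [e1]
    have e2 : (1 : ℝ) / ((a + c : ℕ) : ℝ) ^ k ≤ 1 / ((a + c : ℕ) : ℝ) ^ 2 := by
      apply one_div_le_one_div_of_le (by positivity)
      exact pow_le_pow_right₀ h1t hk
    refine e2.trans ?_
    rw [mul_one_div, div_le_div_iff₀ (by positivity) (by positivity)]
    nlinarith
  refine Summable.tsum_le_of_sum_le hS ?_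
  intro s
  obtain ⟨N, hN⟩ := s.exists_nat_subset_range
  have hcpos : (0 : ℝ) < (c : ℝ) := by exact_mod_cast hc
  calc ∑ a ∈ s, (1 : ℝ) / ((a + c : ℕ) : ℝ) ^ k
      ≤ ∑ a ∈ Finset.range N, (1 : ℝ) / ((a + c : ℕ) : ℝ) ^ k :=
        Finset.sum_le_sum_of_subset_of_nonneg hN (fun i _ _ => by positivity)
    _ ≤ ∑ a ∈ Finset.range N, 2 * (u a - u (a + 1)) := Finset.sum_le_sum fun a _ => hb a
    _ = 2 * (u 0 - u N) := by rw [← Finset.mul_sum, Finset.sum_range_sub' u]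
    _ ≤ 2 * u 0 := by
        have : 0 ≤ u N := by rw [hu]; positivity
        nlinarith
    _ = 2 / c := by rw [hu]; norm_num [mul_one_div, div_eq_mul_inv]

lemma mzsv_summable_aux : ∀ (r : ℕ) (k : Fin (r + 1) → ℕ), (∀ j, 1 ≤ k j) →
    2 ≤ k (Fin.last r) → ∀ c : ℕ, 1 ≤ c →
    Summable (fun n : Fin (r + 1) → ℕ =>
      ∏ j, (1 : ℝ) / (((∑ i ∈ Finset.Iic j, n i) + c : ℕ) : ℝ) ^ (k j)) ∧
    (∑' n : Fin (r + 1) → ℕ,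
        ∏ j, (1 : ℝ) / (((∑ i ∈ Finset.Iic j, n i) + c : ℕ) : ℝ) ^ (k j)) ≤ 2 ^ (r + 1) / c := by
  intro r
  induction r with
  | zero =>
    intro k hk1 hk2 c hc
    have hone := oneDim c hc (k 0) hk2
    set e : ℕ ≃ (Fin 1 → ℕ) := (Equiv.funUnique (Fin 1) ℕ).symm with he
    have hfe : ∀ a : ℕ,
        (∏ j, (1 : ℝ) / (((∑ i ∈ Finset.Iic j, (e a) i) + c : ℕ) : ℝ) ^ (k j))
          = (1 : ℝ) / ((a + c : ℕ) : ℝ) ^ (k 0) := by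
      intro a
      rw [Fin.prod_univ_one, sum_Iic_zero']
      rfl
    have hsum : Summable (fun n : Fin 1 → ℕ =>
        ∏ j, (1 : ℝ) / (((∑ i ∈ Finset.Iic j, n i) + c : ℕ) : ℝ) ^ (k j)) := by
      rw [← e.summable_iff]
      exact hone.1.congr fun a => (hfe a).symm
    refine ⟨hsum, ?_⟩
    rw [← e.tsum_eq, tsum_congr hfe]
    exact hone.2.trans (by rw [pow_one])
  | succ r ih =>
    intro k hk1 hk2 c hc
    set e : (ℕ × (Fin (r + 1) → ℕ)) ≃ (Fin (r + 2) → ℕ) := Fin.consEquiv (fun _ => ℕ) with he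
    set G : ℕ → (Fin (r + 1) → ℕ) → ℝ := fun a n' =>
      ((1 : ℝ) / ((a + c : ℕ) : ℝ) ^ (k 0)) *
        ∏ j : Fin (r + 1),
          (1 : ℝ) / (((∑ i ∈ Finset.Iic j, n' i) + (a + c) : ℕ) : ℝ) ^ (k j.succ) with hG
    have hfe : ∀ p : ℕ × (Fin (r + 1) → ℕ),
        (∏ j, (1 : ℝ) / (((∑ i ∈ Finset.Iic j, (e p) i) + c : ℕ) : ℝ) ^ (k j)) = G p.1 p.2 := by
      intro p
      have hep : e p = Fin.cons (α := fun _ => ℕ) p.1 p.2 := rfl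
      rw [hG, hep, Fin.prod_univ_succ]
      have h0 : (∑ i ∈ Finset.Iic (0 : Fin (r + 2)), (Fin.cons (α := fun _ => ℕ) p.1 p.2) i)
          = p.1 := by
        rw [sum_Iic_zero']; simp
      have hsucc : ∀ j : Fin (r + 1),
          (∑ i ∈ Finset.Iic j.succ, (Fin.cons (α := fun _ => ℕ) p.1 p.2) i) + c
            = (∑ i ∈ Finset.Iic j, p.2 i) + (p.1 + c) := by
        intro j
        rw [sum_Iic_succ']
        simp only [Fin.cons_zero, Fin.cons_succ]
        omega
      rw [h0]
      refine congrArg₂ (· * ·) rfl (Finset.prod_congr rfl fun j _ => ?_)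
      rw [hsucc j]
    have hk1' : ∀ j : Fin (r + 1), 1 ≤ (fun j : Fin (r + 1) => k j.succ) j := fun j => hk1 _
    have hk2' : 2 ≤ (fun j : Fin (r + 1) => k j.succ) (Fin.last r) := by
      simp only [Fin.succ_last]; exact hk2
    have hIH := fun (a : ℕ) => ih (fun j => k j.succ) hk1' hk2' (a + c) (by omega)
    have hones := oneDim c hc 2 le_rfl
    set B : ℕ → ℝ := fun a => (2 : ℝ) ^ (r + 1) * ((1 : ℝ) / ((a + c : ℕ) : ℝ) ^ 2) with hB
    have hBsum : Summable B := hones.1.mul_left _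
    have hslice : ∀ a : ℕ, Summable (fun n' : Fin (r + 1) → ℕ => G a n') := fun a =>
      Summable.mul_left ((1 : ℝ) / ((a + c : ℕ) : ℝ) ^ (k 0)) (hIH a).1
    have hinner_nonneg : ∀ (a : ℕ) (n' : Fin (r + 1) → ℕ),
        (0:ℝ) ≤ ∏ j : Fin (r + 1),
          (1 : ℝ) / (((∑ i ∈ Finset.Iic j, n' i) + (a + c) : ℕ) : ℝ) ^ (k j.succ) := by
      intro a n'; positivity
    have hslice_le : ∀ a : ℕ, (∑' n' : Fin (r + 1) → ℕ, G a n') ≤ B a := by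
      intro a
      have h1t : (1 : ℝ) ≤ ((a + c : ℕ) : ℝ) := by
        have : 1 ≤ a + c := by omega
        exact_mod_cast this
      have h0t : (0 : ℝ) < ((a + c : ℕ) : ℝ) := by linarith
      rw [hG]
      rw [tsum_mul_left]
      have h1 : (1 : ℝ) / ((a + c : ℕ) : ℝ) ^ (k 0) ≤ 1 / ((a + c : ℕ) : ℝ) := by
        apply one_div_le_one_div_of_le h0t
        calc ((a + c : ℕ) : ℝ) = ((a + c : ℕ) : ℝ) ^ 1 := (pow_one _).symm
          _ ≤ ((a + c : ℕ) : ℝ) ^ (k 0) := pow_le_pow_right₀ h1t (hk1 0)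
      have h3 := (hIH a).2
      have h2 : (0:ℝ) ≤ ∑' n' : Fin (r + 1) → ℕ,
          ∏ j : Fin (r + 1),
            (1 : ℝ) / (((∑ i ∈ Finset.Iic j, n' i) + (a + c) : ℕ) : ℝ) ^ (k j.succ) :=
        tsum_nonneg (fun n' => hinner_nonneg a n')
      calc ((1 : ℝ) / ((a + c : ℕ) : ℝ) ^ (k 0)) * _ ≤
          (1 / ((a + c : ℕ) : ℝ)) * ((2:ℝ) ^ (r + 1) / ((a + c : ℕ) : ℝ)) :=
            mul_le_mul h1 h3 h2 (by positivity)
        _ = B a := by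
            rw [hB]
            have hne : ((a + c : ℕ) : ℝ) ≠ 0 := by positivity
            field_simp
    have hG_nonneg : ∀ p : ℕ × (Fin (r + 1) → ℕ), 0 ≤ G p.1 p.2 := by
      intro p; rw [hG]; positivity
    have hcol : Summable (fun a : ℕ => ∑' n' : Fin (r + 1) → ℕ, G a n') :=
      Summable.of_nonneg_of_le (fun a => tsum_nonneg fun n' => hG_nonneg (a, n'))
        hslice_le hBsum
    have hGsum : Summable (fun p : ℕ × (Fin (r + 1) → ℕ) => G p.1 p.2) :=
      (summable_prod_of_nonneg (fun p => hG_nonneg p)).mpr ⟨hslice, hcol⟩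
    have hsum : Summable (fun n : Fin (r + 2) → ℕ =>
        ∏ j, (1 : ℝ) / (((∑ i ∈ Finset.Iic j, n i) + c : ℕ) : ℝ) ^ (k j)) := by
      rw [← e.summable_iff]
      exact hGsum.congr fun p => (hfe p).symm
    refine ⟨hsum, ?_⟩
    have hBtsum : (∑' a, B a) ≤ 2 ^ (r + 2) / c := by
      rw [hB, tsum_mul_left]
      calc (2 : ℝ) ^ (r + 1) * (∑' a, (1 : ℝ) / ((a + c : ℕ) : ℝ) ^ 2)
          ≤ (2 : ℝ) ^ (r + 1) * (2 / c) :=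
            mul_le_mul_of_nonneg_left hones.2 (by positivity)
        _ = 2 ^ (r + 2) / c := by rw [pow_succ]; ring
    calc (∑' n : Fin (r + 2) → ℕ,
          ∏ j, (1 : ℝ) / (((∑ i ∈ Finset.Iic j, n i) + c : ℕ) : ℝ) ^ (k j))
        = ∑' p : ℕ × (Fin (r + 1) → ℕ), G p.1 p.2 := by
          rw [← e.tsum_eq, tsum_congr hfe]
      _ = ∑' a : ℕ, ∑' n' : Fin (r + 1) → ℕ, G a n' := Summable.tsum_prod' hGsum hslice
      _ ≤ ∑' a, B a := Summable.tsum_le_tsum hslice_le hcol hBsum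
      _ ≤ 2 ^ (r + 2) / c := hBtsum


lemma integrableOn_pow_mul_exp (k m : ℕ) (hm : 1 ≤ m) :
    IntegrableOn (fun x : ℝ => x ^ (k - 1) * Real.exp (-(m : ℝ) * x)) (Set.Ioi 0) := by
  have h := integrableOn_rpow_mul_exp_neg_mul_rpow
    (p := 1) (s := ((k - 1 : ℕ) : ℝ)) (b := (m : ℝ))
    (lt_of_lt_of_le (by norm_num) (Nat.cast_nonneg _)) (by norm_num) (by exact_mod_cast hm)
  refine h.congr_fun (fun x hx => ?_) measurableSet_Ioi
  beta_reduce
  rw [Real.rpow_natCast, Real.rpow_one]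

lemma integral_pow_mul_exp (k m : ℕ) (hk : 1 ≤ k) (hm : 1 ≤ m) :
    ∫ x in Set.Ioi (0 : ℝ), x ^ (k - 1) * Real.exp (-(m : ℝ) * x)
      = Real.Gamma k / (m : ℝ) ^ k := by
  have hkpos : (0 : ℝ) < (k : ℝ) := by exact_mod_cast hk
  have hmpos : (0 : ℝ) < (m : ℝ) := by exact_mod_cast hm
  have h := Real.integral_rpow_mul_exp_neg_mul_Ioi (a := (k : ℝ)) (r := (m : ℝ)) hkpos hmpos
  have hcast : ((k : ℝ) - 1) = ((k - 1 : ℕ) : ℝ) := by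
    push_cast [Nat.cast_sub hk]; ring
  rw [hcast] at h
  have heq : ∀ x ∈ Set.Ioi (0:ℝ),
      x ^ ((k - 1 : ℕ) : ℝ) * Real.exp (-((m : ℝ) * x))
        = x ^ (k - 1) * Real.exp (-(m : ℝ) * x) := by
    intro x _
    rw [Real.rpow_natCast, neg_mul]
  rw [setIntegral_congr_fun measurableSet_Ioi heq] at h
  rw [h, Real.rpow_natCast, one_div, inv_pow, ← one_div, one_div_mul_eq_div]

/-- The multiple zeta-star value
`ζ*(k_1,…,k_r) = ∑_{1 ≤ m_1 ≤ ⋯ ≤ m_r} 1/(m_1^{k_1} ⋯ m_r^{k_r})`,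
parametrized by increments so that `m_j = (∑_{i ≤ j} n_i) + 1`. -/
noncomputable def MZSV {r : ℕ} (k : Fin r → ℕ) : ℝ :=
  ∑' n : Fin r → ℕ,
    1 / ∏ j, (((∑ i ∈ Finset.Iic j, n i) + 1 : ℕ) : ℝ) ^ (k j)

/-- Integral representation of multiple zeta-star values. -/
theorem stmt12 (r : ℕ) (hr : 0 < r) (k : Fin r → ℕ) (hk : ∀ j, 1 ≤ k j)
    (hlast : 2 ≤ k ⟨r - 1, by omega⟩) :
    MZSV k =
      (1 / ∏ j, Real.Gamma (k j)) *
        ∫ x in Set.univ.pi (fun _ : Fin r => Set.Ioi (0 : ℝ)),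
          (∏ j, x j ^ (k j - 1)) * (1 / (Real.exp (∑ i, x i) - 1)) *
            ∏ j ∈ Finset.univ.erase (⟨0, hr⟩ : Fin r),
              Real.exp (∑ i ∈ Finset.Ici j, x i) /
                (Real.exp (∑ i ∈ Finset.Ici j, x i) - 1) := by
  obtain ⟨r', rfl⟩ : ∃ r', r = r' + 1 := ⟨r - 1, by omega⟩
  have hlast' : 2 ≤ k (Fin.last r') := hlast
  simp only [show (⟨0, hr⟩ : Fin (r' + 1)) = 0 from rfl]
  have hΓpos : ∀ j, 0 < Real.Gamma (k j) := fun j =>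
    Real.Gamma_pos_of_pos (by exact_mod_cast hk j)
  have hΓprod_pos : 0 < ∏ j, Real.Gamma (k j) := Finset.prod_pos fun j _ => hΓpos j
  set S : Set (Fin (r' + 1) → ℝ) := Set.univ.pi fun _ => Set.Ioi (0 : ℝ) with hSdef
  have hS : MeasurableSet S := MeasurableSet.univ_pi fun _ => measurableSet_Ioi
  set g : (Fin (r' + 1) → ℕ) → (Fin (r' + 1) → ℝ) → ℝ := fun n x =>
    ∏ j, (x j ^ (k j - 1) *
      Real.exp (-((((∑ i ∈ Finset.Iic j, n i) + 1 : ℕ) : ℝ)) * x j)) with hg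
  have hm1 : ∀ (n : Fin (r' + 1) → ℕ) (j : Fin (r' + 1)),
      1 ≤ (∑ i ∈ Finset.Iic j, n i) + 1 := fun n j => Nat.le_add_left 1 _
  obtain ⟨hsum0, -⟩ := mzsv_summable_aux r' k hk hlast' 1 le_rfl
  have hIci0 : Finset.Ici (0 : Fin (r' + 1)) = Finset.univ := by
    ext i; simp [Fin.zero_le]
  -- indicator identity
  have hindic : ∀ n : Fin (r' + 1) → ℕ,
      (fun x : Fin (r' + 1) → ℝ => ∏ j,
        (Set.Ioi (0 : ℝ)).indicator (fun t => t ^ (k j - 1) *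
          Real.exp (-((((∑ i ∈ Finset.Iic j, n i) + 1 : ℕ) : ℝ)) * t)) (x j))
      = S.indicator (g n) := by
    intro n
    funext x
    by_cases hx : x ∈ S
    · rw [Set.indicator_of_mem hx]
      have hxj : ∀ j, x j ∈ Set.Ioi (0 : ℝ) := fun j => Set.mem_univ_pi.mp hx j
      rw [hg]
      exact Finset.prod_congr rfl fun j _ => Set.indicator_of_mem (hxj j) _
    · rw [Set.indicator_of_notMem hx]
      have : ∃ j, x j ∉ Set.Ioi (0 : ℝ) := by
        by_contra hcon
        push_neg at hcon
        exact hx (Set.mem_univ_pi.mpr hcon)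
      obtain ⟨j, hj⟩ := this
      exact Finset.prod_eq_zero (Finset.mem_univ j) (Set.indicator_of_notMem hj _)
  -- integrability of each g n
  have hint : ∀ n, IntegrableOn (g n) S := by
    intro n
    refine (integrable_indicator_iff hS).mp ?_
    rw [← hindic n]
    exact Integrable.fintype_prod fun j =>
      (integrable_indicator_iff measurableSet_Ioi).mpr
        (integrableOn_pow_mul_exp (k j) _ (hm1 n j))
  -- value of each integral
  have hval : ∀ n, ∫ x in S, g n x
      = ∏ j, Real.Gamma (k j) / ((((∑ i ∈ Finset.Iic j, n i) + 1 : ℕ) : ℝ)) ^ (k j) := by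
    intro n
    calc ∫ x in S, g n x = ∫ x, S.indicator (g n) x := (integral_indicator hS).symm
      _ = ∫ x : Fin (r' + 1) → ℝ, ∏ j,
            (Set.Ioi (0 : ℝ)).indicator (fun t => t ^ (k j - 1) *
              Real.exp (-((((∑ i ∈ Finset.Iic j, n i) + 1 : ℕ) : ℝ)) * t)) (x j) := by
          rw [hindic n]
      _ = ∏ j, ∫ t : ℝ, (Set.Ioi (0 : ℝ)).indicator (fun t => t ^ (k j - 1) *
              Real.exp (-((((∑ i ∈ Finset.Iic j, n i) + 1 : ℕ) : ℝ)) * t)) t :=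
          MeasureTheory.integral_fintype_prod_eq_prod _
      _ = ∏ j, ∫ t in Set.Ioi (0 : ℝ), t ^ (k j - 1) *
              Real.exp (-((((∑ i ∈ Finset.Iic j, n i) + 1 : ℕ) : ℝ)) * t) :=
          Finset.prod_congr rfl fun j _ => integral_indicator measurableSet_Ioi
      _ = ∏ j, Real.Gamma (k j) / ((((∑ i ∈ Finset.Iic j, n i) + 1 : ℕ) : ℝ)) ^ (k j) :=
          Finset.prod_congr rfl fun j _ => integral_pow_mul_exp (k j) _ (hk j) (hm1 n j)
  -- nonnegativity on S
  have hgnn : ∀ n, ∀ x ∈ S, 0 ≤ g n x := by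
    intro n x hx
    have hxj : ∀ j, x j ∈ Set.Ioi (0 : ℝ) := fun j => Set.mem_univ_pi.mp hx j
    rw [hg]
    exact Finset.prod_nonneg fun j _ =>
      mul_nonneg (pow_nonneg (le_of_lt (hxj j)) _) (Real.exp_pos _).le
  -- norm integrals
  have hnorm : ∀ n, (∫ x in S, ‖g n x‖)
      = ∏ j, Real.Gamma (k j) / ((((∑ i ∈ Finset.Iic j, n i) + 1 : ℕ) : ℝ)) ^ (k j) := by
    intro n
    rw [setIntegral_congr_fun hS (fun x hx => Real.norm_of_nonneg (hgnn n x hx)), hval n]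
  have hsplit : ∀ n : Fin (r' + 1) → ℕ,
      (∏ j, Real.Gamma (k j) / ((((∑ i ∈ Finset.Iic j, n i) + 1 : ℕ) : ℝ)) ^ (k j))
        = (∏ j, Real.Gamma (k j)) *
          ∏ j, (1 : ℝ) / ((((∑ i ∈ Finset.Iic j, n i) + 1 : ℕ) : ℝ)) ^ (k j) := by
    intro n
    rw [← Finset.prod_mul_distrib]
    exact Finset.prod_congr rfl fun j _ => by rw [div_eq_mul_one_div]
  have hsumnorm : Summable fun n => ∫ x in S, ‖g n x‖ := by
    refine Summable.congr ?_ (fun n => (hnorm n).symm)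
    refine Summable.congr ?_ (fun n => (hsplit n).symm)
    exact hsum0.mul_left _
  have hMZSV : MZSV k = ∑' n : Fin (r' + 1) → ℕ,
      ∏ j, (1 : ℝ) / ((((∑ i ∈ Finset.Iic j, n i) + 1 : ℕ) : ℝ)) ^ (k j) := by
    refine tsum_congr fun n => ?_
    simp only [one_div, Finset.prod_inv_distrib]
  have htsum : (∑' n, ∫ x in S, g n x) = (∏ j, Real.Gamma (k j)) * MZSV k := by
    calc (∑' n, ∫ x in S, g n x)
        = ∑' n : Fin (r' + 1) → ℕ, (∏ j, Real.Gamma (k j)) *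
            ∏ j, (1 : ℝ) / ((((∑ i ∈ Finset.Iic j, n i) + 1 : ℕ) : ℝ)) ^ (k j) :=
          tsum_congr fun n => by rw [hval n, hsplit n]
      _ = (∏ j, Real.Gamma (k j)) * ∑' n : Fin (r' + 1) → ℕ,
            ∏ j, (1 : ℝ) / ((((∑ i ∈ Finset.Iic j, n i) + 1 : ℕ) : ℝ)) ^ (k j) :=
          tsum_mul_left
      _ = (∏ j, Real.Gamma (k j)) * MZSV k := by rw [hMZSV]
  -- pointwise identity on S
  have hpt : ∀ x ∈ S,
      (∏ j, x j ^ (k j - 1)) * (1 / (Real.exp (∑ i, x i) - 1)) *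
        ∏ j ∈ Finset.univ.erase (0 : Fin (r' + 1)),
          Real.exp (∑ i ∈ Finset.Ici j, x i) /
            (Real.exp (∑ i ∈ Finset.Ici j, x i) - 1)
      = ∑' n, g n x := by
    intro x hx
    have hxj : ∀ j, 0 < x j := fun j => Set.mem_univ_pi.mp hx j
    have hSpos : ∀ i : Fin (r' + 1), 0 < ∑ j ∈ Finset.Ici i, x j := fun i =>
      Finset.sum_pos (fun j _ => hxj j) ⟨i, Finset.mem_Ici.mpr le_rfl⟩
    have hq0 : ∀ i : Fin (r' + 1), 0 ≤ Real.exp (-∑ j ∈ Finset.Ici i, x j) :=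
      fun i => (Real.exp_pos _).le
    have hq1 : ∀ i : Fin (r' + 1), Real.exp (-∑ j ∈ Finset.Ici i, x j) < 1 :=
      fun i => Real.exp_lt_one_iff.mpr (neg_neg_iff_pos.mpr (hSpos i))
    obtain ⟨hgeo_sum, hgeo_eq⟩ := tsum_prod_pi (r' + 1)
      (fun i a => Real.exp (-∑ j ∈ Finset.Ici i, x j) ^ a)
      (fun i a => pow_nonneg (hq0 i) a)
      (fun i => summable_geometric_of_lt_one (hq0 i) (hq1 i))
    have hgx : ∀ n : Fin (r' + 1) → ℕ, g n x =
        ((∏ j, x j ^ (k j - 1)) * Real.exp (-∑ j ∈ Finset.Ici (0 : Fin (r' + 1)), x j)) *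
          ∏ i, Real.exp (-∑ j ∈ Finset.Ici i, x j) ^ (n i) := by
      intro n
      simp only [hg]
      rw [Finset.prod_mul_distrib, mul_assoc]
      congr 1
      have h2 : (∑ j, ((((∑ i ∈ Finset.Iic j, n i) + 1 : ℕ) : ℝ)) * x j)
          = (∑ j ∈ Finset.Ici (0 : Fin (r' + 1)), x j) +
            ∑ i, (n i : ℝ) * ∑ j ∈ Finset.Ici i, x j := by
        calc (∑ j, ((((∑ i ∈ Finset.Iic j, n i) + 1 : ℕ) : ℝ)) * x j)
            = ∑ j, ((∑ i ∈ Finset.Iic j, (n i : ℝ) * x j) + x j) := by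
              refine Finset.sum_congr rfl fun j _ => ?_
              push_cast
              rw [add_mul, one_mul, Finset.sum_mul]
          _ = (∑ j, ∑ i ∈ Finset.Iic j, (n i : ℝ) * x j) + ∑ j, x j :=
              Finset.sum_add_distrib
          _ = (∑ i, ∑ j ∈ Finset.Ici i, (n i : ℝ) * x j) + ∑ j, x j := by
              rw [sum_Iic_comm' (fun i j => (n i : ℝ) * x j)]
          _ = (∑ i, (n i : ℝ) * ∑ j ∈ Finset.Ici i, x j) +
                ∑ j ∈ Finset.Ici (0 : Fin (r' + 1)), x j := by
              rw [hIci0]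
              congr 1
              exact Finset.sum_congr rfl fun i _ => (Finset.mul_sum _ _ _).symm
          _ = (∑ j ∈ Finset.Ici (0 : Fin (r' + 1)), x j) +
                ∑ i, (n i : ℝ) * ∑ j ∈ Finset.Ici i, x j := add_comm _ _
      calc (∏ j, Real.exp (-((((∑ i ∈ Finset.Iic j, n i) + 1 : ℕ) : ℝ)) * x j))
          = Real.exp (∑ j, -((((∑ i ∈ Finset.Iic j, n i) + 1 : ℕ) : ℝ)) * x j) :=
            (Real.exp_sum _ _).symm
        _ = Real.exp (-((∑ j ∈ Finset.Ici (0 : Fin (r' + 1)), x j) +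
              ∑ i, (n i : ℝ) * ∑ j ∈ Finset.Ici i, x j)) := by
            rw [← h2, ← Finset.sum_neg_distrib]
            exact congrArg Real.exp (Finset.sum_congr rfl fun j _ => neg_mul _ _)
        _ = Real.exp (-∑ j ∈ Finset.Ici (0 : Fin (r' + 1)), x j) *
              ∏ i, Real.exp (-∑ j ∈ Finset.Ici i, x j) ^ (n i) := by
            rw [neg_add, Real.exp_add]
            congr 1
            rw [← Finset.sum_neg_distrib, Real.exp_sum]
            refine Finset.prod_congr rfl fun i _ => ?_
            rw [← Real.exp_nat_mul, mul_neg, neg_mul_eq_mul_neg]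
    have hfac : ∀ i : Fin (r' + 1),
        (1 - Real.exp (-∑ j ∈ Finset.Ici i, x j))⁻¹
          = Real.exp (∑ j ∈ Finset.Ici i, x j) /
              (Real.exp (∑ j ∈ Finset.Ici i, x j) - 1) := by
      intro i
      have hE : 1 < Real.exp (∑ j ∈ Finset.Ici i, x j) := by
        rw [← Real.exp_zero]
        exact Real.exp_lt_exp.mpr (hSpos i)
      have h0 : Real.exp (∑ j ∈ Finset.Ici i, x j) ≠ 0 := (Real.exp_pos _).ne'
      have h1 : Real.exp (∑ j ∈ Finset.Ici i, x j) - 1 ≠ 0 := sub_ne_zero.mpr hE.ne'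
      rw [Real.exp_neg]
      have : 1 - (Real.exp (∑ j ∈ Finset.Ici i, x j))⁻¹
          = (Real.exp (∑ j ∈ Finset.Ici i, x j) - 1) / Real.exp (∑ j ∈ Finset.Ici i, x j) := by
        field_simp
      rw [this, inv_div]
    calc (∏ j, x j ^ (k j - 1)) * (1 / (Real.exp (∑ i, x i) - 1)) *
          ∏ j ∈ Finset.univ.erase (0 : Fin (r' + 1)),
            Real.exp (∑ i ∈ Finset.Ici j, x i) /
              (Real.exp (∑ i ∈ Finset.Ici j, x i) - 1)
        = ((∏ j, x j ^ (k j - 1)) * Real.exp (-∑ j ∈ Finset.Ici (0 : Fin (r' + 1)), x j)) *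
            ∏ i, (1 - Real.exp (-∑ j ∈ Finset.Ici i, x j))⁻¹ := by
          rw [← Finset.mul_prod_erase Finset.univ
            (fun i : Fin (r' + 1) => (1 - Real.exp (-∑ j ∈ Finset.Ici i, x j))⁻¹)
            (Finset.mem_univ (0 : Fin (r' + 1)))]
          have hx0 : (∑ i, x i) = ∑ j ∈ Finset.Ici (0 : Fin (r' + 1)), x j := by
            rw [hIci0]
          have h00 : Real.exp (-∑ j ∈ Finset.Ici (0 : Fin (r' + 1)), x j) *
              (1 - Real.exp (-∑ j ∈ Finset.Ici (0 : Fin (r' + 1)), x j))⁻¹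
              = 1 / (Real.exp (∑ j ∈ Finset.Ici (0 : Fin (r' + 1)), x j) - 1) := by
            rw [hfac 0, Real.exp_neg]
            have h0 : Real.exp (∑ j ∈ Finset.Ici (0 : Fin (r' + 1)), x j) ≠ 0 :=
              (Real.exp_pos _).ne'
            field_simp
          rw [hx0]
          rw [show ((∏ j, x j ^ (k j - 1)) *
                Real.exp (-∑ j ∈ Finset.Ici (0 : Fin (r' + 1)), x j)) *
              ((1 - Real.exp (-∑ j ∈ Finset.Ici (0 : Fin (r' + 1)), x j))⁻¹ *
                ∏ i ∈ Finset.univ.erase (0 : Fin (r' + 1)),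
                  (1 - Real.exp (-∑ j ∈ Finset.Ici i, x j))⁻¹)
              = ((∏ j, x j ^ (k j - 1)) *
                  (Real.exp (-∑ j ∈ Finset.Ici (0 : Fin (r' + 1)), x j) *
                    (1 - Real.exp (-∑ j ∈ Finset.Ici (0 : Fin (r' + 1)), x j))⁻¹)) *
                ∏ i ∈ Finset.univ.erase (0 : Fin (r' + 1)),
                  (1 - Real.exp (-∑ j ∈ Finset.Ici i, x j))⁻¹ from by ring]
          rw [h00]
          congr 1
          exact Finset.prod_congr rfl fun i _ => (hfac i).symm
      _ = ((∏ j, x j ^ (k j - 1)) * Real.exp (-∑ j ∈ Finset.Ici (0 : Fin (r' + 1)), x j)) *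
            ∏ i, ∑' a : ℕ, Real.exp (-∑ j ∈ Finset.Ici i, x j) ^ a := by
          congr 1
          exact Finset.prod_congr rfl fun i _ =>
            (tsum_geometric_of_lt_one (hq0 i) (hq1 i)).symm
      _ = ∑' n, g n x := by
          rw [← hgeo_eq, ← tsum_mul_left]
          exact (tsum_congr hgx).symm
  -- final assembly
  have hIeq : (∫ x in S, (∏ j, x j ^ (k j - 1)) * (1 / (Real.exp (∑ i, x i) - 1)) *
        ∏ j ∈ Finset.univ.erase (0 : Fin (r' + 1)),
          Real.exp (∑ i ∈ Finset.Ici j, x i) /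
            (Real.exp (∑ i ∈ Finset.Ici j, x i) - 1))
      = (∏ j, Real.Gamma (k j)) * MZSV k := by
    rw [setIntegral_congr_fun hS (fun x hx => hpt x hx)]
    rw [← integral_tsum_of_summable_integral_norm hint hsumnorm]
    exact htsum
  rw [hIeq]
  field_simp
end

section
/- The function ξ(2,1;s) := (1/Γ(s)) ∫_0^∞ t^{s−1} Li_{2,1}(1−e^{−t})/(e^t−1) dt satisfies, for Re s > 1, ξ(2,1;s) = 2ζ(3;s) + s·ζ(2;s+1) + ζ(2)·s·ζ(s+1) − 2ζ(3)ζ(s), where ζ(k;s) = ∑_{0<m<n} 1/(m^k n^s). -/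
open Real MeasureTheory

set_option maxHeartbeats 1000000

/-- The double polylogarithm `Li_{2,1}(z) = ∑_{1 ≤ m < n} z^n/(m² n)`. -/
noncomputable def Li21 (z : ℝ) : ℝ :=
  ∑' p : ℕ × ℕ,
    z ^ (p.1 + p.2 + 2) / (((p.1 : ℝ) + 1) ^ 2 * ((p.1 : ℝ) + (p.2 : ℝ) + 2))

noncomputable def Li2 (x : ℝ) : ℝ := ∑' n : ℕ, x ^ (n+1) / ((n:ℝ)+1)^2
noncomputable def Li3 (x : ℝ) : ℝ := ∑' n : ℕ, x ^ (n+1) / ((n:ℝ)+1)^3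
noncomputable def z2 : ℝ := ∑' n : ℕ, 1 / ((n:ℝ)+1)^2
noncomputable def z3 : ℝ := ∑' n : ℕ, 1 / ((n:ℝ)+1)^3

lemma summable_inv_pow {k : ℕ} (hk : 2 ≤ k) : Summable (fun n : ℕ => 1 / ((n:ℝ)+1)^k) := by
  have h : Summable (fun n : ℕ => 1 / ((n:ℝ))^k) := by
    rw [Real.summable_one_div_nat_pow]; exact hk
  have := (summable_nat_add_iff 1).2 h
  refine this.congr fun n => by push_cast; ring
lemma summable_inv_sq : Summable (fun n : ℕ => 1 / ((n:ℝ)+1)^2) := summable_inv_pow le_rfl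
lemma summable_inv_cube : Summable (fun n : ℕ => 1 / ((n:ℝ)+1)^3) := summable_inv_pow (by norm_num)

lemma Li_bound_aux {k : ℕ} {x : ℝ} (hx : |x| ≤ 1) (n : ℕ) :
    ‖x ^ (n+1) / ((n:ℝ)+1)^k‖ ≤ 1 / ((n:ℝ)+1)^k := by
  have h2 : (0:ℝ) < ((n:ℝ)+1)^k := by positivity
  rw [norm_div, norm_pow, Real.norm_eq_abs, Real.norm_eq_abs, abs_of_nonneg h2.le,
    div_le_div_iff₀ h2 h2, one_mul]
  exact mul_le_of_le_one_left h2.le (pow_le_one₀ (abs_nonneg _) hx)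

lemma summable_Li_aux {k : ℕ} (hk : 2 ≤ k) {x : ℝ} (hx : |x| ≤ 1) :
    Summable (fun n : ℕ => x ^ (n+1) / ((n:ℝ)+1)^k) :=
  Summable.of_norm (summable_inv_pow hk |>.of_nonneg_of_le (fun n => norm_nonneg _)
    (Li_bound_aux hx))

lemma summable_Li2 {x : ℝ} (hx : |x| ≤ 1) : Summable (fun n : ℕ => x ^ (n+1) / ((n:ℝ)+1)^2) :=
  summable_Li_aux le_rfl hx
lemma summable_Li3 {x : ℝ} (hx : |x| ≤ 1) : Summable (fun n : ℕ => x ^ (n+1) / ((n:ℝ)+1)^3) :=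
  summable_Li_aux (by norm_num) hx

lemma continuousOn_Li2 : ContinuousOn Li2 (Set.Icc (-1:ℝ) 1) := by
  rw [continuousOn_iff_continuous_restrict]
  refine continuous_tsum (u := fun n : ℕ => 1 / ((n:ℝ)+1)^2)
    (fun n => (continuous_subtype_val.pow _).div_const _) summable_inv_sq fun n x => ?_
  exact Li_bound_aux (abs_le.2 ⟨x.2.1, x.2.2⟩) n

lemma continuousOn_Li3 : ContinuousOn Li3 (Set.Icc (-1:ℝ) 1) := by
  rw [continuousOn_iff_continuous_restrict]
  refine continuous_tsum (u := fun n : ℕ => 1 / ((n:ℝ)+1)^3)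
    (fun n => (continuous_subtype_val.pow _).div_const _) summable_inv_cube fun n x => ?_
  exact Li_bound_aux (abs_le.2 ⟨x.2.1, x.2.2⟩) n

lemma Li2_one : Li2 1 = z2 := by simp [Li2, z2]
lemma Li3_one : Li3 1 = z3 := by simp [Li3, z3]
lemma Li2_zero : Li2 0 = 0 := by simp [Li2]
lemma Li21_zero : Li21 0 = 0 := by
  unfold Li21
  convert tsum_zero with p
  simp

lemma summable_half_pow : Summable (fun p : ℕ × ℕ => (1/2:ℝ) ^ (p.1 + p.2 + 2)) := by
  have hg : Summable (fun n : ℕ => ‖(1/2:ℝ) ^ (n+1)‖) := by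
    apply Summable.norm
    exact ((summable_geometric_of_lt_one (by norm_num : (0:ℝ) ≤ 1/2) (by norm_num)).mul_left (1/2:ℝ)).congr
      (fun n => by rw [pow_succ]; ring)
  have h := summable_mul_of_summable_norm (f := fun n : ℕ => (1/2:ℝ)^(n+1))
    (g := fun n : ℕ => (1/2:ℝ)^(n+1)) hg hg
  refine h.congr fun p => ?_
  rw [← pow_add]
  congr 1
  omega

lemma continuousOn_Li21 : ContinuousOn Li21 (Set.Icc (-(1/2):ℝ) (1/2)) := by
  rw [continuousOn_iff_continuous_restrict]
  refine continuous_tsum (u := fun p : ℕ × ℕ => (1/2:ℝ) ^ (p.1 + p.2 + 2))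
    (fun p => ((continuous_subtype_val.pow _).div_const _)) summable_half_pow fun p x => ?_
  have hx : |(x:ℝ)| ≤ 1/2 := abs_le.2 ⟨x.2.1, x.2.2⟩
  have h1 : (1:ℝ) ≤ ((p.1:ℝ)+1)^2 * ((p.1:ℝ)+(p.2:ℝ)+2) := by
    nlinarith [Nat.cast_nonneg (α := ℝ) p.1, Nat.cast_nonneg (α := ℝ) p.2]
  have hd : (0:ℝ) < ((p.1:ℝ)+1)^2 * ((p.1:ℝ)+(p.2:ℝ)+2) := by positivity
  rw [norm_div, norm_pow, Real.norm_eq_abs, Real.norm_eq_abs, abs_of_nonneg hd.le]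
  calc |(x:ℝ)| ^ (p.1+p.2+2) / (((p.1:ℝ)+1)^2 * ((p.1:ℝ)+(p.2:ℝ)+2))
      ≤ |(x:ℝ)| ^ (p.1+p.2+2) / 1 :=
        div_le_div_of_nonneg_left (by positivity) one_pos h1
    _ = |(x:ℝ)| ^ (p.1+p.2+2) := div_one _
    _ ≤ (1/2:ℝ) ^ (p.1+p.2+2) := pow_le_pow_left₀ (abs_nonneg _) hx _

section DerivHelp
-- generic: derivative of ∑ y^(n+1)/c n with |y|<1, given |g' terms| ≤ r^n bound
lemma hasDerivAt_series {c : ℕ → ℝ} (hc : ∀ n, 1 ≤ c n) {x : ℝ} (hx : |x| < 1) :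
    HasDerivAt (fun y => ∑' n : ℕ, y ^ (n+1) / c n)
      (∑' n : ℕ, ((n:ℝ)+1) * x ^ n / c n) x := by
  set r : ℝ := (|x| + 1)/2 with hr
  have hr0 : 0 < r := by positivity
  have hr1 : r < 1 := by rw [hr]; linarith
  have hxr : |x| < r := by rw [hr]; linarith
  refine hasDerivAt_tsum_of_isPreconnected
    (u := fun n : ℕ => ((n:ℝ)+1) * r ^ n)
    (g := fun (n : ℕ) (y : ℝ) => y ^ (n+1) / c n)
    (g' := fun (n : ℕ) (y : ℝ) => ((n:ℝ)+1) * y ^ n / c n)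
    ?_
    (Metric.isOpen_ball (x := (0:ℝ)) (ε := r))
    ((convex_ball (0:ℝ) r).isPreconnected)
    (fun n y _ => ?_) (fun n y hy => ?_)
    (y₀ := 0) ?_ ?_ (y := x) ?_
  · -- summable (n+1) r^n
    have h1 := summable_pow_mul_geometric_of_norm_lt_one (R := ℝ) 1 (r := r)
      (by rwa [Real.norm_eq_abs, abs_of_nonneg hr0.le])
    have h1' : Summable fun n : ℕ => (n:ℝ) * r ^ n := h1.congr fun n => by push_cast; ring
    have h2 := summable_geometric_of_lt_one hr0.le hr1
    exact (h1'.add h2).congr fun n => by ring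
  · have h := (hasDerivAt_pow (n+1) y).div_const (c n)
    convert h using 1
    · rfl
    push_cast; ring
  · have hy' : |y| < r := by simpa [Real.dist_eq] using hy
    have hcn := hc n
    rw [norm_div, norm_mul, norm_pow, Real.norm_eq_abs, Real.norm_eq_abs, Real.norm_eq_abs,
      abs_of_nonneg (by positivity : (0:ℝ) ≤ (n:ℝ)+1)]
    have h1 : |c n| = c n := abs_of_nonneg (le_trans zero_le_one hcn)
    rw [h1]
    calc ((n:ℝ)+1) * |y| ^ n / c n ≤ ((n:ℝ)+1) * |y| ^ n / 1 :=
          div_le_div_of_nonneg_left (by positivity) one_pos hcn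
      _ = ((n:ℝ)+1) * |y| ^ n := div_one _
      _ ≤ ((n:ℝ)+1) * r ^ n := by
          apply mul_le_mul_of_nonneg_left (pow_le_pow_left₀ (abs_nonneg _) hy'.le _)
          positivity
  · simpa [Metric.mem_ball, Real.dist_eq] using hr0
  · refine summable_zero.congr fun n => ?_
    simp [zero_pow (Nat.succ_ne_zero n)]
  · simpa [Metric.mem_ball, Real.dist_eq] using hxr
end DerivHelp

lemma summable_geom_prod {r : ℝ} (hr0 : 0 ≤ r) (hr1 : r < 1) :
    Summable (fun p : ℕ × ℕ => r ^ (p.1 + p.2 + 1)) := by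
  have hg : Summable fun n : ℕ => ‖r ^ n‖ :=
    (summable_geometric_of_lt_one hr0 hr1).norm
  have hg' : Summable fun n : ℕ => ‖r * r ^ n‖ := (Summable.mul_left _ (summable_geometric_of_lt_one hr0 hr1)).norm
  have h := summable_mul_of_summable_norm (f := fun n : ℕ => r * r ^ n)
    (g := fun n : ℕ => r ^ n) hg' hg
  refine h.congr fun p => ?_
  show r * r ^ p.1 * r ^ p.2 = _
  rw [← pow_succ', ← pow_add]
  congr 1
  omega

lemma hasDerivAt_Li21 {x : ℝ} (hx : |x| < 1) :
    HasDerivAt Li21 (∑' p : ℕ × ℕ, x ^ (p.1 + p.2 + 1) / ((p.1:ℝ)+1)^2) x := by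
  set r : ℝ := (|x| + 1)/2 with hr
  have hr0 : 0 < r := by positivity
  have hr1 : r < 1 := by rw [hr]; linarith
  have hxr : |x| < r := by rw [hr]; linarith
  refine hasDerivAt_tsum_of_isPreconnected
    (u := fun p : ℕ × ℕ => r ^ (p.1 + p.2 + 1))
    (g := fun (p : ℕ × ℕ) (y : ℝ) =>
      y ^ (p.1 + p.2 + 2) / (((p.1 : ℝ) + 1) ^ 2 * ((p.1 : ℝ) + (p.2 : ℝ) + 2)))
    (g' := fun (p : ℕ × ℕ) (y : ℝ) => y ^ (p.1 + p.2 + 1) / ((p.1:ℝ)+1)^2)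
    (summable_geom_prod hr0.le hr1)
    (Metric.isOpen_ball (x := (0:ℝ)) (ε := r))
    ((convex_ball (0:ℝ) r).isPreconnected)
    (fun p y _ => ?_) (fun p y hy => ?_)
    (y₀ := 0) ?_ ?_ (y := x) ?_
  · have h := (hasDerivAt_pow (p.1 + p.2 + 2) y).div_const
      (((p.1 : ℝ) + 1) ^ 2 * ((p.1 : ℝ) + (p.2 : ℝ) + 2))
    convert h using 1
    · rfl
    have h1 : ((p.1:ℝ) + (p.2:ℝ) + 2) ≠ 0 := by positivity
    have h2 : ((p.1:ℝ) + 1) ≠ 0 := by positivity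
    push_cast
    field_simp
  · have hy' : |y| < r := by simpa [Real.dist_eq] using hy
    have h1 : (1:ℝ) ≤ ((p.1:ℝ)+1)^2 := by nlinarith [Nat.cast_nonneg (α := ℝ) p.1]
    rw [norm_div, norm_pow, Real.norm_eq_abs, Real.norm_eq_abs,
      abs_of_nonneg (by positivity : (0:ℝ) ≤ ((p.1:ℝ)+1)^2)]
    calc |y| ^ (p.1+p.2+1) / ((p.1:ℝ)+1)^2 ≤ |y| ^ (p.1+p.2+1) / 1 :=
          div_le_div_of_nonneg_left (by positivity) one_pos h1
      _ = |y| ^ (p.1+p.2+1) := div_one _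
      _ ≤ r ^ (p.1+p.2+1) := pow_le_pow_left₀ (abs_nonneg _) hy'.le _
  · simpa [Metric.mem_ball, Real.dist_eq] using hr0
  · refine summable_zero.congr fun p => ?_
    simp
  · simpa [Metric.mem_ball, Real.dist_eq] using hxr

section ClosedDeriv

lemma hasDerivAt_Li2_closed {x : ℝ} (hx0 : x ≠ 0) (hx : |x| < 1) :
    HasDerivAt Li2 (-log (1-x)/x) x := by
  have h := hasDerivAt_series (c := fun n : ℕ => ((n:ℝ)+1)^2)
    (fun n => by show (1:ℝ) ≤ ((n:ℝ)+1)^2; nlinarith [Nat.cast_nonneg (α := ℝ) n]) hx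
  have hsum : (∑' n : ℕ, ((n:ℝ)+1) * x ^ n / ((n:ℝ)+1)^2) = -log (1-x)/x := by
    have h1 : (∑' n : ℕ, ((n:ℝ)+1) * x ^ n / ((n:ℝ)+1)^2) = ∑' n : ℕ, x ^ n / ((n:ℝ)+1) := by
      refine tsum_congr fun n => ?_
      have : ((n:ℝ)+1) ≠ 0 := by positivity
      field_simp
    have h2 := (hasSum_pow_div_log_of_abs_lt_one hx).tsum_eq
    have h3 : (∑' n : ℕ, x ^ n / ((n:ℝ)+1)) * x = ∑' n : ℕ, x ^ (n+1) / ((n:ℝ)+1) := by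
      rw [← tsum_mul_right]
      refine tsum_congr fun n => ?_
      rw [div_mul_eq_mul_div, ← pow_succ]
    rw [h1, eq_div_iff hx0, h3, h2]
  rw [← hsum]
  exact h

lemma hasDerivAt_Li3_closed {x : ℝ} (hx0 : x ≠ 0) (hx : |x| < 1) :
    HasDerivAt Li3 (Li2 x / x) x := by
  have h := hasDerivAt_series (c := fun n : ℕ => ((n:ℝ)+1)^3)
    (fun n => by show (1:ℝ) ≤ ((n:ℝ)+1)^3; have h := Nat.cast_nonneg (α := ℝ) n; nlinarith [h, sq_nonneg ((n:ℝ)+1)]) hx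
  have hsum : (∑' n : ℕ, ((n:ℝ)+1) * x ^ n / ((n:ℝ)+1)^3) = Li2 x / x := by
    have h1 : (∑' n : ℕ, ((n:ℝ)+1) * x ^ n / ((n:ℝ)+1)^3) = ∑' n : ℕ, x ^ n / ((n:ℝ)+1)^2 := by
      refine tsum_congr fun n => ?_
      have : ((n:ℝ)+1) ≠ 0 := by positivity
      field_simp
    have h3 : (∑' n : ℕ, x ^ n / ((n:ℝ)+1)^2) * x = Li2 x := by
      rw [← tsum_mul_right]
      refine tsum_congr fun n => ?_
      rw [div_mul_eq_mul_div, ← pow_succ]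
    rw [h1, eq_div_iff hx0, h3]
  rw [← hsum]
  exact h

lemma hasDerivAt_Li21_closed {x : ℝ} (hx : |x| < 1) :
    HasDerivAt Li21 (Li2 x * (1-x)⁻¹) x := by
  have h := hasDerivAt_Li21 hx
  have hA : HasSum (fun n : ℕ => x ^ (n+1) / ((n:ℝ)+1)^2) (Li2 x) := (summable_Li2 hx.le).hasSum
  have hB : HasSum (fun j : ℕ => x ^ j) ((1-x)⁻¹) :=
    hasSum_geometric_of_norm_lt_one (by rwa [Real.norm_eq_abs])
  have hprod : Summable (fun p : ℕ × ℕ => (x ^ (p.1+1) / ((p.1:ℝ)+1)^2) * x ^ p.2) :=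
    (Summable.mul_norm hA.summable.norm hB.summable.norm).of_norm
  have hm := hA.mul hB hprod
  have hfg : (fun p : ℕ × ℕ => x ^ (p.1 + p.2 + 1) / ((p.1:ℝ)+1)^2)
      = fun p : ℕ × ℕ => (x ^ (p.1+1) / ((p.1:ℝ)+1)^2) * x ^ p.2 := by
    funext p
    rw [div_mul_eq_mul_div, ← pow_add]
    congr 2
    omega
  have hsum : (∑' p : ℕ × ℕ, x ^ (p.1 + p.2 + 1) / ((p.1:ℝ)+1)^2) = Li2 x * (1-x)⁻¹ := by
    rw [hfg]
    exact hm.tsum_eq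
  rw [← hsum]
  exact h

end ClosedDeriv

section ConstHelper

lemma eq_on_Ioo_of_deriv_zero {f : ℝ → ℝ} {L : ℝ}
    (hf : ∀ x ∈ Set.Ioo (0:ℝ) 1, HasDerivAt f 0 x)
    (hlim : Filter.Tendsto f (nhdsWithin 1 (Set.Iio 1)) (nhds L)) :
    ∀ x ∈ Set.Ioo (0:ℝ) 1, f x = L := by
  intro x hx
  have key : ∀ y ∈ Set.Ioo x 1, f y = f x := by
    intro y hy
    have hxy : x < y := hy.1
    have hsub : Set.Icc x y ⊆ Set.Ioo 0 1 := fun z hz =>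
      ⟨lt_of_lt_of_le hx.1 hz.1, lt_of_le_of_lt hz.2 hy.2⟩
    have hdiff : DifferentiableOn ℝ f (Set.Icc x y) := fun z hz =>
      ((hf z (hsub hz)).differentiableAt).differentiableWithinAt
    refine constant_of_derivWithin_zero hdiff (fun z hz => ?_) y (Set.right_mem_Icc.2 hxy.le)
    have hz' := hsub (Set.Ico_subset_Icc_self hz)
    rw [(hf z hz').hasDerivWithinAt.derivWithin
      ((uniqueDiffOn_Icc hxy) z (Set.Ico_subset_Icc_self hz))]
  have hmem : Set.Ioo x 1 ∈ nhdsWithin 1 (Set.Iio 1) :=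
    Ioo_mem_nhdsLT_of_mem (Set.right_mem_Ioc.2 hx.2)
  have htend : Filter.Tendsto f (nhdsWithin 1 (Set.Iio 1)) (nhds (f x)) := by
    refine Filter.Tendsto.congr' ?_ tendsto_const_nhds
    filter_upwards [hmem] with y hy using (key y hy).symm
  exact tendsto_nhds_unique htend hlim

end ConstHelper

section Limits

lemma tendsto_Li2_one : Filter.Tendsto Li2 (nhdsWithin 1 (Set.Iio 1)) (nhds z2) := by
  have h := continuousOn_Li2.continuousWithinAt
    (Set.mem_Icc.2 ⟨by norm_num, le_rfl⟩ : (1:ℝ) ∈ Set.Icc (-1:ℝ) 1)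
  rw [ContinuousWithinAt, Li2_one] at h
  rw [← nhdsWithin_Ioo_eq_nhdsLT (by norm_num : (-1:ℝ) < 1)]
  exact h.mono_left (nhdsWithin_mono _ Set.Ioo_subset_Icc_self)

lemma tendsto_Li3_one : Filter.Tendsto Li3 (nhdsWithin 1 (Set.Iio 1)) (nhds z3) := by
  have h := continuousOn_Li3.continuousWithinAt
    (Set.mem_Icc.2 ⟨by norm_num, le_rfl⟩ : (1:ℝ) ∈ Set.Icc (-1:ℝ) 1)
  rw [ContinuousWithinAt, Li3_one] at h
  rw [← nhdsWithin_Ioo_eq_nhdsLT (by norm_num : (-1:ℝ) < 1)]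
  exact h.mono_left (nhdsWithin_mono _ Set.Ioo_subset_Icc_self)

lemma tendsto_Li2_comp : Filter.Tendsto (fun x => Li2 (1-x)) (nhdsWithin 1 (Set.Iio 1)) (nhds 0) := by
  have hc := continuousOn_Li2.continuousWithinAt
    (Set.mem_Icc.2 ⟨by norm_num, by norm_num⟩ : (0:ℝ) ∈ Set.Icc (-1:ℝ) 1)
  rw [ContinuousWithinAt, Li2_zero] at hc
  refine hc.comp ?_
  rw [tendsto_nhdsWithin_iff]
  constructor
  · have : Filter.Tendsto (fun x : ℝ => 1 - x) (nhds 1) (nhds 0) := by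
      have hc2 : Continuous (fun x : ℝ => 1 - x) := continuous_const.sub continuous_id
      have := hc2.tendsto (1:ℝ)
      simpa using this
    exact this.mono_left nhdsWithin_le_nhds
  · filter_upwards [Ioo_mem_nhdsLT_of_mem (Set.right_mem_Ioc.2 one_pos)] with y hy
    exact Set.mem_Icc.2 ⟨by linarith [hy.1, hy.2], by linarith [hy.1]⟩

lemma tendsto_Li21_comp :
    Filter.Tendsto (fun x => Li21 (1-x)) (nhdsWithin 1 (Set.Iio 1)) (nhds 0) := by
  have hc := continuousOn_Li21.continuousWithinAt
    (Set.mem_Icc.2 ⟨by norm_num, by norm_num⟩ : (0:ℝ) ∈ Set.Icc (-(1/2):ℝ) (1/2))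
  rw [ContinuousWithinAt, Li21_zero] at hc
  refine hc.comp ?_
  rw [tendsto_nhdsWithin_iff]
  constructor
  · have : Filter.Tendsto (fun x : ℝ => 1 - x) (nhds 1) (nhds 0) := by
      have hc2 : Continuous (fun x : ℝ => 1 - x) := continuous_const.sub continuous_id
      have := hc2.tendsto (1:ℝ)
      simpa using this
    exact this.mono_left nhdsWithin_le_nhds
  · filter_upwards [Ioo_mem_nhdsLT_of_mem
      (Set.right_mem_Ioc.2 (by norm_num : (1/2:ℝ) < 1))] with y hy
    exact Set.mem_Icc.2 ⟨by linarith [hy.1, hy.2], by linarith [hy.1]⟩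

lemma tendsto_log_one' : Filter.Tendsto Real.log (nhdsWithin 1 (Set.Iio 1)) (nhds 0) := by
  have := (Real.continuousAt_log (one_ne_zero)).tendsto
  rw [Real.log_one] at this
  exact this.mono_left nhdsWithin_le_nhds

lemma tendsto_loglog :
    Filter.Tendsto (fun x => Real.log x * Real.log (1-x)) (nhdsWithin 1 (Set.Iio 1)) (nhds 0) := by
  apply squeeze_zero_norm' (f := fun x => Real.log x * Real.log (1-x)) (a := fun x => 2 * Real.sqrt (1-x) / x)
  · filter_upwards [Ioo_mem_nhdsLT_of_mem (Set.right_mem_Ioc.2 one_pos)] with x hx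
    obtain ⟨hx0, hx1⟩ := hx
    have h1x : (0:ℝ) < 1 - x := by linarith
    have hlogx_neg : Real.log x ≤ 0 := Real.log_nonpos hx0.le hx1.le
    have hlx : |Real.log x| ≤ (1-x)/x := by
      rw [abs_of_nonpos hlogx_neg]
      have := Real.log_le_sub_one_of_pos (inv_pos.2 hx0)
      rw [Real.log_inv] at this
      have hx' : x⁻¹ - 1 = (1-x)/x := by field_simp
      linarith [this, hx'.le]
    have hly : |Real.log (1-x)| ≤ 2 / Real.sqrt (1-x) := by
      have hlog1x : Real.log (1-x) ≤ 0 := Real.log_nonpos h1x.le (by linarith)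
      rw [abs_of_nonpos hlog1x]
      have hsq : Real.log ((1-x)⁻¹) = 2 * Real.log (Real.sqrt ((1-x)⁻¹)) := by
        rw [Real.log_sqrt (inv_pos.2 h1x).le]
        ring
      have hle := Real.log_le_sub_one_of_pos (Real.sqrt_pos.2 (inv_pos.2 h1x))
      have h2 : -Real.log (1-x) = Real.log ((1-x)⁻¹) := (Real.log_inv _).symm
      rw [h2, hsq, Real.sqrt_inv]
      have hs_nonneg : 0 ≤ (Real.sqrt (1-x))⁻¹ := by positivity
      calc 2 * Real.log (Real.sqrt (1-x))⁻¹ ≤ 2 * ((Real.sqrt (1-x))⁻¹ - 1) := by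
            have := Real.log_le_sub_one_of_pos (by positivity : (0:ℝ) < (Real.sqrt (1-x))⁻¹)
            linarith
        _ ≤ 2 * (Real.sqrt (1-x))⁻¹ := by linarith
        _ = 2 / Real.sqrt (1-x) := by rw [div_eq_mul_inv]
    have hsqrt_pos : (0:ℝ) < Real.sqrt (1-x) := Real.sqrt_pos.2 h1x
    rw [norm_mul, Real.norm_eq_abs, Real.norm_eq_abs]
    calc |Real.log x| * |Real.log (1-x)| ≤ ((1-x)/x) * (2 / Real.sqrt (1-x)) := by
          apply mul_le_mul hlx hly (abs_nonneg _)
          positivity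
      _ = 2 * ((1-x) / Real.sqrt (1-x)) / x := by ring
      _ = 2 * Real.sqrt (1-x) / x := by rw [Real.div_sqrt]
  · have h1 : Filter.Tendsto (fun x : ℝ => 2 * Real.sqrt (1-x) / x) (nhds 1) (nhds 0) := by
      have hnum : Filter.Tendsto (fun x : ℝ => 2 * Real.sqrt (1-x)) (nhds 1) (nhds 0) := by
        have hcont : Continuous (fun x : ℝ => 2 * Real.sqrt (1-x)) :=
          continuous_const.mul (Real.continuous_sqrt.comp (continuous_const.sub continuous_id))
        have := hcont.tendsto (1:ℝ)
        simpa using this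
      have hden : Filter.Tendsto (fun x : ℝ => x) (nhds 1) (nhds 1) := Filter.tendsto_id
      have := hnum.div hden one_ne_zero
      rw [zero_div] at this
      exact this
    exact h1.mono_left nhdsWithin_le_nhds

end Limits

section Euler

lemma euler_reflection {x : ℝ} (hx : x ∈ Set.Ioo (0:ℝ) 1) :
    Li2 x + Li2 (1-x) + Real.log x * Real.log (1-x) = z2 := by
  refine eq_on_Ioo_of_deriv_zero (f := fun y => Li2 y + Li2 (1-y) + Real.log y * Real.log (1-y))
    ?_ ?_ x hx
  · intro y hy
    obtain ⟨hy0, hy1⟩ := hy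
    have hy0' : y ≠ 0 := ne_of_gt hy0
    have h1y : (0:ℝ) < 1 - y := by linarith
    have h1y0 : (1:ℝ) - y ≠ 0 := ne_of_gt h1y
    have habs : |y| < 1 := by rw [abs_of_pos hy0]; exact hy1
    have habs' : |1-y| < 1 := by rw [abs_of_pos h1y]; linarith
    have hneg : HasDerivAt (fun z : ℝ => 1 - z) (-1) y := by
      simpa using (hasDerivAt_id y).const_sub 1
    have d1 : HasDerivAt Li2 (-Real.log (1-y)/y) y := hasDerivAt_Li2_closed hy0' habs
    have d2 : HasDerivAt (fun z => Li2 (1-z)) ((-Real.log (1-(1-y))/(1-y)) * (-1)) y :=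
      (hasDerivAt_Li2_closed h1y0 habs').comp y hneg
    have dlog2 : HasDerivAt (fun z : ℝ => Real.log (1-z)) ((1-y)⁻¹ * (-1)) y :=
      (Real.hasDerivAt_log h1y0).comp y hneg
    have d3 : HasDerivAt (fun z => Real.log z * Real.log (1-z))
        (y⁻¹ * Real.log (1-y) + Real.log y * ((1-y)⁻¹ * (-1))) y :=
      (Real.hasDerivAt_log hy0').mul dlog2
    have dsum := (d1.add d2).add d3
    convert dsum using 1
    · rfl
    · rfl
    · rfl
    rw [show (1:ℝ)-(1-y) = y by ring]
    field_simp
    ring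
  · have h := (tendsto_Li2_one.add tendsto_Li2_comp).add tendsto_loglog
    simpa using h

lemma key_identity_s13 {x : ℝ} (hx : x ∈ Set.Ioo (0:ℝ) 1) :
    Li21 (1-x) = -(z2 * Real.log x) - 2*z3 + 2*Li3 x - Real.log x * Li2 x := by
  have main : ∀ y ∈ Set.Ioo (0:ℝ) 1,
      Li21 (1-y) + z2 * Real.log y + 2*z3 - 2*Li3 y + Real.log y * Li2 y = 0 := by
    refine eq_on_Ioo_of_deriv_zero
      (f := fun y => Li21 (1-y) + z2 * Real.log y + 2*z3 - 2*Li3 y + Real.log y * Li2 y) ?_ ?_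
    · intro y hy
      obtain ⟨hy0, hy1⟩ := hy
      have hy0' : y ≠ 0 := ne_of_gt hy0
      have h1y : (0:ℝ) < 1 - y := by linarith
      have h1y0 : (1:ℝ) - y ≠ 0 := ne_of_gt h1y
      have habs : |y| < 1 := by rw [abs_of_pos hy0]; exact hy1
      have habs' : |1-y| < 1 := by rw [abs_of_pos h1y]; linarith
      have hneg : HasDerivAt (fun z : ℝ => 1 - z) (-1) y := by
        simpa using (hasDerivAt_id y).const_sub 1
      have d1 : HasDerivAt (fun z => Li21 (1-z)) ((Li2 (1-y) * (1-(1-y))⁻¹) * (-1)) y :=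
        (hasDerivAt_Li21_closed habs').comp y hneg
      have d2 : HasDerivAt (fun z => z2 * Real.log z) (z2 * y⁻¹) y :=
        (Real.hasDerivAt_log hy0').const_mul z2
      have d3 : HasDerivAt (fun z => Li3 z) (Li2 y / y) y := hasDerivAt_Li3_closed hy0' habs
      have d4 : HasDerivAt (fun z => Real.log z * Li2 z)
          (y⁻¹ * Li2 y + Real.log y * (-Real.log (1-y)/y)) y :=
        (Real.hasDerivAt_log hy0').mul (hasDerivAt_Li2_closed hy0' habs)
      have dsum := ((((d1.add d2).add (hasDerivAt_const y (2*z3))).sub (d3.const_mul 2)).add d4)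
      convert dsum using 1
      · rfl
      · rfl
      · rfl
      rw [show (1:ℝ)-(1-y) = y by ring]
      have heuler := euler_reflection (Set.mem_Ioo.2 ⟨hy0, hy1⟩)
      field_simp
      first
        | linear_combination (y^3) * heuler
        | linear_combination (-(y^3)) * heuler
        | linear_combination (y^2) * heuler
        | linear_combination (-(y^2)) * heuler
        | linear_combination y * heuler
        | linear_combination (-y) * heuler
        | linear_combination heuler
    · have hlog := tendsto_log_one'
      have h1 : Filter.Tendsto (fun y : ℝ => z2 * Real.log y) (nhdsWithin 1 (Set.Iio 1)) (nhds 0) := by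
        have := hlog.const_mul z2
        simpa using this
      have h2 : Filter.Tendsto (fun y : ℝ => Real.log y * Li2 y)
          (nhdsWithin 1 (Set.Iio 1)) (nhds 0) := by
        have := hlog.mul tendsto_Li2_one
        simpa using this
      have h := ((((tendsto_Li21_comp.add h1).add
        (tendsto_const_nhds (x := (2*z3 : ℝ)))).sub (tendsto_Li3_one.const_mul 2)).add h2)
      convert h using 2
      ring
  have := main x hx
  linarith

lemma key_identity_exp {t : ℝ} (ht : 0 < t) :
    Li21 (1 - Real.exp (-t)) =
      z2 * t - 2*z3 + 2*Li3 (Real.exp (-t)) + t * Li2 (Real.exp (-t)) := by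
  have hx : Real.exp (-t) ∈ Set.Ioo (0:ℝ) 1 :=
    ⟨Real.exp_pos _, Real.exp_lt_one_iff.2 (by linarith)⟩
  have h := key_identity_s13 hx
  rw [Real.log_exp] at h
  rw [h]
  ring

end Euler

section Ineq

lemma exp_sub_exp_neg_ge (u : ℝ) (hu : 0 ≤ u) : 2*u ≤ Real.exp u - Real.exp (-u) := by
  have hmono : Monotone (fun v : ℝ => Real.exp v - Real.exp (-v) - 2*v) := by
    apply monotone_of_deriv_nonneg
    · apply Differentiable.sub
      · exact Real.differentiable_exp.sub (Real.differentiable_exp.comp differentiable_neg)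
      · exact (differentiable_const 2).mul differentiable_id
    · intro v
      have hd : HasDerivAt (fun v : ℝ => Real.exp v - Real.exp (-v) - 2*v)
          (Real.exp v - Real.exp (-v) * (-1) - 2) v := by
        have h1 : HasDerivAt (fun v : ℝ => Real.exp (-v)) (Real.exp (-v) * (-1)) v :=
          (Real.hasDerivAt_exp (-v)).comp v (hasDerivAt_neg v)
        have h2 : HasDerivAt (fun v : ℝ => 2*v) 2 v := by
          simpa using (hasDerivAt_id v).const_mul (2:ℝ)
        exact ((Real.hasDerivAt_exp v).sub h1).sub h2
      rw [hd.deriv]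
      have hsq := sq_nonneg (Real.exp (v/2) - Real.exp (-(v/2)))
      have he1 : Real.exp (v/2) * Real.exp (v/2) = Real.exp v := by
        rw [← Real.exp_add]; norm_num
      have he2 : Real.exp (-(v/2)) * Real.exp (-(v/2)) = Real.exp (-v) := by
        rw [← Real.exp_add]; ring_nf
      have he3 : Real.exp (v/2) * Real.exp (-(v/2)) = 1 := by
        rw [← Real.exp_add]; norm_num
      nlinarith [hsq, he1, he2, he3]
  have h := hmono hu
  simp only [Real.exp_zero, neg_zero, mul_zero, sub_zero] at h
  linarith [h]

lemma exp_lower (t : ℝ) (ht : 0 < t) : t * Real.exp (t/2) ≤ Real.exp t - 1 := by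
  have h := exp_sub_exp_neg_ge (t/2) (by linarith)
  have hpos : (0:ℝ) < Real.exp (t/2) := Real.exp_pos _
  have hmul := mul_le_mul_of_nonneg_left h hpos.le
  have he1 : Real.exp (t/2) * Real.exp (t/2) = Real.exp t := by
    rw [← Real.exp_add]; norm_num
  have he2 : Real.exp (t/2) * Real.exp (-(t/2)) = 1 := by
    rw [← Real.exp_add]; norm_num
  nlinarith [hmul, he1, he2]

lemma inv_exp_sub_one_le {t : ℝ} (ht : 0 < t) :
    (Real.exp t - 1)⁻¹ ≤ Real.exp (-(t/2)) / t := by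
  have h1 := exp_lower t ht
  have h2 : (0:ℝ) < t * Real.exp (t/2) := by positivity
  have h3 : (0:ℝ) < Real.exp t - 1 := by
    have := Real.exp_lt_exp.2 ht
    simp only [Real.exp_zero] at this
    linarith [Real.exp_lt_exp.2 ht, Real.exp_zero]
  have h4 : (Real.exp t - 1)⁻¹ ≤ (t * Real.exp (t/2))⁻¹ := by
    apply inv_anti₀ h2 h1
  calc (Real.exp t - 1)⁻¹ ≤ (t * Real.exp (t/2))⁻¹ := h4
    _ = Real.exp (-(t/2)) / t := by
        rw [mul_inv, Real.exp_neg]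
        ring

lemma hasSum_geom_exp {t : ℝ} (ht : 0 < t) :
    HasSum (fun k : ℕ => Real.exp (-((k:ℝ)+1) * t)) ((Real.exp t - 1)⁻¹) := by
  have hr0 : (0:ℝ) ≤ Real.exp (-t) := (Real.exp_pos _).le
  have hr1 : Real.exp (-t) < 1 := Real.exp_lt_one_iff.2 (by linarith)
  have h := (hasSum_geometric_of_lt_one hr0 hr1).mul_left (Real.exp (-t))
  have hne : Real.exp t - 1 > 0 := by
    have h0 : (1:ℝ) = Real.exp 0 := Real.exp_zero.symm
    have := Real.exp_lt_exp.2 ht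
    rw [Real.exp_zero] at this
    linarith
  have hval : Real.exp (-t) * (1 - Real.exp (-t))⁻¹ = (Real.exp t - 1)⁻¹ := by
    rw [Real.exp_neg]
    have hexp : Real.exp t ≠ 0 := (Real.exp_pos t).ne'
    field_simp
  rw [hval] at h
  have hfun : (fun k : ℕ => Real.exp (-((k:ℝ)+1) * t))
      = fun k : ℕ => Real.exp (-t) * Real.exp (-t) ^ k := by
    funext k
    rw [← Real.exp_nat_mul, ← Real.exp_add]
    congr 1
    push_cast
    ring
  rw [hfun]
  exact h

end Ineq

section MellinPieces

lemma summable_inv_rpow {σ : ℝ} (hσ : 1 < σ) :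
    Summable (fun k : ℕ => 1 / ((k:ℝ)+1) ^ σ) := by
  have h : Summable (fun n : ℕ => 1 / ((n:ℝ)) ^ σ) := Real.summable_one_div_nat_rpow.2 hσ
  have := (summable_nat_add_iff 1).2 h
  exact this.congr fun n => by push_cast; ring_nf

lemma mellin_inv_exp_sub_one {s : ℂ} (hs : 1 < s.re) :
    mellin (fun t : ℝ => (((Real.exp t - 1)⁻¹ : ℝ) : ℂ)) s
      = Complex.Gamma s * riemannZeta s := by
  have h := hasSum_mellin (a := fun _ : ℕ => (1:ℂ)) (p := fun k : ℕ => (k:ℝ)+1)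
    (F := fun t : ℝ => (((Real.exp t - 1)⁻¹ : ℝ) : ℂ))
    (fun i => Or.inr (by positivity)) (by linarith : 0 < s.re)
    (fun t ht => ?_) ?_
  · rw [← h.tsum_eq, zeta_eq_tsum_one_div_nat_add_one_cpow hs, ← tsum_mul_left]
    refine tsum_congr fun k => ?_
    push_cast
    rw [mul_one, mul_one_div]
  · have hgs := (hasSum_geom_exp (Set.mem_Ioi.1 ht)).mapL Complex.ofRealCLM
    simpa using hgs
  · simp only [norm_one]
    exact summable_inv_rpow hs

lemma mellin_Li_piece {m : ℕ} (hm : 2 ≤ m) {s : ℂ} (hs : 1 < s.re) :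
    mellin (fun t : ℝ =>
      (((∑' n : ℕ, Real.exp (-t) ^ (n+1) / ((n:ℝ)+1)^m) * (Real.exp t - 1)⁻¹ : ℝ) : ℂ)) s
      = Complex.Gamma s * ∑' p : ℕ × ℕ, 1 / (((p.1:ℂ)+1)^m * ((p.1:ℂ)+(p.2:ℂ)+2)^s) := by
  have h := hasSum_mellin (a := fun p : ℕ × ℕ => ((1 / ((p.1:ℝ)+1)^m : ℝ) : ℂ))
    (p := fun p : ℕ × ℕ => (p.1:ℝ)+(p.2:ℝ)+2)
    (F := fun t : ℝ =>
      (((∑' n : ℕ, Real.exp (-t) ^ (n+1) / ((n:ℝ)+1)^m) * (Real.exp t - 1)⁻¹ : ℝ) : ℂ))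
    (fun p => Or.inr (by positivity)) (by linarith : 0 < s.re)
    (fun t ht => ?_) ?_
  · rw [← h.tsum_eq, ← tsum_mul_left]
    refine tsum_congr fun p => ?_
    rw [mul_div_assoc, mul_one_div]
    congr 1
    push_cast
    rw [div_div, one_div]
  · -- HasSum in ℂ
    rw [Set.mem_Ioi] at ht
    have hx1 : |Real.exp (-t)| ≤ 1 := by
      rw [abs_of_pos (Real.exp_pos _)]
      exact (Real.exp_lt_one_iff.2 (by linarith)).le
    have hA : HasSum (fun n : ℕ => Real.exp (-t) ^ (n+1) / ((n:ℝ)+1)^m)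
        (∑' n : ℕ, Real.exp (-t) ^ (n+1) / ((n:ℝ)+1)^m) :=
      (summable_Li_aux hm hx1).hasSum
    have hB := hasSum_geom_exp ht
    have hprod : Summable (fun p : ℕ × ℕ =>
        (Real.exp (-t) ^ (p.1+1) / ((p.1:ℝ)+1)^m) * Real.exp (-((p.2:ℝ)+1) * t)) :=
      (Summable.mul_norm hA.summable.norm hB.summable.norm).of_norm
    have hm2 := (hA.mul hB hprod).mapL Complex.ofRealCLM
    have hfun : (fun p : ℕ × ℕ => ((1 / ((p.1:ℝ)+1)^m : ℝ) : ℂ)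
          * (Real.exp (-((p.1:ℝ)+(p.2:ℝ)+2) * t) : ℝ))
        = fun p : ℕ × ℕ => Complex.ofRealCLM
          ((Real.exp (-t) ^ (p.1+1) / ((p.1:ℝ)+1)^m) * Real.exp (-((p.2:ℝ)+1) * t)) := by
      funext p
      have hexp : Real.exp (-t) ^ (p.1+1) = Real.exp (-((p.1:ℝ)+1) * t) := by
        rw [← Real.exp_nat_mul]
        congr 1
        push_cast
        ring
      simp only [Complex.ofRealCLM_apply]
      rw [← Complex.ofReal_mul]
      congr 1
      have hsplit : Real.exp (-((p.1:ℝ)+(p.2:ℝ)+2) * t)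
          = Real.exp (-((p.1:ℝ)+1) * t) * Real.exp (-((p.2:ℝ)+1) * t) := by
        rw [← Real.exp_add]; congr 1; ring
      rw [hexp, hsplit]
      ring
    rw [hfun]
    exact hm2
  · -- summability of norms
    have hprodsum : Summable (fun p : ℕ × ℕ =>
        (1 / ((p.1:ℝ)+1)^m) * (1 / ((p.2:ℝ)+1) ^ s.re)) :=
      (Summable.mul_norm (summable_inv_pow hm).norm (summable_inv_rpow hs).norm).of_norm
    refine hprodsum.of_nonneg_of_le (fun p => by positivity) fun p => ?_
    have hnorm : ‖((1 / ((p.1:ℝ)+1)^m : ℝ) : ℂ)‖ = 1 / ((p.1:ℝ)+1)^m := by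
      rw [Complex.norm_real, Real.norm_eq_abs, abs_of_pos (by positivity)]
    rw [hnorm]
    show (1/((p.1:ℝ)+1)^m) / ((p.1:ℝ)+(p.2:ℝ)+2) ^ s.re ≤ _
    have hX : ((p.2:ℝ)+1) ^ s.re ≤ ((p.1:ℝ)+(p.2:ℝ)+2) ^ s.re :=
      Real.rpow_le_rpow (by positivity) (by linarith [Nat.cast_nonneg (α := ℝ) p.1]) (by linarith)
    have hXpos : (0:ℝ) < ((p.2:ℝ)+1) ^ s.re := by positivity
    have h1 : 1 / ((p.1:ℝ)+(p.2:ℝ)+2) ^ s.re ≤ 1 / ((p.2:ℝ)+1) ^ s.re :=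
      one_div_le_one_div_of_le hXpos hX
    calc (1/((p.1:ℝ)+1)^m) / ((p.1:ℝ)+(p.2:ℝ)+2) ^ s.re
        = (1/((p.1:ℝ)+1)^m) * (1 / ((p.1:ℝ)+(p.2:ℝ)+2) ^ s.re) := by
          rw [div_eq_mul_one_div]
      _ ≤ (1/((p.1:ℝ)+1)^m) * (1 / ((p.2:ℝ)+1) ^ s.re) :=
          mul_le_mul_of_nonneg_left h1 (by positivity)
end MellinPieces

section Bounds

lemma z2_nonneg : 0 ≤ z2 := tsum_nonneg fun n => by positivity
lemma z3_nonneg : 0 ≤ z3 := tsum_nonneg fun n => by positivity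

lemma Li2_abs_le {x : ℝ} (hx0 : 0 ≤ x) (hx1 : x ≤ 1) : |Li2 x| ≤ z2 := by
  have habs : |x| ≤ 1 := by rwa [abs_of_nonneg hx0]
  have hnn : 0 ≤ Li2 x := tsum_nonneg fun n => by positivity
  have hle : Li2 x ≤ z2 := by
    apply Summable.tsum_le_tsum _ (summable_Li2 habs) summable_inv_sq
    intro n
    gcongr
    exact pow_le_one₀ hx0 hx1
  exact abs_le.2 ⟨by linarith [z2_nonneg], hle⟩

lemma Li3_abs_le {x : ℝ} (hx0 : 0 ≤ x) (hx1 : x ≤ 1) : |Li3 x| ≤ z3 := by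
  have habs : |x| ≤ 1 := by rwa [abs_of_nonneg hx0]
  have hnn : 0 ≤ Li3 x := tsum_nonneg fun n => by positivity
  have hle : Li3 x ≤ z3 := by
    apply Summable.tsum_le_tsum _ (summable_Li3 habs) summable_inv_cube
    intro n
    gcongr
    exact pow_le_one₀ hx0 hx1
  exact abs_le.2 ⟨by linarith [z3_nonneg], hle⟩

end Bounds

section Integrab

lemma integrable_piece {w : ℂ} (hw : 1 < w.re) {g : ℝ → ℝ} {C : ℝ}
    (hg : ContinuousOn g (Set.Ioi (0:ℝ))) (hgb : ∀ t ∈ Set.Ioi (0:ℝ), |g t| ≤ C) :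
    IntegrableOn (fun t : ℝ => (t:ℂ)^(w-1) * ((g t * (Real.exp t - 1)⁻¹ : ℝ) : ℂ))
      (Set.Ioi 0) := by
  have hC : 0 ≤ C := le_trans (abs_nonneg _) (hgb 1 (by norm_num))
  -- the majorant
  have h0 : IntegrableOn (fun x : ℝ => Real.exp (-x) * x ^ (w.re - 2)) (Set.Ioi 0) := by
    have h := Real.GammaIntegral_convergent (s := w.re - 1) (by linarith)
    refine h.congr_fun (fun x _ => ?_) measurableSet_Ioi
    congr 1
    ring_nf
  have h1 : IntegrableOn
      (fun x : ℝ => Real.exp (-((1/2)*x)) * ((1/2)*x) ^ (w.re - 2)) (Set.Ioi 0) := by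
    have hiff := integrableOn_Ioi_comp_mul_left_iff
      (fun x : ℝ => Real.exp (-x) * x ^ (w.re - 2)) (0:ℝ) (by norm_num : (0:ℝ) < 1/2)
    rw [mul_zero] at hiff
    exact hiff.2 h0
  have h2 : IntegrableOn
      (fun x : ℝ => (1/2:ℝ) ^ (w.re - 2) * (Real.exp (-(x/2)) * x ^ (w.re - 2)))
      (Set.Ioi 0) := by
    refine h1.congr_fun (fun x hx => ?_) measurableSet_Ioi
    rw [Set.mem_Ioi] at hx
    beta_reduce
    rw [Real.mul_rpow (by norm_num) hx.le]
    ring_nf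
  have hM : IntegrableOn
      (fun x : ℝ => C * (Real.exp (-(x/2)) * x ^ (w.re - 2))) (Set.Ioi 0) := by
    have h3 : IntegrableOn
        (fun x : ℝ => (C * ((1/2:ℝ) ^ (w.re - 2))⁻¹) *
          ((1/2:ℝ) ^ (w.re - 2) * (Real.exp (-(x/2)) * x ^ (w.re - 2)))) (Set.Ioi 0) :=
      h2.const_mul (C * ((1/2:ℝ) ^ (w.re - 2))⁻¹)
    refine h3.congr_fun (fun x hx => ?_) measurableSet_Ioi
    have hne : ((1/2:ℝ) ^ (w.re - 2)) ≠ 0 := by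
      apply ne_of_gt
      apply Real.rpow_pos_of_pos
      norm_num
    field_simp
  apply Integrable.mono' hM
  · -- measurability
    apply ContinuousOn.aestronglyMeasurable _ measurableSet_Ioi
    apply ContinuousOn.mul
    · intro t ht
      exact (Complex.continuousAt_ofReal_cpow_const t (w-1)
        (Or.inr (ne_of_gt ht))).continuousWithinAt
    · apply Complex.continuous_ofReal.comp_continuousOn
      apply hg.mul
      apply ContinuousOn.inv₀
      · exact (Real.continuous_exp.sub continuous_const).continuousOn
      · intro t ht
        rw [Set.mem_Ioi] at ht
        have h1t : (1:ℝ) < Real.exp t := by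
          rw [← Real.exp_zero]
          exact Real.exp_lt_exp.2 ht
        intro hzero
        rw [sub_eq_zero] at hzero
        rw [← hzero] at h1t
        norm_num at h1t
  · -- bound
    filter_upwards [self_mem_ae_restrict measurableSet_Ioi] with t ht
    rw [Set.mem_Ioi] at ht
    have hexp1 : (0:ℝ) < Real.exp t - 1 := by
      have : (1:ℝ) < Real.exp t := by
        rw [← Real.exp_zero]; exact Real.exp_lt_exp.2 ht
      linarith
    rw [norm_mul, Complex.norm_cpow_eq_rpow_re_of_pos ht,
      Complex.norm_real, Real.norm_eq_abs, Complex.sub_re, Complex.one_re]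
    rw [abs_mul, abs_of_pos (inv_pos.2 hexp1)]
    have hb1 : |g t| * (Real.exp t - 1)⁻¹ ≤ C * (Real.exp (-(t/2)) / t) := by
      apply mul_le_mul (hgb t ht) (inv_exp_sub_one_le ht) (inv_pos.2 hexp1).le hC
    calc t ^ (w.re - 1) * (|g t| * (Real.exp t - 1)⁻¹)
        ≤ t ^ (w.re - 1) * (C * (Real.exp (-(t/2)) / t)) := by
          apply mul_le_mul_of_nonneg_left hb1
          positivity
      _ = C * (Real.exp (-(t/2)) * t ^ (w.re - 2)) := by
          rw [show w.re - 1 = (w.re - 2) + 1 by ring, Real.rpow_add ht, Real.rpow_one]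
          field_simp
end Integrab

section ZetaVals

lemma z2_eq : ((z2:ℝ):ℂ) = riemannZeta 2 := by
  rw [zeta_eq_tsum_one_div_nat_add_one_cpow (by norm_num : 1 < (2:ℂ).re)]
  rw [show ((z2:ℝ):ℂ) = ∑' n : ℕ, ((1/((n:ℝ)+1)^2 : ℝ):ℂ) from Complex.ofReal_tsum _]
  refine tsum_congr fun n => ?_
  rw [show ((2:ℂ)) = ((2:ℕ):ℂ) by norm_num, Complex.cpow_natCast]
  push_cast
  norm_num

lemma z3_eq : ((z3:ℝ):ℂ) = riemannZeta 3 := by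
  rw [zeta_eq_tsum_one_div_nat_add_one_cpow (by norm_num : 1 < (3:ℂ).re)]
  rw [show ((z3:ℝ):ℂ) = ∑' n : ℕ, ((1/((n:ℝ)+1)^3 : ℝ):ℂ) from Complex.ofReal_tsum _]
  refine tsum_congr fun n => ?_
  rw [show ((3:ℂ)) = ((3:ℕ):ℂ) by norm_num, Complex.cpow_natCast]
  push_cast
  norm_num

end ZetaVals

/-- The double zeta function `ζ(k;s) = ∑_{0 < m < n} 1/(m^k n^s)`. -/
noncomputable def doubleZeta (k : ℕ) (s : ℂ) : ℂ :=
  ∑' p : ℕ × ℕ,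
    1 / (((p.1 : ℂ) + 1) ^ k * ((p.1 : ℂ) + (p.2 : ℂ) + 2) ^ s)

/-- `ξ(2,1;s) = (1/Γ(s)) ∫_0^∞ t^{s-1} Li_{2,1}(1-e^{-t})/(e^t-1) dt`. -/
noncomputable def xi21 (s : ℂ) : ℂ :=
  (1 / Complex.Gamma s) *
    ∫ t in Set.Ioi (0 : ℝ),
      (t : ℂ) ^ (s - 1) *
        ((Li21 (1 - Real.exp (-t)) / (Real.exp t - 1) : ℝ) : ℂ)

theorem stmt13 (s : ℂ) (hs : 1 < s.re) :
    xi21 s =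
      2 * doubleZeta 3 s + s * doubleZeta 2 (s + 1) +
        riemannZeta 2 * s * riemannZeta (s + 1) -
        2 * riemannZeta 3 * riemannZeta s := by
  have hs1 : 1 < (s+1).re := by
    rw [Complex.add_re, Complex.one_re]
    linarith
  have hs0 : s ≠ 0 := by
    intro h
    rw [h, Complex.zero_re] at hs
    linarith
  have hGne : Complex.Gamma s ≠ 0 := by
    apply Complex.Gamma_ne_zero
    intro m h
    have := congrArg Complex.re h
    rw [Complex.neg_re, Complex.natCast_re] at this
    have hm : (0:ℝ) ≤ (m:ℝ) := Nat.cast_nonneg m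
    linarith
  have hGadd : Complex.Gamma (s+1) = s * Complex.Gamma s := Complex.Gamma_add_one s hs0
  -- the four pieces
  have hcont_exp : ContinuousOn (fun t : ℝ => Real.exp (-t)) (Set.Ioi 0) :=
    (Real.continuous_exp.comp continuous_neg).continuousOn
  have hmaps : ∀ t ∈ Set.Ioi (0:ℝ), Real.exp (-t) ∈ Set.Icc (-1:ℝ) 1 := by
    intro t ht
    rw [Set.mem_Ioi] at ht
    constructor
    · linarith [Real.exp_pos (-t)]
    · exact (Real.exp_le_one_iff).2 (by linarith)
  have hiA : IntegrableOn (fun t : ℝ => (t:ℂ)^(s-1) * (((Real.exp t - 1)⁻¹ : ℝ) : ℂ))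
      (Set.Ioi 0) := by
    have h := integrable_piece (w := s) hs (g := fun _ => (1:ℝ)) (C := 1)
      continuousOn_const (fun t _ => by norm_num)
    refine h.congr_fun (fun t _ => by simp only [one_mul]) measurableSet_Ioi
  have hiB : IntegrableOn (fun t : ℝ =>
      (t:ℂ)^(s-1) * ((Li3 (Real.exp (-t)) * (Real.exp t - 1)⁻¹ : ℝ) : ℂ)) (Set.Ioi 0) := by
    apply integrable_piece (w := s) hs (C := z3)
    · exact continuousOn_Li3.comp hcont_exp hmaps
    · intro t ht
      exact Li3_abs_le (Real.exp_pos _).le ((hmaps t ht).2)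
  have hiC : IntegrableOn (fun t : ℝ => (t:ℂ)^((s+1)-1) * (((Real.exp t - 1)⁻¹ : ℝ) : ℂ))
      (Set.Ioi 0) := by
    have h := integrable_piece (w := s+1) hs1 (g := fun _ => (1:ℝ)) (C := 1)
      continuousOn_const (fun t _ => by norm_num)
    refine h.congr_fun (fun t _ => by simp only [one_mul]) measurableSet_Ioi
  have hiD : IntegrableOn (fun t : ℝ =>
      (t:ℂ)^((s+1)-1) * ((Li2 (Real.exp (-t)) * (Real.exp t - 1)⁻¹ : ℝ) : ℂ)) (Set.Ioi 0) := by
    apply integrable_piece (w := s+1) hs1 (C := z2)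
    · exact continuousOn_Li2.comp hcont_exp hmaps
    · intro t ht
      exact Li2_abs_le (Real.exp_pos _).le ((hmaps t ht).2)
  -- pointwise identity
  have hpt : ∀ t ∈ Set.Ioi (0:ℝ),
      (t:ℂ)^(s-1) * ((Li21 (1 - Real.exp (-t)) / (Real.exp t - 1) : ℝ) : ℂ)
      = (-2*(z3:ℂ)) * ((t:ℂ)^(s-1) * (((Real.exp t - 1)⁻¹ : ℝ) : ℂ))
        + ((2:ℂ) * ((t:ℂ)^(s-1) * ((Li3 (Real.exp (-t)) * (Real.exp t - 1)⁻¹ : ℝ) : ℂ))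
        + ((z2:ℂ) * ((t:ℂ)^((s+1)-1) * (((Real.exp t - 1)⁻¹ : ℝ) : ℂ))
        + (t:ℂ)^((s+1)-1) * ((Li2 (Real.exp (-t)) * (Real.exp t - 1)⁻¹ : ℝ) : ℂ))) := by
    intro t ht
    rw [Set.mem_Ioi] at ht
    have ht0 : (t:ℂ) ≠ 0 := Complex.ofReal_ne_zero.2 (ne_of_gt ht)
    have hts : (t:ℂ)^(s+1-1) = (t:ℂ)^(s-1) * t := by
      rw [show s+1-1 = (s-1)+1 by ring, Complex.cpow_add _ _ ht0, Complex.cpow_one]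
    rw [div_eq_mul_inv, key_identity_exp ht, hts]
    push_cast
    ring
  -- split the integral
  have hsplit : (∫ t in Set.Ioi (0:ℝ),
        (t:ℂ)^(s-1) * ((Li21 (1 - Real.exp (-t)) / (Real.exp t - 1) : ℝ) : ℂ))
      = (-2*(z3:ℂ)) * (∫ t in Set.Ioi (0:ℝ), (t:ℂ)^(s-1) * (((Real.exp t - 1)⁻¹ : ℝ) : ℂ))
        + ((2:ℂ) * (∫ t in Set.Ioi (0:ℝ),
            (t:ℂ)^(s-1) * ((Li3 (Real.exp (-t)) * (Real.exp t - 1)⁻¹ : ℝ) : ℂ))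
        + ((z2:ℂ) * (∫ t in Set.Ioi (0:ℝ), (t:ℂ)^((s+1)-1) * (((Real.exp t - 1)⁻¹ : ℝ) : ℂ))
        + ∫ t in Set.Ioi (0:ℝ),
            (t:ℂ)^((s+1)-1) * ((Li2 (Real.exp (-t)) * (Real.exp t - 1)⁻¹ : ℝ) : ℂ))) := by
    have m1 := hiA.const_mul (-2*(z3:ℂ))
    have m2 := hiB.const_mul (2:ℂ)
    have m3 := hiC.const_mul ((z2:ℝ):ℂ)
    have m34 : Integrable (fun x : ℝ =>
        ((z2:ℝ):ℂ) * ((x:ℂ)^((s+1)-1) * (((Real.exp x - 1)⁻¹ : ℝ) : ℂ))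
          + (x:ℂ)^((s+1)-1) * ((Li2 (Real.exp (-x)) * (Real.exp x - 1)⁻¹ : ℝ) : ℂ))
        (volume.restrict (Set.Ioi 0)) := m3.add hiD
    have m234 : Integrable (fun x : ℝ =>
        (2:ℂ) * ((x:ℂ)^(s-1) * ((Li3 (Real.exp (-x)) * (Real.exp x - 1)⁻¹ : ℝ) : ℂ))
          + (((z2:ℝ):ℂ) * ((x:ℂ)^((s+1)-1) * (((Real.exp x - 1)⁻¹ : ℝ) : ℂ))
          + (x:ℂ)^((s+1)-1) * ((Li2 (Real.exp (-x)) * (Real.exp x - 1)⁻¹ : ℝ) : ℂ)))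
        (volume.restrict (Set.Ioi 0)) := m2.add m34
    rw [MeasureTheory.setIntegral_congr_fun measurableSet_Ioi hpt]
    rw [MeasureTheory.integral_add m1 m234]
    rw [MeasureTheory.integral_add m2 m34]
    rw [MeasureTheory.integral_add m3 hiD]
    rw [MeasureTheory.integral_const_mul, MeasureTheory.integral_const_mul,
      MeasureTheory.integral_const_mul]
  -- evaluate the four pieces
  have hmel : ∀ (f : ℝ → ℂ) (w : ℂ),
      mellin f w = ∫ t in Set.Ioi (0:ℝ), (t:ℂ)^(w-1) * f t := fun f w => by
    simp [mellin, smul_eq_mul]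
  have hA : (∫ t in Set.Ioi (0:ℝ), (t:ℂ)^(s-1) * (((Real.exp t - 1)⁻¹ : ℝ) : ℂ))
      = Complex.Gamma s * riemannZeta s := by
    rw [← hmel]; exact mellin_inv_exp_sub_one hs
  have hC : (∫ t in Set.Ioi (0:ℝ), (t:ℂ)^((s+1)-1) * (((Real.exp t - 1)⁻¹ : ℝ) : ℂ))
      = Complex.Gamma (s+1) * riemannZeta (s+1) := by
    rw [← hmel]; exact mellin_inv_exp_sub_one hs1
  have hB : (∫ t in Set.Ioi (0:ℝ),
        (t:ℂ)^(s-1) * ((Li3 (Real.exp (-t)) * (Real.exp t - 1)⁻¹ : ℝ) : ℂ))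
      = Complex.Gamma s * doubleZeta 3 s := by
    rw [← hmel]
    exact mellin_Li_piece (by norm_num) hs
  have hD : (∫ t in Set.Ioi (0:ℝ),
        (t:ℂ)^((s+1)-1) * ((Li2 (Real.exp (-t)) * (Real.exp t - 1)⁻¹ : ℝ) : ℂ))
      = Complex.Gamma (s+1) * doubleZeta 2 (s+1) := by
    rw [← hmel]
    exact mellin_Li_piece (by norm_num) hs1
  -- final algebra
  rw [xi21, hsplit, hA, hB, hC, hD, hGadd, ← z2_eq, ← z3_eq]
  field_simp
  ring
end
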